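/- arXiv:2009.14546 — 7 statements merged into one kernel-verified Lean document; each statement's English description precedes it below -/
import Mathlib

section
/- For every a ∈ ℝ, the infimum of s(p∣1) + s(q∣1) over all p,q ≥ 0 with p − q = a equals 𝒞(a) := ∫₀ᵃ arcsinh(t/2) dt, and the infimum is attained at p = a/2 + √(1 + a²/4) and q = −a/2 + √(1 + a²/4). -/
noncomputable def sOne (p : ℝ) : ℝ := p * Real.log p - p + 1

noncomputable def Ccost (a : ℝ) : ℝ := ∫ t in (0:ℝ)..a, Real.arsinh (t / 2)

/-- Tangent line inequality for the convex function `sOne`. -/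
lemma sOne_tangent {x y : ℝ} (hx : 0 ≤ x) (hy : 0 < y) :
    sOne y + Real.log y * (x - y) ≤ sOne x := by
  rcases eq_or_lt_of_le hx with h | h
  · subst h
    simp only [sOne, Real.log_zero, mul_zero, zero_mul, zero_sub, zero_add]
    nlinarith [Real.log_le_sub_one_of_pos hy, hy]
  · have key : Real.log (y / x) ≤ y / x - 1 := Real.log_le_sub_one_of_pos (by positivity)
    have hlog : Real.log (y / x) = Real.log y - Real.log x := Real.log_div hy.ne' h.ne'
    have : x * (Real.log y - Real.log x) ≤ y - x := by
      have := mul_le_mul_of_nonneg_left key h.le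
      calc x * (Real.log y - Real.log x) = x * Real.log (y/x) := by rw [hlog]
        _ ≤ x * (y / x - 1) := by nlinarith [Real.log_le_sub_one_of_pos (show (0:ℝ) < y/x by positivity), hlog]
        _ = y - x := by field_simp
    simp only [sOne]; nlinarith

lemma Ccost_eq (a : ℝ) :
    Ccost a = a * Real.arsinh (a / 2) - 2 * Real.sqrt (1 + a ^ 2 / 4) + 2 := by
  have key : ∀ t : ℝ, HasDerivAt (fun t : ℝ => t * Real.arsinh (t / 2)
      - 2 * Real.sqrt (1 + t ^ 2 / 4)) (Real.arsinh (t / 2)) t := by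
    intro t
    have hpos : (0:ℝ) < 1 + t ^ 2 / 4 := by positivity
    have h1 : HasDerivAt (fun t : ℝ => Real.arsinh (t / 2))
        ((Real.sqrt (1 + (t/2) ^ 2))⁻¹ * (1/2)) t :=
      (Real.hasDerivAt_arsinh (t/2)).comp (h := fun t : ℝ => t / 2) t ((hasDerivAt_id t).div_const 2)
    have h2 : HasDerivAt (fun t : ℝ => t * Real.arsinh (t / 2))
        (1 * Real.arsinh (t/2) + t * ((Real.sqrt (1 + (t/2) ^ 2))⁻¹ * (1/2))) t :=
      (hasDerivAt_id t).mul h1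
    have h3 : HasDerivAt (fun t : ℝ => Real.sqrt (1 + t ^ 2 / 4))
        (1 / (2 * Real.sqrt (1 + t ^ 2 / 4)) * (2 * t / 4)) t := by
      have hin : HasDerivAt (fun t : ℝ => 1 + t ^ 2 / 4) (2 * t / 4) t := by
        simpa using ((hasDerivAt_pow 2 t).div_const 4).const_add 1
      exact (Real.hasDerivAt_sqrt hpos.ne').comp t hin
    have heq : (t/2) ^ 2 = t^2/4 := by ring
    have := h2.sub (h3.const_mul 2)
    refine this.congr_deriv ?_
    rw [heq]
    have hs : Real.sqrt (1 + t^2/4) ≠ 0 := by positivity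
    field_simp
    ring
  have := intervalIntegral.integral_eq_sub_of_hasDerivAt (a := 0) (b := a)
    (f := fun t : ℝ => t * Real.arsinh (t / 2)- 2 * Real.sqrt (1 + t ^ 2 / 4))
    (f' := fun t => Real.arsinh (t / 2)) (fun t _ => key t)
    ((Real.continuous_arsinh.comp (continuous_id.div_const 2)).intervalIntegrable 0 a)
  rw [Ccost, this]
  simp only [zero_div, Real.arsinh_zero]
  norm_num [Real.sqrt_one]

/-- For every `a ∈ ℝ`, the infimum of `s(p∣1) + s(q∣1)` over `p, q ≥ 0` with `p − q = a`
equals `𝒞(a)`, and it is attained at `p = a/2 + √(1 + a²/4)`, `q = −a/2 + √(1 + a²/4)`. -/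
theorem inf_boltzmann_eq_Ccost (a : ℝ) :
    IsLeast {v : ℝ | ∃ p q : ℝ, 0 ≤ p ∧ 0 ≤ q ∧ p - q = a ∧ v = sOne p + sOne q}
      (Ccost a) ∧
    sOne (a / 2 + Real.sqrt (1 + a ^ 2 / 4)) + sOne (-(a / 2) + Real.sqrt (1 + a ^ 2 / 4))
      = Ccost a := by
  set r := Real.sqrt (1 + a ^ 2 / 4) with hr
  have hr2 : r ^ 2 = 1 + a ^ 2 / 4 := Real.sq_sqrt (by positivity)
  have hra : |a / 2| < r := by
    rw [hr]
    nlinarith [sq_abs (a/2), Real.sqrt_lt_sqrt (by positivity : (0:ℝ) ≤ (a/2)^2)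
      (show (a/2)^2 < 1 + a^2/4 by nlinarith), Real.sqrt_sq_eq_abs (a/2)]
  have hp : 0 < a / 2 + r := by cases abs_lt.1 hra with | intro h1 h2 => linarith
  have hq : 0 < -(a / 2) + r := by cases abs_lt.1 hra with | intro h1 h2 => linarith
  set p := a / 2 + r
  set q := -(a / 2) + r
  have hpq : p * q = 1 := by
    have : p * q = r ^ 2 - (a/2)^2 := by ring
    rw [this, hr2]; ring
  have hlq : Real.log q = - Real.log p := by
    have : Real.log (p * q) = Real.log p + Real.log q := Real.log_mul hp.ne' hq.ne'
    rw [hpq, Real.log_one] at this; linarith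
  have hlp : Real.log p = Real.arsinh (a / 2) := by
    rw [Real.arsinh]
    congr 1
    have : (a/2)^2 = a^2/4 := by ring
    rw [this]
  have hmin : sOne p + sOne q = Ccost a := by
    rw [Ccost_eq]
    simp only [sOne, hlq, hlp]
    have hpa : p = a/2 + r := rfl
    have hqa : q = -(a/2) + r := rfl
    rw [hpa, hqa]; ring
  refine ⟨⟨⟨p, q, hp.le, hq.le, by simp only [p, q]; ring, hmin.symm⟩, ?_⟩, hmin⟩
  rintro v ⟨x, y, hx, hy, hxy, rfl⟩
  have h1 := sOne_tangent hx hp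
  have h2 := sOne_tangent hy hq
  have hpq' : p - q = a := by simp only [p, q]; ring
  rw [← hmin]
  have hz : Real.log p * (x - p) + Real.log q * (y - q) = 0 := by
    rw [hlq]
    have h0 : x - p = y - q := by linarith
    rw [h0]; ring
  linarith
end

section
/- For every a ≥ 0 and b > 0 one has s(a∣b) = b·s(a/b∣1) and consequently s(a∣b) ≥ b·𝒞((a − b)/b). -/
/-- The Boltzmann cost `s(a∣b) = a·log(a/b) − a + b` for `a ≥ 0`, `b > 0`
(with the convention `0·log 0 = 0`, automatic since `Real.log 0 = 0`). -/
noncomputable def sCost (a b : ℝ) : ℝ := a * Real.log (a / b) - a + b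

lemma continuous_arsinh_half : Continuous fun t : ℝ => Real.arsinh (t / 2) :=
  Real.continuous_arsinh.comp (continuous_id.div_const 2)

lemma hasDerivAt_Ccost (y : ℝ) : HasDerivAt Ccost (Real.arsinh (y / 2)) y :=
  intervalIntegral.integral_hasDerivAt_right
    (continuous_arsinh_half.intervalIntegrable _ _)
    continuous_arsinh_half.aestronglyMeasurable.stronglyMeasurableAtFilter
    continuous_arsinh_half.continuousAt

noncomputable def Fgap (x : ℝ) : ℝ := x * Real.log x - x + 1 - Ccost (x - 1)

lemma hasDerivAt_Fgap {x : ℝ} (hx : x ≠ 0) :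
    HasDerivAt Fgap (Real.log x - Real.arsinh ((x - 1) / 2)) x := by
  have h1 := Real.hasDerivAt_mul_log hx
  have h2 : HasDerivAt (fun x : ℝ => Ccost (x - 1)) (Real.arsinh ((x - 1) / 2)) x := by
    have := (hasDerivAt_Ccost (x - 1)).comp x ((hasDerivAt_id x).sub_const 1)
    simpa [Function.comp_def] using this
  have := ((h1.sub (hasDerivAt_id x)).add_const 1).sub h2
  exact this.congr_deriv (by ring)

lemma continuous_Fgap : Continuous Fgap := by
  have h2 : Continuous fun x : ℝ => Ccost (x - 1) := by
    have : Differentiable ℝ Ccost := fun y => (hasDerivAt_Ccost y).differentiableAt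
    exact (this.comp (differentiable_id.sub_const 1)).continuous
  exact ((Real.continuous_mul_log.sub continuous_id).add continuous_const).sub h2

lemma arsinh_le_log {x : ℝ} (hx : 1 ≤ x) : Real.arsinh ((x - 1) / 2) ≤ Real.log x := by
  have hx0 : 0 < x := lt_of_lt_of_le one_pos hx
  rw [← Real.arsinh_sinh (Real.log x), Real.arsinh_le_arsinh, Real.sinh_log hx0]
  have : x⁻¹ ≤ 1 := inv_le_one_of_one_le₀ hx
  nlinarith
lemma log_le_arsinh {x : ℝ} (hx0 : 0 < x) (hx : x ≤ 1) :
    Real.log x ≤ Real.arsinh ((x - 1) / 2) := by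
  rw [← Real.arsinh_sinh (Real.log x), Real.arsinh_le_arsinh, Real.sinh_log hx0]
  have : 1 ≤ x⁻¹ := (one_le_inv₀ hx0).mpr hx
  nlinarith

lemma Fgap_one : Fgap 1 = 0 := by
  simp [Fgap, Ccost, Real.log_one]

lemma Fgap_nonneg {x : ℝ} (hx : 0 ≤ x) : 0 ≤ Fgap x := by
  rcases le_total x 1 with h | h
  · -- antitone on [0,1]
    have hanti : AntitoneOn Fgap (Set.Icc 0 1) := by
      apply antitoneOn_of_deriv_nonpos (convex_Icc 0 1) continuous_Fgap.continuousOn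
      · intro y hy
        rw [interior_Icc] at hy
        exact (hasDerivAt_Fgap (ne_of_gt hy.1)).differentiableAt.differentiableWithinAt
      · intro y hy
        rw [interior_Icc] at hy
        rw [(hasDerivAt_Fgap (ne_of_gt hy.1)).deriv]
        have := log_le_arsinh hy.1 hy.2.le
        linarith
    have := hanti ⟨hx, h⟩ ⟨zero_le_one, le_refl 1⟩ h
    rw [Fgap_one] at this
    exact this
  · have hmono : MonotoneOn Fgap (Set.Ici 1) := by
      apply monotoneOn_of_deriv_nonneg (convex_Ici 1) continuous_Fgap.continuousOn
      · intro y hy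
        rw [interior_Ici] at hy
        exact (hasDerivAt_Fgap (ne_of_gt (lt_trans one_pos hy))).differentiableAt.differentiableWithinAt
      · intro y hy
        rw [interior_Ici] at hy
        rw [(hasDerivAt_Fgap (ne_of_gt (lt_trans one_pos hy))).deriv]
        have := arsinh_le_log hy.le
        linarith
    have := hmono (Set.self_mem_Ici) h h
    rw [Fgap_one] at this
    exact this

/-- For `a ≥ 0` and `b > 0`: `s(a∣b) = b·s(a/b∣1)`, and consequently
`s(a∣b) ≥ b·𝒞((a − b)/b)`. -/
theorem sCost_scaling_and_Ccost_lower_bound (a b : ℝ) (ha : 0 ≤ a) (hb : 0 < b) :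
    sCost a b = b * sCost (a / b) 1 ∧ b * Ccost ((a - b) / b) ≤ sCost a b := by
  have hb' : b ≠ 0 := ne_of_gt hb
  have hscale : sCost a b = b * sCost (a / b) 1 := by
    unfold sCost
    rw [div_one]
    field_simp
  refine ⟨hscale, ?_⟩
  have hdiv : (a - b) / b = a / b - 1 := by
    field_simp
  have hF := Fgap_nonneg (div_nonneg ha hb.le)
  have : Ccost (a / b - 1) ≤ sCost (a / b) 1 := by
    unfold sCost
    rw [div_one]
    unfold Fgap at hF
    linarith
  rw [hscale, hdiv]
  exact mul_le_mul_of_nonneg_left this hb.le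
end

section
/- For all a,b ≥ 0 one has (√a − √b)² = sup { a·p + b·q : p,q ∈ ℝ, p < 1, q < 1, (p − 1)(q − 1) > 1 }; in particular a·p + b·q ≤ (√a − √b)² whenever p < 1, q < 1 and (p − 1)(q − 1) > 1. -/
private lemma fisher_ub (a b p q : ℝ) (ha : 0 ≤ a) (hb : 0 ≤ b)
    (hp : p < 1) (hq : q < 1) (h : 1 < (p - 1) * (q - 1)) :
    a * p + b * q ≤ (Real.sqrt a - Real.sqrt b) ^ 2 := by
  set s := 1 - p with hs'
  set t := 1 - q with ht'
  have hs : 0 < s := by simp only [hs']; linarith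
  have ht : 0 < t := by simp only [ht']; linarith
  have hst : 1 < s * t := by nlinarith
  have key : 2 * (Real.sqrt a * Real.sqrt b) ≤ a * s + b * t := by
    have h1 : Real.sqrt a * Real.sqrt b = Real.sqrt (a * b) := (Real.sqrt_mul ha b).symm
    have h2 : Real.sqrt (a * b) ≤ Real.sqrt ((a * s) * (b * t)) :=
      Real.sqrt_le_sqrt (by nlinarith [mul_nonneg ha hb])
    have h3 : 2 * Real.sqrt ((a * s) * (b * t)) ≤ a * s + b * t := by
      nlinarith [sq_nonneg (Real.sqrt (a * s) - Real.sqrt (b * t)),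
        Real.sq_sqrt (mul_nonneg ha hs.le), Real.sq_sqrt (mul_nonneg hb ht.le),
        Real.sqrt_mul (mul_nonneg ha hs.le) (b * t)]
    linarith
  have ea : Real.sqrt a ^ 2 = a := Real.sq_sqrt ha
  have eb : Real.sqrt b ^ 2 = b := Real.sq_sqrt hb
  have hps : p = 1 - s := by linarith
  have hqt : q = 1 - t := by linarith
  rw [hps, hqt]
  nlinarith [key]

/-- For nonnegative reals `a, b`, the Fisher-information integrand `(√a − √b)²` is the
supremum of `a·p + b·q` over `p < 1`, `q < 1` with `(p − 1)(q − 1) > 1`; in particular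
`a·p + b·q ≤ (√a − √b)²` for all such `p, q`. -/
theorem fisher_integrand_dual (a b : ℝ) (ha : 0 ≤ a) (hb : 0 ≤ b) :
    IsLUB {v : ℝ | ∃ p q : ℝ, p < 1 ∧ q < 1 ∧ 1 < (p - 1) * (q - 1) ∧ v = a * p + b * q}
      ((Real.sqrt a - Real.sqrt b) ^ 2) ∧
    ∀ p q : ℝ, p < 1 → q < 1 → 1 < (p - 1) * (q - 1) →
      a * p + b * q ≤ (Real.sqrt a - Real.sqrt b) ^ 2 := by
  have hub : ∀ v ∈ {v : ℝ | ∃ p q : ℝ, p < 1 ∧ q < 1 ∧ 1 < (p - 1) * (q - 1) ∧ v = a * p + b * q},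
      v ≤ (Real.sqrt a - Real.sqrt b) ^ 2 := by
    rintro v ⟨p, q, hp, hq, h, rfl⟩
    exact fisher_ub a b p q ha hb hp hq h
  refine ⟨⟨hub, ?_⟩, fun p q hp hq h => fisher_ub a b p q ha hb hp hq h⟩
  intro w hw
  refine le_of_forall_pos_le_add ?_
  intro ε hε
  have mem_le : ∀ v, (∃ p q : ℝ, p < 1 ∧ q < 1 ∧ 1 < (p - 1) * (q - 1) ∧ v = a * p + b * q) →
      v ≤ w := fun v hv => hw hv
  rcases eq_or_lt_of_le ha with ha0 | ha0
  · rcases eq_or_lt_of_le hb with hb0 | hb0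
    · -- a = 0, b = 0
      subst ha0; subst hb0
      have h0 : (0 : ℝ) ≤ w :=
        mem_le 0 ⟨-1, -1, by norm_num, by norm_num, by norm_num, by ring⟩
      simp only [Real.sqrt_zero, sub_zero]
      norm_num
      linarith
    · -- a = 0, b > 0
      subst ha0
      have hεb : (0 : ℝ) < ε / b := div_pos hε hb0
      have hmem : (0 : ℝ) * (1 - 2 * b / ε) + b * (1 - ε / b) ≤ w := by
        refine mem_le _ ⟨1 - 2 * b / ε, 1 - ε / b, by nlinarith [div_pos (by linarith : (0:ℝ) < 2*b) hε], by linarith, ?_, rfl⟩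
        have : (1 - 2 * b / ε - 1) * (1 - ε / b - 1) = 2 := by
          field_simp
          ring
        rw [this]; norm_num
      have hv : (0 : ℝ) * (1 - 2 * b / ε) + b * (1 - ε / b) = b - ε := by
        field_simp
        ring
      have : Real.sqrt b ^ 2 = b := Real.sq_sqrt hb
      rw [Real.sqrt_zero]
      nlinarith [hmem, hv]
  · rcases eq_or_lt_of_le hb with hb0 | hb0
    · -- a > 0, b = 0
      subst hb0
      have hεa : (0 : ℝ) < ε / a := div_pos hε ha0
      have hmem : a * (1 - ε / a) + (0 : ℝ) * (1 - 2 * a / ε) ≤ w := by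
        refine mem_le _ ⟨1 - ε / a, 1 - 2 * a / ε, by linarith, by nlinarith [div_pos (by linarith : (0:ℝ) < 2*a) hε], ?_, rfl⟩
        have : (1 - ε / a - 1) * (1 - 2 * a / ε - 1) = 2 := by
          field_simp
          ring
        rw [this]; norm_num
      have hv : a * (1 - ε / a) + (0 : ℝ) * (1 - 2 * a / ε) = a - ε := by
        field_simp
        ring
      have : Real.sqrt a ^ 2 = a := Real.sq_sqrt ha
      rw [Real.sqrt_zero]
      nlinarith [hmem, hv]
    · -- a > 0, b > 0
      have hsa : 0 < Real.sqrt a := Real.sqrt_pos.mpr ha0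
      have hsb : 0 < Real.sqrt b := Real.sqrt_pos.mpr hb0
      set D := Real.sqrt a * Real.sqrt b with hD'
      have hD : 0 < D := mul_pos hsa hsb
      have h2D : (0 : ℝ) < 2 * D + 1 := by linarith
      set c := 1 + ε / (2 * D + 1) with hc'
      have hc : 1 < c := by
        have := div_pos hε h2D
        simp only [hc']; linarith
      set p := 1 - (Real.sqrt b / Real.sqrt a) * c with hp'
      set q := 1 - (Real.sqrt a / Real.sqrt b) * c with hq'
      have hp : p < 1 := by
        have : 0 < (Real.sqrt b / Real.sqrt a) * c :=
          mul_pos (div_pos hsb hsa) (by linarith)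
        simp only [hp']; linarith
      have hq : q < 1 := by
        have : 0 < (Real.sqrt a / Real.sqrt b) * c :=
          mul_pos (div_pos hsa hsb) (by linarith)
        simp only [hq']; linarith
      have hprod : 1 < (p - 1) * (q - 1) := by
        have : (p - 1) * (q - 1) = c ^ 2 := by
          simp only [hp', hq']
          field_simp
          ring
        rw [this]
        nlinarith
      have ha' : Real.sqrt a * Real.sqrt a = a := Real.mul_self_sqrt ha
      have hb' : Real.sqrt b * Real.sqrt b = b := Real.mul_self_sqrt hb
      have e1 : a * (Real.sqrt b / Real.sqrt a) = D := by
        rw [hD']; field_simp; linear_combination -ha'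
      have e2 : b * (Real.sqrt a / Real.sqrt b) = D := by
        rw [hD']; field_simp; linear_combination -hb'
      have ev : a * p + b * q = a + b - 2 * D * c := by
        simp only [hp', hq']
        have : a * (1 - Real.sqrt b / Real.sqrt a * c) + b * (1 - Real.sqrt a / Real.sqrt b * c)
            = a + b - (a * (Real.sqrt b / Real.sqrt a) + b * (Real.sqrt a / Real.sqrt b)) * c := by
          ring
        rw [this, e1, e2]; ring
      have hmem : a * p + b * q ≤ w := mem_le _ ⟨p, q, hp, hq, hprod, rfl⟩
      have hce : (c - 1) * (2 * D + 1) = ε := by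
        simp only [hc']
        field_simp
        ring
      have hkey : 2 * D * (c - 1) ≤ ε := by nlinarith [hD, hc]
      have etarget : (Real.sqrt a - Real.sqrt b) ^ 2 = a + b - 2 * D := by
        rw [hD']; linear_combination ha' + hb'
      rw [etarget]
      rw [ev] at hmem
      linarith [hmem, hkey]
end

section
/- Let T > 0 and let u, v ∈ L¹([0,T]) be nonnegative. Then ∫₀ᵀ (√(u(t)) − √(v(t)))² dt equals the supremum, over all continuous functions p, q : [0,T] → ℝ satisfying p(t) < 1, q(t) < 1 and (p(t) − 1)(q(t) − 1) > 1 for every t ∈ [0,T], of ∫₀ᵀ ( p(t)·u(t) + q(t)·v(t) ) dt. -/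
open MeasureTheory Set Filter Topology

lemma sqrt_mul_sqrt_le (x y : ℝ) : Real.sqrt x * Real.sqrt y ≤ (|x| + |y|)/2 := by
  have hx : Real.sqrt x ≤ Real.sqrt |x| := Real.sqrt_le_sqrt (le_abs_self x)
  have hy : Real.sqrt y ≤ Real.sqrt |y| := Real.sqrt_le_sqrt (le_abs_self y)
  have h1 : Real.sqrt x * Real.sqrt y ≤ Real.sqrt |x| * Real.sqrt |y| :=
    mul_le_mul hx hy (Real.sqrt_nonneg y) (Real.sqrt_nonneg _)
  nlinarith [sq_nonneg (Real.sqrt |x| - Real.sqrt |y|), Real.sq_sqrt (abs_nonneg x),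
    Real.sq_sqrt (abs_nonneg y)]

lemma sqrt_le_one_add_abs (x : ℝ) : Real.sqrt x ≤ 1 + |x| := by
  have h : x ≤ (1 + |x|)^2 := by nlinarith [abs_nonneg x, le_abs_self x, sq_nonneg (|x|)]
  calc Real.sqrt x ≤ Real.sqrt ((1+|x|)^2) := Real.sqrt_le_sqrt h
  _ = 1 + |x| := Real.sqrt_sq (by positivity)

lemma sq_sqrt_le_abs (x : ℝ) : (Real.sqrt x)^2 ≤ |x| := by
  rcases le_total 0 x with h | h
  · rw [Real.sq_sqrt h]; exact le_abs_self x
  · rw [Real.sqrt_eq_zero_of_nonpos h]; simp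

lemma sqrt_sub_sq_le (x y : ℝ) : (Real.sqrt x - Real.sqrt y)^2 ≤ 2*|x| + 2*|y| := by
  nlinarith [sq_sqrt_le_abs x, sq_sqrt_le_abs y, sq_nonneg (Real.sqrt x + Real.sqrt y)]

lemma amgm_pq {a b p q : ℝ} (ha : 0 ≤ a) (hb : 0 ≤ b) (hp : p < 1) (hq : q < 1)
    (hpq : 1 < (p - 1)*(q - 1)) : p*a + q*b ≤ (Real.sqrt a - Real.sqrt b)^2 := by
  set r := 1 - p with hr
  set s := 1 - q with hs
  have hr0 : 0 < r := by linarith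
  have hs0 : 0 < s := by linarith
  have hrs : 1 ≤ r * s := by nlinarith
  have h1 : Real.sqrt a * Real.sqrt b ≤ Real.sqrt (r*a) * Real.sqrt (s*b) := by
    rw [← Real.sqrt_mul ha b, ← Real.sqrt_mul (by positivity : (0:ℝ) ≤ r*a)]
    exact Real.sqrt_le_sqrt (by nlinarith [mul_nonneg ha hb])
  have h2 : 2*(Real.sqrt (r*a) * Real.sqrt (s*b)) ≤ r*a + s*b := by
    nlinarith [sq_nonneg (Real.sqrt (r*a) - Real.sqrt (s*b)),
      Real.sq_sqrt (by positivity : (0:ℝ) ≤ r*a), Real.sq_sqrt (by positivity : (0:ℝ) ≤ s*b)]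
  have h3 : (Real.sqrt a - Real.sqrt b)^2 = a + b - 2*(Real.sqrt a * Real.sqrt b) := by
    have := Real.sq_sqrt ha; have := Real.sq_sqrt hb; ring_nf; nlinarith []
  nlinarith

lemma integrable_sqrt_diff_sq {T : ℝ} {u v : ℝ → ℝ}
    (hu : IntegrableOn u (Icc 0 T)) (hv : IntegrableOn v (Icc 0 T)) :
    IntegrableOn (fun t => (Real.sqrt (u t) - Real.sqrt (v t))^2) (Icc 0 T) := by
  have hm : AEStronglyMeasurable (fun t => (Real.sqrt (u t) - Real.sqrt (v t))^2)
      (volume.restrict (Icc 0 T)) := by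
    have h1 : AEMeasurable u (volume.restrict (Icc 0 T)) := hu.aemeasurable
    have h2 : AEMeasurable v (volume.restrict (Icc 0 T)) := hv.aemeasurable
    exact (((Real.continuous_sqrt.measurable.comp_aemeasurable h1).sub
      (Real.continuous_sqrt.measurable.comp_aemeasurable h2)).pow_const 2).aestronglyMeasurable
  refine Integrable.mono' ((hu.abs.const_mul 2).add (hv.abs.const_mul 2)) hm ?_
  filter_upwards with t
  rw [Real.norm_eq_abs, abs_of_nonneg (sq_nonneg _)]
  exact sqrt_sub_sq_le _ _

lemma part1 {T : ℝ} {u v p q : ℝ → ℝ}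
    (hu : IntegrableOn u (Icc 0 T)) (hv : IntegrableOn v (Icc 0 T))
    (hu0 : ∀ t ∈ Icc (0:ℝ) T, 0 ≤ u t) (hv0 : ∀ t ∈ Icc (0:ℝ) T, 0 ≤ v t)
    (hp : ContinuousOn p (Icc 0 T)) (hq : ContinuousOn q (Icc 0 T))
    (hcond : ∀ t ∈ Icc (0:ℝ) T, p t < 1 ∧ q t < 1 ∧ 1 < (p t - 1) * (q t - 1)) :
    ∫ t in Icc (0:ℝ) T, (p t * u t + q t * v t) ≤
      ∫ t in Icc (0:ℝ) T, (Real.sqrt (u t) - Real.sqrt (v t)) ^ 2 := by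
  obtain ⟨Cp, hCp⟩ := isCompact_Icc.exists_bound_of_continuousOn hp
  obtain ⟨Cq, hCq⟩ := isCompact_Icc.exists_bound_of_continuousOn hq
  have hpu : IntegrableOn (fun t => p t * u t) (Icc 0 T) := by
    refine Integrable.mono' (hu.abs.const_mul Cp)
      ((hp.aestronglyMeasurable measurableSet_Icc).mul hu.aestronglyMeasurable) ?_
    filter_upwards [ae_restrict_mem measurableSet_Icc] with t ht
    rw [Real.norm_eq_abs, abs_mul]
    exact mul_le_mul_of_nonneg_right (hCp t ht) (abs_nonneg _)
  have hqv : IntegrableOn (fun t => q t * v t) (Icc 0 T) := by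
    refine Integrable.mono' (hv.abs.const_mul Cq)
      ((hq.aestronglyMeasurable measurableSet_Icc).mul hv.aestronglyMeasurable) ?_
    filter_upwards [ae_restrict_mem measurableSet_Icc] with t ht
    rw [Real.norm_eq_abs, abs_mul]
    exact mul_le_mul_of_nonneg_right (hCq t ht) (abs_nonneg _)
  refine setIntegral_mono_on (hpu.add hqv) (integrable_sqrt_diff_sq hu hv) measurableSet_Icc ?_
  intro t ht
  obtain ⟨h1, h2, h3⟩ := hcond t ht
  exact amgm_pq (hu0 t ht) (hv0 t ht) h1 h2 h3

lemma lip_min_sq (a b M : ℝ) : (min a M - min b M)^2 ≤ (a-b)^2 := by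
  rcases le_total a M with h1 | h1 <;> rcases le_total b M with h2 | h2 <;>
    simp [min_eq_left, min_eq_right, h1, h2] <;> nlinarith

set_option maxHeartbeats 1000000 in
lemma three_sq_bound (X Y Z : ℝ) : (X+Y+Z)^2 ≤ 3*X^2+3*Y^2+3*Z^2 := by
  nlinarith [sq_nonneg (X-Y), sq_nonneg (Y-Z), sq_nonneg (X-Z)]

lemma two_sq_bound (X Z : ℝ) : 3*(X+Z)^2 ≤ 6*X^2+6*Z^2 := by nlinarith [sq_nonneg (X-Z)]

/-- The key pointwise estimate for the approximate optimizer. -/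
lemma key_ptwise {a b M η δ : ℝ} (ha : 0 ≤ a) (hb : 0 ≤ b) (hη0 : 0 < η) (hη : η ≤ 1/2)
    (hδ0 : 0 < δ) (hM : 2*δ ≤ M) :
    (min b M + η * min a M + δ)/(min a M + η * min b M + δ) * a^2
      + b^2 / ((min b M + η * min a M + δ)/(min a M + η * min b M + δ))
    ≤ 2*(a*b) + 24*η*(a-b)^2 + 12*δ*(a+b) + 6*((a - min a M)^2 + (b - min b M)^2) := by
  have hM0 : 0 < M := by linarith
  set A := min a M with hA
  set B := min b M with hB
  have hA0 : 0 ≤ A := le_min ha hM0.le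
  have hB0 : 0 ≤ B := le_min hb hM0.le
  have hAa : A ≤ a := min_le_left _ _
  have hBb : B ≤ b := min_le_left _ _
  have hAM : A ≤ M := min_le_right _ _
  have hBM : B ≤ M := min_le_right _ _
  set N := B + η * A + δ with hN
  set Dn := A + η * B + δ with hDn
  have hN0 : 0 < N := by rw [hN]; positivity
  have hD0 : 0 < Dn := by rw [hDn]; positivity
  clear_value A B
  clear_value N Dn
  have hND : 0 < N * Dn := mul_pos hN0 hD0
  -- bound 1 : 3 * (N*(a-A))^2 ≤ 6*(a-A)^2*(N*Dn)
  have bd1 : 3 * (N*(a-A))^2 ≤ 6*(a-A)^2*(N*Dn) := by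
    rcases le_or_gt a M with h | h
    · have : A = a := by rw [hA]; exact min_eq_left h
      rw [this]; simp
    · have hAe : A = M := by rw [hA]; exact min_eq_right h.le
      have hN2 : N ≤ 2 * Dn := by
        have h5 : (1-2*η)*B ≤ (1-2*η)*M := mul_le_mul_of_nonneg_left hBM (by linarith)
        rw [hN, hDn, hAe]; nlinarith [h5]
      have h0 : 0 ≤ N * (a-A)^2 * (2*Dn - N) :=
        mul_nonneg (mul_nonneg hN0.le (sq_nonneg _)) (by linarith)
      have hr : 6*(a-A)^2*(N*Dn) - 3*(N*(a-A))^2 = 3*(N * (a-A)^2 * (2*Dn - N)) := by ring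
      linarith
  -- bound 3 : 3 * (Dn*(B-b))^2 ≤ 6*(b-B)^2*(N*Dn)
  have bd3 : 3 * (Dn*(B-b))^2 ≤ 6*(b-B)^2*(N*Dn) := by
    rcases le_or_gt b M with h | h
    · have : B = b := by rw [hB]; exact min_eq_left h
      rw [this]; simp
    · have hBe : B = M := by rw [hB]; exact min_eq_right h.le
      have hD2 : Dn ≤ 2 * N := by
        have h5 : (1-2*η)*A ≤ (1-2*η)*M := mul_le_mul_of_nonneg_left hAM (by linarith)
        rw [hN, hDn, hBe]; nlinarith [h5]
      have h0 : 0 ≤ Dn * (b-B)^2 * (2*N - Dn) :=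
        mul_nonneg (mul_nonneg hD0.le (sq_nonneg _)) (by linarith)
      have hr : 6*(b-B)^2*(N*Dn) - 3*(Dn*(B-b))^2 = 3*(Dn * (b-B)^2 * (2*N - Dn)) := by ring
      linarith
  -- bound 2 : 3 * (η*(A^2-B^2)+δ*(A-B))^2 ≤ (24*η*(a-b)^2 + 12*δ*(a+b))*(N*Dn)
  have bd2 : 3 * (η*(A^2-B^2)+δ*(A-B))^2 ≤ (24*η*(a-b)^2 + 12*δ*(a+b))*(N*Dn) := by
    have hlip : (A-B)^2 ≤ (a-b)^2 := by rw [hA, hB]; exact lip_min_sq a b M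
    have hqA : η*A ≤ N := by rw [hN]; linarith
    have hqB : η*B ≤ Dn := by rw [hDn]; linarith
    have hAD : A ≤ Dn := by rw [hDn]; linarith [mul_nonneg hη0.le hB0]
    have hBN : B ≤ N := by rw [hN]; linarith [mul_nonneg hη0.le hA0]
    have hdN : δ ≤ N := by rw [hN]; linarith [mul_nonneg hη0.le hA0]
    have hdD : δ ≤ Dn := by rw [hDn]; linarith [mul_nonneg hη0.le hB0]
    have pa : η*A^2 ≤ N*Dn := by
      calc η*A^2 = (η*A)*A := by ring
        _ ≤ N*Dn := mul_le_mul hqA hAD hA0 hN0.le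
    have pb : η*B^2 ≤ N*Dn := by
      calc η*B^2 = B*(η*B) := by ring
        _ ≤ N*Dn := mul_le_mul hBN hqB (by positivity) hN0.le
    have qa : δ*A ≤ N*Dn := by
      calc δ*A = δ*A := rfl
        _ ≤ N*Dn := mul_le_mul hdN hAD hA0 hN0.le
    have qb : δ*B ≤ N*Dn := by
      calc δ*B = B*δ := by ring
        _ ≤ N*Dn := mul_le_mul hBN hdD hδ0.le hN0.le
    have hNDa : η * (A^2 + B^2) ≤ 2*(N*Dn) := by linarith
    have hNDb : δ * (A + B) ≤ 2*(N*Dn) := by linarith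
    have e1 : 6 * (η*(A^2-B^2))^2 ≤ 24*η*(a-b)^2*(N*Dn) := by
      have hAB2 : (A+B)^2 ≤ 2*(A^2+B^2) := by linarith [sq_nonneg (A-B)]
      have h1 : (A^2-B^2)^2 ≤ (a-b)^2 * (2*(A^2+B^2)) := by
        calc (A^2-B^2)^2 = (A-B)^2*(A+B)^2 := by ring
          _ ≤ (a-b)^2*(A+B)^2 := mul_le_mul_of_nonneg_right hlip (sq_nonneg _)
          _ ≤ (a-b)^2*(2*(A^2+B^2)) := mul_le_mul_of_nonneg_left hAB2 (sq_nonneg _)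
      calc 6 * (η*(A^2-B^2))^2 = 6*η^2*(A^2-B^2)^2 := by ring
        _ ≤ 6*η^2*((a-b)^2 * (2*(A^2+B^2))) := by
            apply mul_le_mul_of_nonneg_left h1 (by positivity)
        _ = 12*η*(a-b)^2 * (η*(A^2+B^2)) := by ring
        _ ≤ 12*η*(a-b)^2 * (2*(N*Dn)) := by
            apply mul_le_mul_of_nonneg_left hNDa (by positivity)
        _ = 24*η*(a-b)^2*(N*Dn) := by ring
    have e2 : 6 * (δ*(A-B))^2 ≤ 12*δ*(a+b)*(N*Dn) := by
      have h1 : (δ*(A-B))^2 ≤ (δ*(A+B))^2 := by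
        have h4 : 0 ≤ δ^2*(4*(A*B)) := by positivity
        have h6 : (δ*(A+B))^2 - (δ*(A-B))^2 = δ^2*(4*(A*B)) := by ring
        linarith
      have h2 : (δ*(A+B))^2 ≤ (2*(N*Dn)) * (δ*(A+B)) := by
        rw [sq]; exact mul_le_mul_of_nonneg_right hNDb (by positivity)
      have h3 : (2*(N*Dn)) * (δ*(A+B)) ≤ (2*(N*Dn)) * (δ*(a+b)) := by
        exact mul_le_mul_of_nonneg_left (mul_le_mul_of_nonneg_left (by linarith) hδ0.le) (by positivity)
      linarith
    have hY := two_sq_bound (η*(A^2-B^2)) (δ*(A-B))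
    linarith
  -- combine
  have hsum : (N*a - Dn*b)^2 ≤ (24*η*(a-b)^2 + 12*δ*(a+b) + 6*((a-A)^2+(b-B)^2)) * (N*Dn) := by
    have hid : N*a - Dn*b = N*(a-A) + (η*(A^2-B^2)+δ*(A-B)) + Dn*(B-b) := by
      rw [hN, hDn]; ring
    have h3 : (N*(a-A) + (η*(A^2-B^2)+δ*(A-B)) + Dn*(B-b))^2 ≤
        3*(N*(a-A))^2 + 3*(η*(A^2-B^2)+δ*(A-B))^2 + 3*(Dn*(B-b))^2 := three_sq_bound _ _ _
    rw [hid]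
    linarith [bd1, bd2, bd3, h3]
  have hkey : N/Dn * a^2 + b^2/(N/Dn) - 2*(a*b) = (N*a - Dn*b)^2/(N*Dn) := by
    field_simp
    ring
  have hdiv : (N*a - Dn*b)^2/(N*Dn) ≤ 24*η*(a-b)^2 + 12*δ*(a+b) + 6*((a-A)^2+(b-B)^2) := by
    rw [div_le_iff₀ hND]
    linarith
  linarith

lemma clamp_dist {x y lo hi : ℝ} (h1 : lo ≤ y) (h2 : y ≤ hi) :
    |max (min x hi) lo - y| ≤ |x - y| := by
  rcases le_total x lo with h | h
  · rw [min_eq_left (le_trans h (le_trans h1 h2)), max_eq_right h]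
    rw [abs_of_nonpos (by linarith), abs_of_nonpos (by linarith)]; linarith
  · rcases le_total x hi with h' | h'
    · rw [min_eq_left h', max_eq_left h]
    · rw [min_eq_right h', max_eq_left (le_trans h1 h2)]
      rw [abs_of_nonneg (by linarith), abs_of_nonneg (by linarith)]; linarith

lemma trunc_sq_le {x M : ℝ} (hx : 0 ≤ x) (hM : 0 ≤ M) : (x - min x M)^2 ≤ x^2 := by
  rcases le_total x M with h | h
  · rw [min_eq_left h]; simpa using sq_nonneg x
  · rw [min_eq_right h]; nlinarith

lemma perturb_ptwise {lam lam' U V Λ : ℝ} (hΛ : 0 < Λ)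
    (h1 : 1/Λ ≤ lam) (h2 : lam ≤ Λ) (h3 : 1/Λ ≤ lam') (h4 : lam' ≤ Λ) :
    lam'*U + V/lam' ≤ lam*U + V/lam + |lam' - lam| *(|U| + Λ^2*|V|) := by
  have hΛ' : 0 < 1/Λ := by positivity
  have hlam : 0 < lam := lt_of_lt_of_le hΛ' h1
  have hlam' : 0 < lam' := lt_of_lt_of_le hΛ' h3
  have t1 : lam'*U - lam*U ≤ |lam' - lam| *|U| := by
    calc lam'*U - lam*U = (lam' - lam)*U := by ring
      _ ≤ |(lam' - lam)*U| := le_abs_self _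
      _ = |lam' - lam| *|U| := abs_mul _ _
  have hll : 1/Λ^2 ≤ lam*lam' := by
    calc 1/Λ^2 = (1/Λ)*(1/Λ) := by ring
      _ ≤ lam*lam' := mul_le_mul h1 h3 hΛ'.le hlam.le
  have hinv : 1/(lam*lam') ≤ Λ^2 := by
    have := one_div_le_one_div_of_le (by positivity : (0:ℝ) < 1/Λ^2) hll
    rwa [one_div_one_div] at this
  have t2 : V/lam' - V/lam ≤ |lam' - lam| *(Λ^2*|V|) := by
    have he : V/lam' - V/lam = (V*(lam - lam'))*(1/(lam*lam')) := by
      field_simp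
    calc V/lam' - V/lam = (V*(lam - lam'))*(1/(lam*lam')) := he
      _ ≤ |V*(lam - lam')| *(1/(lam*lam')) :=
          mul_le_mul_of_nonneg_right (le_abs_self _) (by positivity)
      _ ≤ |V*(lam - lam')| *Λ^2 := mul_le_mul_of_nonneg_left hinv (abs_nonneg _)
      _ = |lam' - lam| *(Λ^2*|V|) := by rw [abs_mul, abs_sub_comm lam lam']; ring
  have hd : |lam' - lam| *(|U| + Λ^2*|V|) = |lam' - lam| *|U| + |lam' - lam| *(Λ^2*|V|) := by ring
  linarith

lemma wF_ptwise {w F R C : ℝ} (hw0 : 0 ≤ w) (hwC : w ≤ C) (hF0 : 0 ≤ F) :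
    w * F ≤ R * w + C * (F - min F R) := by
  rcases le_total F R with h | h
  · rw [min_eq_left h]
    have : w * F ≤ w * R := mul_le_mul_of_nonneg_left h hw0
    nlinarith
  · rw [min_eq_right h]
    have : w * (F - R) ≤ C * (F - R) := mul_le_mul_of_nonneg_right hwC (by linarith)
    nlinarith

lemma integrable_sqrt_mul {T : ℝ} {u v : ℝ → ℝ}
    (hu : IntegrableOn u (Icc 0 T)) (hv : IntegrableOn v (Icc 0 T)) :
    IntegrableOn (fun t => Real.sqrt (u t) * Real.sqrt (v t)) (Icc 0 T) := by
  have hm : AEStronglyMeasurable (fun t => Real.sqrt (u t) * Real.sqrt (v t))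
      (volume.restrict (Icc 0 T)) :=
    ((Real.continuous_sqrt.measurable.comp_aemeasurable hu.aemeasurable).mul
      (Real.continuous_sqrt.measurable.comp_aemeasurable hv.aemeasurable)).aestronglyMeasurable
  refine Integrable.mono' ((hu.abs.add hv.abs).div_const 2) hm ?_
  filter_upwards with t
  rw [Real.norm_eq_abs, abs_of_nonneg (mul_nonneg (Real.sqrt_nonneg _) (Real.sqrt_nonneg _))]
  exact sqrt_mul_sqrt_le _ _

set_option maxHeartbeats 1000000 in
lemma part2 {T : ℝ} (hT : 0 < T) {u v : ℝ → ℝ}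
    (hu : IntegrableOn u (Icc 0 T)) (hv : IntegrableOn v (Icc 0 T))
    (hu0 : ∀ t ∈ Icc (0:ℝ) T, 0 ≤ u t) (hv0 : ∀ t ∈ Icc (0:ℝ) T, 0 ≤ v t)
    {ε : ℝ} (hε : 0 < ε) :
    ∃ lam : ℝ → ℝ, Continuous lam ∧ (∀ t, 0 < lam t) ∧
      IntegrableOn (fun t => lam t * u t + v t / lam t) (Icc 0 T) ∧
      ∫ t in Icc (0:ℝ) T, (lam t * u t + v t / lam t) ≤
        (∫ t in Icc (0:ℝ) T, (Real.sqrt (u t) * Real.sqrt (v t))) * 2 + ε := by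
  set μ := volume.restrict (Icc (0:ℝ) T) with hμdef
  haveI hfin : IsFiniteMeasure μ := by
    constructor
    rw [hμdef, Measure.restrict_apply_univ, Real.volume_Icc]
    exact ENNReal.ofReal_lt_top
  -- measurable representatives
  set u₁ := hu.aestronglyMeasurable.mk u with hu₁def
  set v₁ := hv.aestronglyMeasurable.mk v with hv₁def
  have hu₁m : Measurable u₁ := hu.aestronglyMeasurable.stronglyMeasurable_mk.measurable
  have hv₁m : Measurable v₁ := hv.aestronglyMeasurable.stronglyMeasurable_mk.measurable
  have hae : ∀ᵐ t ∂μ, u t = u₁ t ∧ v t = v₁ t ∧ 0 ≤ u₁ t ∧ 0 ≤ v₁ t := by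
    filter_upwards [hu.aestronglyMeasurable.ae_eq_mk, hv.aestronglyMeasurable.ae_eq_mk,
      ae_restrict_mem measurableSet_Icc] with t h1 h2 h3
    have h1' : u t = u₁ t := h1
    have h2' : v t = v₁ t := h2
    exact ⟨h1', h2', by rw [← h1']; exact hu0 t h3, by rw [← h2']; exact hv0 t h3⟩
  set g := fun t => Real.sqrt (u₁ t) with hgdef
  set b := fun t => Real.sqrt (v₁ t) with hbdef
  have hgm : Measurable g := Real.continuous_sqrt.measurable.comp hu₁m
  have hbm : Measurable b := Real.continuous_sqrt.measurable.comp hv₁m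
  have hg0 : ∀ t, 0 ≤ g t := fun t => Real.sqrt_nonneg _
  have hb0 : ∀ t, 0 ≤ b t := fun t => Real.sqrt_nonneg _
  have haesq : ∀ᵐ t ∂μ, g t ^ 2 = u t ∧ b t ^ 2 = v t := by
    filter_upwards [hae] with t ⟨h1, h2, h3, h4⟩
    exact ⟨by rw [hgdef]; simp [Real.sq_sqrt h3, h1], by rw [hbdef]; simp [Real.sq_sqrt h4, h2]⟩
  -- integrability facts
  have Iu1 : Integrable u₁ μ := hu.congr hu.aestronglyMeasurable.ae_eq_mk
  have Iv1 : Integrable v₁ μ := hv.congr hv.aestronglyMeasurable.ae_eq_mk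
  have Ig : Integrable g μ := by
    refine Integrable.mono' ((integrable_const (1:ℝ)).add Iu1.abs)
      hgm.aestronglyMeasurable ?_
    filter_upwards with t
    rw [Real.norm_eq_abs, abs_of_nonneg (hg0 t)]
    exact sqrt_le_one_add_abs _
  have Ib : Integrable b μ := by
    refine Integrable.mono' ((integrable_const (1:ℝ)).add Iv1.abs)
      hbm.aestronglyMeasurable ?_
    filter_upwards with t
    rw [Real.norm_eq_abs, abs_of_nonneg (hb0 t)]
    exact sqrt_le_one_add_abs _
  have Igh : Integrable (fun t => g t * b t) μ := by
    refine Integrable.mono' ((Iu1.abs.add Iv1.abs).div_const 2)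
      (hgm.mul hbm).aestronglyMeasurable ?_
    filter_upwards with t
    rw [Real.norm_eq_abs, abs_of_nonneg (mul_nonneg (hg0 t) (hb0 t))]
    exact sqrt_mul_sqrt_le _ _
  have Id2 : Integrable (fun t => (g t - b t)^2) μ := by
    refine Integrable.mono' ((Iu1.abs.const_mul 2).add (Iv1.abs.const_mul 2))
      ((hgm.sub hbm).pow_const 2).aestronglyMeasurable ?_
    filter_upwards with t
    rw [Real.norm_eq_abs, abs_of_nonneg (sq_nonneg _)]
    exact sqrt_sub_sq_le _ _
  have IS : Integrable (fun t => g t + b t) μ := Ig.add Ib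
  set D := ∫ t, (g t - b t)^2 ∂μ with hDdef
  set G := ∫ t, g t * b t ∂μ with hGdef
  set S := ∫ t, (g t + b t) ∂μ with hSdef
  have hD0 : 0 ≤ D := integral_nonneg (fun t => sq_nonneg _)
  have hG0 : 0 ≤ G := integral_nonneg (fun t => mul_nonneg (hg0 t) (hb0 t))
  have hS0 : 0 ≤ S := integral_nonneg (fun t => add_nonneg (hg0 t) (hb0 t))
  -- choose η and δ
  set η := min (1/2) (ε/(240*(D+1))) with hηdef
  have hη0 : 0 < η := lt_min (by norm_num) (by positivity)
  have hη12 : η ≤ 1/2 := min_le_left _ _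
  have hηD : 24*η*D ≤ ε/10 := by
    have h1 : η ≤ ε/(240*(D+1)) := min_le_right _ _
    have h2 : 24*η*D ≤ 24*(ε/(240*(D+1)))*D :=
      mul_le_mul_of_nonneg_right (mul_le_mul_of_nonneg_left h1 (by norm_num)) hD0
    have h3 : 24*(ε/(240*(D+1)))*D ≤ ε/10 := by
      have he : 24*(ε/(240*(D+1)))*D = ε*D/(10*(D+1)) := by
        field_simp
        ring
      rw [he, div_le_div_iff₀ (by positivity) (by norm_num)]
      nlinarith [mul_nonneg hε.le hD0]
    linarith
  set δ := min 1 (ε/(120*(S+1))) with hδdef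
  have hδ0 : 0 < δ := lt_min (by norm_num) (by positivity)
  have hδ1 : δ ≤ 1 := min_le_left _ _
  have hδS : 12*δ*S ≤ ε/10 := by
    have h1 : δ ≤ ε/(120*(S+1)) := min_le_right _ _
    have h2 : 12*δ*S ≤ 12*(ε/(120*(S+1)))*S :=
      mul_le_mul_of_nonneg_right (mul_le_mul_of_nonneg_left h1 (by norm_num)) hS0
    have h3 : 12*(ε/(120*(S+1)))*S ≤ ε/10 := by
      have he : 12*(ε/(120*(S+1)))*S = ε*S/(10*(S+1)) := by
        field_simp
        ring
      rw [he, div_le_div_iff₀ (by positivity) (by norm_num)]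
      nlinarith [mul_nonneg hε.le hS0]
    linarith
  -- choose the truncation level M
  have htail : Tendsto (fun M : ℝ => ∫ t, ((g t - min (g t) M)^2 + (b t - min (b t) M)^2) ∂μ)
      atTop (𝓝 0) := by
    have h0 : (0:ℝ) = ∫ _t, (0:ℝ) ∂μ := by simp
    rw [h0]
    apply tendsto_integral_filter_of_dominated_convergence (fun t => |u₁ t| + |v₁ t|)
    · filter_upwards with M
      exact (((hgm.sub (hgm.min measurable_const)).pow_const 2).add
        ((hbm.sub (hbm.min measurable_const)).pow_const 2)).aestronglyMeasurable
    · filter_upwards [eventually_ge_atTop (0:ℝ)] with M hM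
      filter_upwards with t
      have e1 : (g t - min (g t) M)^2 ≤ |u₁ t| :=
        le_trans (trunc_sq_le (hg0 t) hM) (sq_sqrt_le_abs _)
      have e2 : (b t - min (b t) M)^2 ≤ |v₁ t| :=
        le_trans (trunc_sq_le (hb0 t) hM) (sq_sqrt_le_abs _)
      rw [Real.norm_eq_abs, abs_of_nonneg (add_nonneg (sq_nonneg _) (sq_nonneg _))]
      linarith
    · exact Iu1.abs.add Iv1.abs
    · filter_upwards with t
      refine Tendsto.congr' ?_ tendsto_const_nhds
      filter_upwards [eventually_ge_atTop (max (g t) (b t))] with M hM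
      have e1 : min (g t) M = g t := min_eq_left (le_trans (le_max_left _ _) hM)
      have e2 : min (b t) M = b t := min_eq_left (le_trans (le_max_right _ _) hM)
      rw [e1, e2]
      ring
  obtain ⟨M, hM2, hMtail⟩ : ∃ M : ℝ, 2 ≤ M ∧
      ∫ t, ((g t - min (g t) M)^2 + (b t - min (b t) M)^2) ∂μ < ε/60 := by
    have h1 := htail.eventually_lt_const (show (0:ℝ) < ε/60 by positivity)
    obtain ⟨M, h2, h3⟩ := (h1.and (eventually_ge_atTop (2:ℝ))).exists
    exact ⟨M, h3, h2⟩
  have hM0 : 0 < M := by linarith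
  set Λ := ((1+η)*M+δ)/δ with hΛdef
  have hΛ0 : 0 < Λ := by rw [hΛdef]; positivity
  have hΛ1 : 1 ≤ Λ := by
    rw [hΛdef, le_div_iff₀ hδ0]
    nlinarith
  set lamE := fun t => (min (b t) M + η * min (g t) M + δ)/(min (g t) M + η * min (b t) M + δ)
    with hlamEdef
  have hbound : ∀ t, 1/Λ ≤ lamE t ∧ lamE t ≤ Λ := by
    intro t
    have hA0 : 0 ≤ min (g t) M := le_min (hg0 t) hM0.le
    have hB0 : 0 ≤ min (b t) M := le_min (hb0 t) hM0.le
    have hAM : min (g t) M ≤ M := min_le_right _ _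
    have hBM : min (b t) M ≤ M := min_le_right _ _
    have hηA := mul_le_mul_of_nonneg_left hAM hη0.le
    have hηB := mul_le_mul_of_nonneg_left hBM hη0.le
    have hηA0 : 0 ≤ η * min (g t) M := mul_nonneg hη0.le hA0
    have hηB0 : 0 ≤ η * min (b t) M := mul_nonneg hη0.le hB0
    have hnum1 : δ ≤ min (b t) M + η * min (g t) M + δ := by linarith
    have hnum2 : min (b t) M + η * min (g t) M + δ ≤ (1+η)*M+δ := by nlinarith
    have hden1 : δ ≤ min (g t) M + η * min (b t) M + δ := by linarith
    have hden2 : min (g t) M + η * min (b t) M + δ ≤ (1+η)*M+δ := by nlinarith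
    constructor
    · rw [hΛdef, one_div_div]
      exact div_le_div₀ (by linarith) hnum1 (by linarith) hden2
    · rw [hΛdef]
      exact div_le_div₀ (by linarith) hnum2 hδ0 hden1
  have hlamE_pos : ∀ t, 0 < lamE t := fun t => lt_of_lt_of_le (by positivity) (hbound t).1
  have hlamEm : Measurable lamE := by
    apply Measurable.div
    · exact ((hbm.min measurable_const).add ((hgm.min measurable_const).const_mul η)).add
        measurable_const
    · exact ((hgm.min measurable_const).add ((hbm.min measurable_const).const_mul η)).add
        measurable_const
  have hΛlamE : ∀ t, 1 ≤ Λ * lamE t := by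
    intro t
    calc (1:ℝ) = Λ*(1/Λ) := by field_simp
      _ ≤ Λ*lamE t := mul_le_mul_of_nonneg_left (hbound t).1 hΛ0.le
  -- integrability of the exact optimizer expression
  have Ikey : Integrable (fun t => lamE t * u₁ t + v₁ t / lamE t) μ := by
    refine Integrable.mono' ((Iu1.abs.const_mul Λ).add (Iv1.abs.const_mul Λ))
      ((hlamEm.mul hu₁m).add (hv₁m.div hlamEm)).aestronglyMeasurable ?_
    filter_upwards with t
    have h1 : |lamE t * u₁ t| ≤ Λ*|u₁ t| := by
      rw [abs_mul, abs_of_pos (hlamE_pos t)]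
      exact mul_le_mul_of_nonneg_right (hbound t).2 (abs_nonneg _)
    have h2 : |v₁ t / lamE t| ≤ Λ*|v₁ t| := by
      rw [abs_div, abs_of_pos (hlamE_pos t), div_le_iff₀ (hlamE_pos t)]
      calc |v₁ t| = |v₁ t| *1 := (mul_one _).symm
        _ ≤ |v₁ t| *(Λ*lamE t) := mul_le_mul_of_nonneg_left (hΛlamE t) (abs_nonneg _)
        _ = Λ*|v₁ t| *lamE t := by ring
    calc ‖lamE t * u₁ t + v₁ t / lamE t‖ ≤ |lamE t * u₁ t| + |v₁ t / lamE t| := abs_add_le _ _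
      _ ≤ Λ*|u₁ t| + Λ*|v₁ t| := add_le_add h1 h2
  have ItailM : Integrable (fun t => (g t - min (g t) M)^2 + (b t - min (b t) M)^2) μ := by
    refine Integrable.mono' (Iu1.abs.add Iv1.abs)
      ((((hgm.sub (hgm.min measurable_const)).pow_const 2).add
        ((hbm.sub (hbm.min measurable_const)).pow_const 2)).aestronglyMeasurable) ?_
    filter_upwards with t
    rw [Real.norm_eq_abs, abs_of_nonneg (add_nonneg (sq_nonneg _) (sq_nonneg _))]
    exact add_le_add (le_trans (trunc_sq_le (hg0 t) hM0.le) (sq_sqrt_le_abs _))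
      (le_trans (trunc_sq_le (hb0 t) hM0.le) (sq_sqrt_le_abs _))
  -- the key integral estimate for the exact optimizer
  have E1 : ∫ t, (lamE t * u₁ t + v₁ t / lamE t) ∂μ ≤ 2*G + (ε/10 + ε/10 + ε/10) := by
    have hrhs_int : Integrable (fun t => 2*(g t*b t) + 24*η*(g t - b t)^2 + 12*δ*(g t + b t)
        + 6*((g t - min (g t) M)^2 + (b t - min (b t) M)^2)) μ :=
      (((Igh.const_mul 2).add (Id2.const_mul (24*η))).add (IS.const_mul (12*δ))).add
        (ItailM.const_mul 6)
    have hmono : ∫ t, (lamE t * u₁ t + v₁ t / lamE t) ∂μ ≤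
        ∫ t, (2*(g t*b t) + 24*η*(g t - b t)^2 + 12*δ*(g t + b t)
          + 6*((g t - min (g t) M)^2 + (b t - min (b t) M)^2)) ∂μ := by
      refine integral_mono_ae Ikey hrhs_int ?_
      filter_upwards [hae] with t ht
      obtain ⟨h1, h2, h3, h4⟩ := ht
      have hgt : (g t)^2 = u₁ t := Real.sq_sqrt h3
      have hbt : (b t)^2 = v₁ t := Real.sq_sqrt h4
      have hkp := key_ptwise (hg0 t) (hb0 t) hη0 hη12 hδ0 (by linarith : 2*δ ≤ M)
      rw [hgt, hbt] at hkp
      exact hkp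
    have hsplit : ∫ t, (2*(g t*b t) + 24*η*(g t - b t)^2 + 12*δ*(g t + b t)
        + 6*((g t - min (g t) M)^2 + (b t - min (b t) M)^2)) ∂μ
        = 2*G + 24*η*D + 12*δ*S
          + 6*(∫ t, ((g t - min (g t) M)^2 + (b t - min (b t) M)^2) ∂μ) := by
      have j1 : Integrable (fun t => 2*(g t*b t) + 24*η*(g t - b t)^2) μ :=
        (Igh.const_mul 2).add (Id2.const_mul (24*η))
      have j2 : Integrable (fun t => 2*(g t*b t) + 24*η*(g t - b t)^2 + 12*δ*(g t + b t)) μ :=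
        j1.add (IS.const_mul (12*δ))
      rw [integral_add j2 (ItailM.const_mul 6), integral_add j1 (IS.const_mul (12*δ)),
        integral_add (Igh.const_mul 2) (Id2.const_mul (24*η)),
        integral_const_mul, integral_const_mul, integral_const_mul, integral_const_mul]
    have h6 : 6*(∫ t, ((g t - min (g t) M)^2 + (b t - min (b t) M)^2) ∂μ) ≤ ε/10 := by
      nlinarith
    linarith [hmono, hsplit.le, hηD, hδS]
  -- the big-value truncation
  set Fb := fun t => |u₁ t| + Λ^2*|v₁ t| with hFbdef
  have hFb0 : ∀ t, 0 ≤ Fb t := fun t => by positivity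
  have hFbm : Measurable Fb := hu₁m.abs.add ((hv₁m.abs).const_mul _)
  have IFb : Integrable Fb μ := Iu1.abs.add (Iv1.abs.const_mul _)
  have hRtail : Tendsto (fun R : ℝ => ∫ t, (Fb t - min (Fb t) R) ∂μ) atTop (𝓝 0) := by
    have h0 : (0:ℝ) = ∫ _t, (0:ℝ) ∂μ := by simp
    rw [h0]
    apply tendsto_integral_filter_of_dominated_convergence Fb
    · filter_upwards with R
      exact (hFbm.sub (hFbm.min measurable_const)).aestronglyMeasurable
    · filter_upwards [eventually_ge_atTop (0:ℝ)] with R hR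
      filter_upwards with t
      have h1 : 0 ≤ min (Fb t) R := le_min (hFb0 t) hR
      have h2 : min (Fb t) R ≤ Fb t := min_le_left _ _
      rw [Real.norm_eq_abs, abs_of_nonneg (by linarith)]
      linarith
    · exact IFb
    · filter_upwards with t
      refine Tendsto.congr' ?_ tendsto_const_nhds
      filter_upwards [eventually_ge_atTop (Fb t)] with R hR
      rw [min_eq_left hR]
      ring
  obtain ⟨R, hR1, hRsmall⟩ : ∃ R : ℝ, 1 ≤ R ∧
      ∫ t, (Fb t - min (Fb t) R) ∂μ < ε/(10*(2*Λ+1)) := by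
    have h1 := hRtail.eventually_lt_const (show (0:ℝ) < ε/(10*(2*Λ+1)) by positivity)
    obtain ⟨R, h2, h3⟩ := (h1.and (eventually_ge_atTop (1:ℝ))).exists
    exact ⟨R, h3, h2⟩
  have ImF : Integrable (fun t => min (Fb t) R) μ := by
    refine Integrable.mono' IFb (hFbm.min measurable_const).aestronglyMeasurable ?_
    filter_upwards with t
    rw [Real.norm_eq_abs, abs_of_nonneg (le_min (hFb0 t) (by linarith))]
    exact min_le_left _ _
  have ItailR : Integrable (fun t => Fb t - min (Fb t) R) μ := IFb.sub ImF
  -- L¹ approximation of lamE by a continuous function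
  set γ := ε/(10*R) with hγdef
  have hγ0 : 0 < γ := by rw [hγdef]; positivity
  have hlamE_int : Integrable lamE μ := by
    refine Integrable.mono' (integrable_const Λ) hlamEm.aestronglyMeasurable ?_
    filter_upwards with t
    rw [Real.norm_eq_abs, abs_of_pos (hlamE_pos t)]
    exact (hbound t).2
  have hf0 : Integrable ((Icc (0:ℝ) T).indicator lamE) volume := by
    rw [integrable_indicator_iff measurableSet_Icc]
    exact hlamE_int
  obtain ⟨lam', _, hclose, hlam'cont, hlam'int⟩ :=
    hf0.exists_hasCompactSupport_integral_sub_le hγ0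
  set lam := fun t => max (min (lam' t) Λ) (1/Λ) with hlamdef
  have hlamcont : Continuous lam := (hlam'cont.min continuous_const).max continuous_const
  have hlamlb : ∀ t, 1/Λ ≤ lam t := fun t => le_max_right _ _
  have hlamub : ∀ t, lam t ≤ Λ := by
    intro t
    refine max_le (min_le_right _ _) ?_
    rw [div_le_iff₀ hΛ0]
    nlinarith
  have hlampos : ∀ t, 0 < lam t := fun t => lt_of_lt_of_le (by positivity) (hlamlb t)
  have hΛlam : ∀ t, 1 ≤ Λ * lam t := by
    intro t
    calc (1:ℝ) = Λ*(1/Λ) := by field_simp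
      _ ≤ Λ*lam t := mul_le_mul_of_nonneg_left (hlamlb t) hΛ0.le
  have hw2 : ∀ t, |lam t - lamE t| ≤ 2*Λ := by
    intro t
    rw [abs_sub_le_iff]
    constructor
    · have := (hbound t).1; have h2 := hlamub t
      have : 0 < 1/Λ := by positivity
      linarith [(hbound t).1]
    · have := hlamlb t; have h2 := (hbound t).2
      have : 0 < 1/Λ := by positivity
      linarith [hlamlb t]
  have Iw : Integrable (fun t => |lam t - lamE t|) μ := by
    refine Integrable.mono' (integrable_const (2*Λ))
      ((hlamcont.measurable.sub hlamEm).abs).aestronglyMeasurable ?_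
    filter_upwards with t
    rw [Real.norm_eq_abs, abs_abs]
    exact hw2 t
  have hwsmall : ∫ t, |lam t - lamE t| ∂μ ≤ γ := by
    have hwle : ∀ᵐ t ∂μ, |lam t - lamE t| ≤ ‖(Icc (0:ℝ) T).indicator lamE t - lam' t‖ := by
      filter_upwards [ae_restrict_mem measurableSet_Icc] with t ht
      have hind : (Icc (0:ℝ) T).indicator lamE t = lamE t := indicator_of_mem ht _
      rw [Real.norm_eq_abs, hind, abs_sub_comm (lamE t) (lam' t)]
      exact clamp_dist (hbound t).1 (hbound t).2
    have h1 : ∫ t, |lam t - lamE t| ∂μ ≤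
        ∫ t, ‖(Icc (0:ℝ) T).indicator lamE t - lam' t‖ ∂μ :=
      integral_mono_ae Iw ((hf0.sub hlam'int).norm.restrict) hwle
    have h2 : ∫ t, ‖(Icc (0:ℝ) T).indicator lamE t - lam' t‖ ∂μ ≤
        ∫ t, ‖(Icc (0:ℝ) T).indicator lamE t - lam' t‖ := by
      rw [hμdef]
      exact integral_mono_measure Measure.restrict_le_self
        (Eventually.of_forall (fun t => norm_nonneg _)) (hf0.sub hlam'int).norm
    linarith [hclose]
  -- integrability with lam
  have Ilam1 : Integrable (fun t => lam t * u₁ t + v₁ t / lam t) μ := by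
    refine Integrable.mono' ((Iu1.abs.const_mul Λ).add (Iv1.abs.const_mul Λ))
      ((hlamcont.measurable.mul hu₁m).add (hv₁m.div hlamcont.measurable)).aestronglyMeasurable ?_
    filter_upwards with t
    have h1 : |lam t * u₁ t| ≤ Λ*|u₁ t| := by
      rw [abs_mul, abs_of_pos (hlampos t)]
      exact mul_le_mul_of_nonneg_right (hlamub t) (abs_nonneg _)
    have h2 : |v₁ t / lam t| ≤ Λ*|v₁ t| := by
      rw [abs_div, abs_of_pos (hlampos t), div_le_iff₀ (hlampos t)]
      calc |v₁ t| = |v₁ t| *1 := (mul_one _).symm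
        _ ≤ |v₁ t| *(Λ*lam t) := mul_le_mul_of_nonneg_left (hΛlam t) (abs_nonneg _)
        _ = Λ*|v₁ t| *lam t := by ring
    calc ‖lam t * u₁ t + v₁ t / lam t‖ ≤ |lam t * u₁ t| + |v₁ t / lam t| := abs_add_le _ _
      _ ≤ Λ*|u₁ t| + Λ*|v₁ t| := add_le_add h1 h2
  have Iw2 : Integrable (fun t => |lam t - lamE t| * Fb t) μ := by
    refine Integrable.mono' (IFb.const_mul (2*Λ))
      (((hlamcont.measurable.sub hlamEm).abs).mul hFbm).aestronglyMeasurable ?_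
    filter_upwards with t
    rw [Real.norm_eq_abs, abs_of_nonneg (mul_nonneg (abs_nonneg _) (hFb0 t))]
    exact mul_le_mul_of_nonneg_right (hw2 t) (hFb0 t)
  -- perturbation estimate
  have E2 : ∫ t, (lam t * u₁ t + v₁ t / lam t) ∂μ ≤
      (∫ t, (lamE t * u₁ t + v₁ t / lamE t) ∂μ) + ∫ t, |lam t - lamE t| * Fb t ∂μ := by
    have j3 : Integrable (fun t => lamE t * u₁ t + v₁ t / lamE t
        + |lam t - lamE t| * Fb t) μ := Ikey.add Iw2
    have h := integral_mono_ae Ilam1 j3 (Eventually.of_forall (fun t =>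
      perturb_ptwise hΛ0 (hbound t).1 (hbound t).2 (hlamlb t) (hlamub t)))
    rwa [integral_add Ikey Iw2] at h
  have E3 : ∫ t, |lam t - lamE t| * Fb t ∂μ ≤
      R*(∫ t, |lam t - lamE t| ∂μ) + 2*Λ*(∫ t, (Fb t - min (Fb t) R) ∂μ) := by
    have j4 : Integrable (fun t => R * |lam t - lamE t| + 2*Λ*(Fb t - min (Fb t) R)) μ :=
      (Iw.const_mul R).add (ItailR.const_mul (2*Λ))
    have h := integral_mono Iw2 j4
      (fun t => wF_ptwise (abs_nonneg _) (hw2 t) (hFb0 t))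
    rwa [integral_add (Iw.const_mul R) (ItailR.const_mul (2*Λ)),
      integral_const_mul, integral_const_mul] at h
  have E4 : R*(∫ t, |lam t - lamE t| ∂μ) ≤ ε/10 := by
    have h1 : R*(∫ t, |lam t - lamE t| ∂μ) ≤ R*γ :=
      mul_le_mul_of_nonneg_left hwsmall (by linarith)
    have h2 : R*γ = ε/10 := by
      rw [hγdef]
      field_simp
    linarith
  have E5 : 2*Λ*(∫ t, (Fb t - min (Fb t) R) ∂μ) ≤ ε/10 := by
    have h1 : 2*Λ*(∫ t, (Fb t - min (Fb t) R) ∂μ) ≤ 2*Λ*(ε/(10*(2*Λ+1))) :=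
      mul_le_mul_of_nonneg_left hRsmall.le (by positivity)
    have h2 : 2*Λ*(ε/(10*(2*Λ+1))) ≤ ε/10 := by
      have he : 2*Λ*(ε/(10*(2*Λ+1))) = (2*Λ*ε)/(10*(2*Λ+1)) := by ring
      rw [he, div_le_div_iff₀ (by positivity) (by norm_num)]
      nlinarith [mul_nonneg hΛ0.le hε.le]
    linarith
  refine ⟨lam, hlamcont, hlampos, ?_, ?_⟩
  · exact Ilam1.congr (by filter_upwards [hae] with t ht; rw [ht.1, ht.2.1])
  · have hcongr1 : (∫ t in Icc (0:ℝ) T, (lam t * u t + v t / lam t))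
        = ∫ t, (lam t * u₁ t + v₁ t / lam t) ∂μ := by
      rw [← hμdef]
      exact integral_congr_ae (by filter_upwards [hae] with t ht; rw [ht.1, ht.2.1])
    have hcongr2 : (∫ t in Icc (0:ℝ) T, (Real.sqrt (u t) * Real.sqrt (v t))) = G := by
      rw [← hμdef, hGdef]
      refine integral_congr_ae ?_
      filter_upwards [hae] with t ht
      rw [ht.1, ht.2.1]
    rw [hcongr1, hcongr2]
    linarith [E1, E2, E3, E4, E5]

/-- The Fisher information `∫₀ᵀ (√u − √v)² dt` is the supremum of
`∫₀ᵀ (p·u + q·v) dt` over continuous `p, q : [0,T] → ℝ` with `p(t) < 1`, `q(t) < 1`,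
`(p(t)−1)(q(t)−1) > 1` for every `t ∈ [0,T]`. -/
theorem fisher_information_dual (T : ℝ) (hT : 0 < T) (u v : ℝ → ℝ)
    (hu : IntegrableOn u (Icc 0 T)) (hv : IntegrableOn v (Icc 0 T))
    (hu0 : ∀ t ∈ Icc (0:ℝ) T, 0 ≤ u t) (hv0 : ∀ t ∈ Icc (0:ℝ) T, 0 ≤ v t) :
    IsLUB {x : ℝ | ∃ p q : ℝ → ℝ, ContinuousOn p (Icc 0 T) ∧ ContinuousOn q (Icc 0 T) ∧
        (∀ t ∈ Icc (0:ℝ) T, p t < 1 ∧ q t < 1 ∧ 1 < (p t - 1) * (q t - 1)) ∧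
        x = ∫ t in Icc (0:ℝ) T, (p t * u t + q t * v t)}
      (∫ t in Icc (0:ℝ) T, (Real.sqrt (u t) - Real.sqrt (v t)) ^ 2) := by
  constructor
  · rintro x ⟨p, q, hp, hq, hcond, rfl⟩
    exact part1 hu hv hu0 hv0 hp hq hcond
  · intro bnd hbnd
    refine le_of_forall_pos_le_add (fun ε hε => ?_)
    obtain ⟨lam, hlc, hlp, hlint, hlest⟩ := part2 hT hu hv hu0 hv0 (half_pos hε)
    set Gv := ∫ t in Icc (0:ℝ) T, (Real.sqrt (u t) * Real.sqrt (v t)) with hGvdef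
    set Dv := ∫ t in Icc (0:ℝ) T, (Real.sqrt (u t) - Real.sqrt (v t)) ^ 2 with hDvdef
    have hGv0 : 0 ≤ Gv := setIntegral_nonneg measurableSet_Icc
      (fun t _ => mul_nonneg (Real.sqrt_nonneg _) (Real.sqrt_nonneg _))
    set θ := ε/(4*Gv + ε + 1) with hθdef
    have hθ0 : 0 < θ := div_pos hε (by linarith)
    set p := fun t => 1 - (1+θ)*lam t with hpdef
    set q := fun t => 1 - (1+θ)/lam t with hqdef
    -- the value of the integral
    have hptw : ∀ t, p t * u t + q t * v t
        = (u t + v t) - (1+θ)*(lam t * u t + v t / lam t) := by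
      intro t
      rw [hpdef, hqdef]
      ring
    have hx : (∫ t in Icc (0:ℝ) T, (p t * u t + q t * v t))
        = (∫ t in Icc (0:ℝ) T, (u t + v t))
          - (1+θ)*(∫ t in Icc (0:ℝ) T, (lam t * u t + v t / lam t)) := by
      calc (∫ t in Icc (0:ℝ) T, (p t * u t + q t * v t))
          = ∫ t in Icc (0:ℝ) T, ((u t + v t) - (1+θ)*(lam t * u t + v t / lam t)) :=
            integral_congr_ae (Eventually.of_forall (fun t => hptw t))
        _ = (∫ t in Icc (0:ℝ) T, (u t + v t))
            - (1+θ)*(∫ t in Icc (0:ℝ) T, (lam t * u t + v t / lam t)) := by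
            have hsum : IntegrableOn (fun t => u t + v t) (Icc 0 T) := hu.add hv
            rw [integral_sub hsum (hlint.const_mul (1+θ)), integral_const_mul]
    have huv2 : (∫ t in Icc (0:ℝ) T, (u t + v t)) = Dv + 2*Gv := by
      have hptw2 : EqOn (fun t => u t + v t)
          (fun t => (Real.sqrt (u t) - Real.sqrt (v t))^2
            + 2*(Real.sqrt (u t) * Real.sqrt (v t))) (Icc 0 T) := by
        intro t ht
        have h1 := Real.sq_sqrt (hu0 t ht)
        have h2 := Real.sq_sqrt (hv0 t ht)
        simp only
        nlinarith
      rw [setIntegral_congr_fun measurableSet_Icc hptw2,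
        integral_add (integrable_sqrt_diff_sq hu hv) ((integrable_sqrt_mul hu hv).const_mul 2),
        integral_const_mul]
    -- membership
    have hmem : (∫ t in Icc (0:ℝ) T, (p t * u t + q t * v t)) ∈
        {x : ℝ | ∃ p q : ℝ → ℝ, ContinuousOn p (Icc 0 T) ∧ ContinuousOn q (Icc 0 T) ∧
          (∀ t ∈ Icc (0:ℝ) T, p t < 1 ∧ q t < 1 ∧ 1 < (p t - 1) * (q t - 1)) ∧
          x = ∫ t in Icc (0:ℝ) T, (p t * u t + q t * v t)} := by
      refine ⟨p, q, ?_, ?_, ?_, rfl⟩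
      · exact (continuous_const.sub (continuous_const.mul hlc)).continuousOn
      · exact (continuous_const.sub (continuous_const.div hlc
          (fun t => (hlp t).ne'))).continuousOn
      · intro t _
        refine ⟨?_, ?_, ?_⟩
        · have h1 : 0 < (1+θ)*lam t := mul_pos (by linarith) (hlp t)
          simp only [hpdef]
          linarith
        · have h1 : 0 < (1+θ)/lam t := div_pos (by linarith) (hlp t)
          simp only [hqdef]
          linarith
        · have h1 : (p t - 1)*(q t - 1) = (1+θ)^2 := by
            have hne : lam t ≠ 0 := (hlp t).ne'
            rw [hpdef, hqdef]
            field_simp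
            ring
          rw [h1]
          nlinarith
    have hxle := hbnd hmem
    have hI : (1+θ)*(∫ t in Icc (0:ℝ) T, (lam t * u t + v t / lam t))
        ≤ (1+θ)*(2*Gv + ε/2) :=
      mul_le_mul_of_nonneg_left (by linarith [hlest]) (by linarith)
    have hθb : θ*(2*Gv + ε/2) ≤ ε/2 := by
      have he : θ*(2*Gv + ε/2) = ε*(2*Gv + ε/2)/(4*Gv + ε + 1) := by
        rw [hθdef]
        ring
      rw [he, div_le_div_iff₀ (by linarith) (by norm_num)]
      nlinarith [mul_nonneg hε.le hGv0]
    linarith [hx, huv2, hxle, hI, hθb]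
end

section
/- Let T > 0, let u ∈ L¹([0,T]) be nonnegative and let j ∈ L¹([0,T]) be nonnegative. Then sup_{ζ ∈ C([0,T])} ∫₀ᵀ [ ζ(t)·j(t) − u(t)·(e^{ζ(t)} − 1) ] dt = ∫₀ᵀ s(j(t)∣u(t)) dt, where both sides take values in [0,∞]; in particular the supremum is infinite unless j(t) = 0 for almost every t with u(t) = 0. -/
open MeasureTheory Set
open scoped ENNReal

/-- The extended-value Boltzmann cost `s(a∣b) ∈ [0,∞]` for `a, b ≥ 0`:
`s(a∣b) = a·log(a/b) − a + b` if `b > 0` (this includes `s(0∣b) = b` since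
`Real.log 0 = 0`), `s(0∣0) = 0` and `s(a∣0) = ∞` for `a > 0`. -/
noncomputable def sCostE (a b : ℝ) : ℝ≥0∞ :=
  if b = 0 then (if a = 0 then 0 else ⊤)
  else ENNReal.ofReal (a * Real.log (a / b) - a + b)


open Filter
open scoped Topology

lemma key_ineq (a b z : ℝ) (ha : 0 ≤ a) (hb : 0 < b) :
    z * a - b * (Real.exp z - 1) ≤ a * Real.log (a / b) - a + b := by
  rcases eq_or_lt_of_le ha with h|h
  · simp only [← h, zero_mul, mul_zero, Real.log_zero, sub_zero, zero_sub, zero_add]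
    nlinarith [Real.exp_pos z]
  · have hab : 0 < a / b := div_pos h hb
    have hexp : b * Real.exp z = a * Real.exp (z - Real.log (a / b)) := by
      rw [Real.exp_sub, Real.exp_log hab]
      field_simp
    have key := Real.add_one_le_exp (z - Real.log (a / b))
    nlinarith [mul_le_mul_of_nonneg_left key ha]

lemma sexpr_nonneg (a b : ℝ) (ha : 0 ≤ a) (hb : 0 < b) :
    0 ≤ a * Real.log (a / b) - a + b := by
  rcases eq_or_lt_of_le ha with h|h
  · simp [← h, hb.le]
  · have h1 : Real.log (b / a) ≤ b / a - 1 := Real.log_le_sub_one_of_pos (div_pos hb h)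
    have h2 : Real.log (b / a) = - Real.log (a / b) := by
      rw [← Real.log_inv]; congr 1; field_simp
    have h3 : a * Real.log (b/a) ≤ a * (b/a - 1) := mul_le_mul_of_nonneg_left h1 (le_of_lt h)
    rw [h2] at h3
    have h4 : a * (b/a - 1) = b - a := by field_simp
    nlinarith

lemma pointwise_le (a b z : ℝ) (ha : 0 ≤ a) (hb : 0 ≤ b) :
    ENNReal.ofReal (z * a - b * (Real.exp z - 1)) ≤ sCostE a b := by
  unfold sCostE
  rcases eq_or_lt_of_le hb with h|h
  · rcases eq_or_lt_of_le ha with h2|h2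
    · rw [← h, ← h2]; simp
    · simp [← h, h2.ne', le_top]
  · rw [if_neg h.ne']
    exact ENNReal.ofReal_le_ofReal (key_ineq a b z ha h)

lemma integrable_F {μ : Measure ℝ} {u j φ : ℝ → ℝ} (hu : Integrable u μ)
    (hj : Integrable j μ) (hφ : AEMeasurable φ μ) {B : ℝ}
    (hφb : ∀ᵐ t ∂μ, |φ t| ≤ B) :
    Integrable (fun t => φ t * j t - u t * (Real.exp (φ t) - 1)) μ := by
  have hm : AEStronglyMeasurable (fun t => φ t * j t - u t * (Real.exp (φ t) - 1)) μ := by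
    apply AEStronglyMeasurable.sub
    · exact (hφ.mul hj.1.aemeasurable).aestronglyMeasurable
    · exact (hu.1.aemeasurable.mul
        ((Real.measurable_exp.comp_aemeasurable hφ).sub aemeasurable_const)).aestronglyMeasurable
  refine Integrable.mono' ((hj.abs.const_mul B).add ((hu.abs.const_mul (Real.exp B + 1))))
    hm ?_
  filter_upwards [hφb] with t ht
  have h1 : |φ t * j t| ≤ B * |j t| := by
    rw [abs_mul]; exact mul_le_mul_of_nonneg_right ht (abs_nonneg _)
  have hX : |Real.exp (φ t) - 1| ≤ Real.exp B + 1 := by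
    have := Real.exp_le_exp.mpr ((le_abs_self (φ t)).trans ht)
    have := Real.exp_pos (φ t)
    rw [abs_le]; constructor <;> nlinarith
  have h2 : |u t * (Real.exp (φ t) - 1)| ≤ (Real.exp B + 1) * |u t| := by
    rw [abs_mul]
    nlinarith [abs_nonneg (u t), abs_nonneg (Real.exp (φ t) - 1),
      mul_le_mul_of_nonneg_left hX (abs_nonneg (u t))]
  have habs : ‖φ t * j t - u t * (Real.exp (φ t) - 1)‖ ≤
      |φ t * j t| + |u t * (Real.exp (φ t) - 1)| := by
    rw [Real.norm_eq_abs]; exact abs_sub _ _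
  calc ‖φ t * j t - u t * (Real.exp (φ t) - 1)‖
      ≤ |φ t * j t| + |u t * (Real.exp (φ t) - 1)| := habs
    _ ≤ B * |j t| + (Real.exp B + 1) * |u t| := add_le_add h1 h2

lemma ofReal_max_zero' (x : ℝ) : ENNReal.ofReal (max x 0) = ENNReal.ofReal x := by
  rcases le_total x 0 with h|h
  · rw [max_eq_right h, ENNReal.ofReal_zero, ENNReal.ofReal_of_nonpos h]
  · rw [max_eq_left h]

lemma ofReal_integral_le {μ : Measure ℝ} {f : ℝ → ℝ} (hf : Integrable f μ) :
    ENNReal.ofReal (∫ t, f t ∂μ) ≤ ∫⁻ t, ENNReal.ofReal (f t) ∂μ := by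
  have h1 : ∫ t, f t ∂μ ≤ ∫ t, max (f t) 0 ∂μ :=
    integral_mono hf hf.pos_part (fun t => le_max_left _ _)
  calc ENNReal.ofReal (∫ t, f t ∂μ) ≤ ENNReal.ofReal (∫ t, max (f t) 0 ∂μ) :=
        ENNReal.ofReal_le_ofReal h1
    _ = ∫⁻ t, ENNReal.ofReal (max (f t) 0) ∂μ :=
        ofReal_integral_eq_lintegral_ofReal hf.pos_part
          (Filter.Eventually.of_forall fun t => le_max_right _ _)
    _ = ∫⁻ t, ENNReal.ofReal (f t) ∂μ := by simp_rw [ofReal_max_zero']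

lemma stepA (T : ℝ) (u j : ℝ → ℝ)
    (hu : IntegrableOn u (Icc 0 T)) (hj : IntegrableOn j (Icc 0 T))
    (hu0 : ∀ t ∈ Icc (0:ℝ) T, 0 ≤ u t) (hj0 : ∀ t ∈ Icc (0:ℝ) T, 0 ≤ j t)
    (ζ : ℝ → ℝ) (hζ : ContinuousOn ζ (Icc 0 T)) :
    (((∫ t in Icc (0:ℝ) T, (ζ t * j t - u t * (Real.exp (ζ t) - 1)) : ℝ)) : EReal)
      ≤ ((∫⁻ t in Icc (0:ℝ) T, sCostE (j t) (u t)) : ℝ≥0∞) := by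
  set μ := volume.restrict (Icc (0:ℝ) T) with hμ
  obtain ⟨B, hB⟩ := IsCompact.exists_bound_of_continuousOn isCompact_Icc hζ
  have hmem : ∀ᵐ t ∂μ, t ∈ Icc (0:ℝ) T := ae_restrict_mem measurableSet_Icc
  have hζm : AEMeasurable ζ μ := (hζ.aemeasurable measurableSet_Icc)
  have hint : Integrable (fun t => ζ t * j t - u t * (Real.exp (ζ t) - 1)) μ :=
    integrable_F hu hj hζm (hmem.mono fun t ht => by
      simpa [Real.norm_eq_abs] using hB t ht)
  have h1 : ENNReal.ofReal (∫ t, (ζ t * j t - u t * (Real.exp (ζ t) - 1)) ∂μ)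
      ≤ ∫⁻ t, ENNReal.ofReal (ζ t * j t - u t * (Real.exp (ζ t) - 1)) ∂μ :=
    ofReal_integral_le hint
  have h2 : ∫⁻ t, ENNReal.ofReal (ζ t * j t - u t * (Real.exp (ζ t) - 1)) ∂μ
      ≤ ∫⁻ t, sCostE (j t) (u t) ∂μ := by
    refine lintegral_mono_ae (hmem.mono fun t ht => ?_)
    exact pointwise_le (j t) (u t) (ζ t) (hj0 t ht) (hu0 t ht)
  have h3 : ENNReal.ofReal (∫ t, (ζ t * j t - u t * (Real.exp (ζ t) - 1)) ∂μ)
      ≤ ∫⁻ t, sCostE (j t) (u t) ∂μ := h1.trans h2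
  calc ((∫ t, (ζ t * j t - u t * (Real.exp (ζ t) - 1)) ∂μ : ℝ) : EReal)
      ≤ ((ENNReal.ofReal (∫ t, (ζ t * j t - u t * (Real.exp (ζ t) - 1)) ∂μ) : ℝ≥0∞) : EReal) := by
        rw [EReal.coe_ennreal_ofReal]
        exact EReal.coe_le_coe_iff.mpr (le_max_left _ _)
    _ ≤ ((∫⁻ t, sCostE (j t) (u t) ∂μ : ℝ≥0∞) : EReal) :=
        EReal.coe_ennreal_le_coe_ennreal_iff.mpr h3



lemma F_bound (z jv uv B : ℝ) (hz : |z| ≤ B) :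
    ‖z * jv - uv * (Real.exp z - 1)‖ ≤ B * |jv| + (Real.exp B + 1) * |uv| := by
  have h1 : |z * jv| ≤ B * |jv| := by
    rw [abs_mul]; exact mul_le_mul_of_nonneg_right hz (abs_nonneg _)
  have hX : |Real.exp z - 1| ≤ Real.exp B + 1 := by
    have := Real.exp_le_exp.mpr ((le_abs_self z).trans hz)
    have := Real.exp_pos z
    rw [abs_le]; constructor <;> nlinarith
  have h2 : |uv * (Real.exp z - 1)| ≤ (Real.exp B + 1) * |uv| := by
    rw [abs_mul]
    nlinarith [abs_nonneg uv, abs_nonneg (Real.exp z - 1),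
      mul_le_mul_of_nonneg_left hX (abs_nonneg uv)]
  calc ‖z * jv - uv * (Real.exp z - 1)‖
      ≤ |z * jv| + |uv * (Real.exp z - 1)| := by rw [Real.norm_eq_abs]; exact abs_sub _ _
    _ ≤ B * |jv| + (Real.exp B + 1) * |uv| := add_le_add h1 h2

lemma clamp_lip (B x y : ℝ) : |max (-B) (min B x) - max (-B) (min B y)| ≤ |x - y| := by
  have h1 : |max (min B x) (-B) - max (min B y) (-B)| ≤ |min B x - min B y| :=
    abs_max_sub_max_le_abs _ _ _
  have h2 : |min B x - min B y| ≤ max |B - B| |x - y| := abs_min_sub_min_le_max _ _ _ _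
  rw [max_comm (-B) (min B x), max_comm (-B) (min B y)]
  refine h1.trans (h2.trans ?_)
  simp

lemma clamp_eq_self {B x : ℝ} (hx : |x| ≤ B) : max (-B) (min B x) = x := by
  rw [abs_le] at hx
  rw [min_eq_right hx.2, max_eq_right hx.1]

lemma clamp_abs_le {B x : ℝ} (hB : 0 ≤ B) : |max (-B) (min B x)| ≤ B := by
  rw [abs_le]
  exact ⟨le_max_left _ _, max_le (by linarith) (min_le_left _ _)⟩

lemma stepLusin (T : ℝ) (u j : ℝ → ℝ)
    (hu : IntegrableOn u (Icc 0 T)) (hj : IntegrableOn j (Icc 0 T))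
    (φ : ℝ → ℝ) (hφm : Measurable φ) {B : ℝ} (hB0 : 0 ≤ B) (hφb : ∀ t, |φ t| ≤ B) :
    ((∫ t in Icc (0:ℝ) T, (φ t * j t - u t * (Real.exp (φ t) - 1)) : ℝ) : EReal)
      ≤ ⨆ ζ : {f : ℝ → ℝ // ContinuousOn f (Icc 0 T)},
          (((∫ t in Icc (0:ℝ) T, (ζ.1 t * j t - u t * (Real.exp (ζ.1 t) - 1)) : ℝ)) : EReal) := by
  set μ := volume.restrict (Icc (0:ℝ) T) with hμdef
  set f0 : ℝ → ℝ := (Icc (0:ℝ) T).indicator φ with hf0def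
  have hf0m : Measurable f0 := hφm.indicator measurableSet_Icc
  have hf0i : Integrable f0 volume := by
    rw [hf0def, integrable_indicator_iff measurableSet_Icc]
    haveI : IsFiniteMeasure μ :=
      ⟨by rw [Measure.restrict_apply_univ]; exact isCompact_Icc.measure_lt_top⟩
    refine Integrable.mono' (integrable_const B) hφm.aestronglyMeasurable ?_
    exact Eventually.of_forall fun t => by rw [Real.norm_eq_abs]; exact hφb t
  have hmem1 : MemLp f0 1 volume := memLp_one_iff_integrable.mpr hf0i
  have hgk : ∀ k : ℕ, ∃ g : ℝ → ℝ, Continuous g ∧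
      eLpNorm (f0 - g) 1 volume ≤ ((k : ℝ≥0∞) + 1)⁻¹ := by
    intro k
    obtain ⟨g, -, hg2, hg3, -⟩ := hmem1.exists_hasCompactSupport_eLpNorm_sub_le
      (by simp : (1:ℝ≥0∞) ≠ ∞) (ε := ((k : ℝ≥0∞) + 1)⁻¹) (by simp)
    exact ⟨g, hg3, hg2⟩
  choose g hgc hgn using hgk
  set ζ : ℕ → ℝ → ℝ := fun k t => max (-B) (min B (g k t)) with hζdef
  have hζc : ∀ k, Continuous (ζ k) :=
    fun k => continuous_const.max (continuous_const.min (hgc k))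
  have hζb : ∀ k t, |ζ k t| ≤ B := fun k t => clamp_abs_le hB0
  have key : ∀ k, eLpNorm (fun t => ζ k t - φ t) 1 μ ≤ ((k : ℝ≥0∞) + 1)⁻¹ := by
    intro k
    have h1 : eLpNorm (fun t => ζ k t - φ t) 1 μ ≤ eLpNorm (f0 - g k) 1 μ := by
      apply eLpNorm_mono_ae
      filter_upwards [ae_restrict_mem measurableSet_Icc] with t ht
      rw [Real.norm_eq_abs, Real.norm_eq_abs, Pi.sub_apply]
      have hf0 : f0 t = φ t := indicator_of_mem ht φ
      have h := clamp_lip B (g k t) (φ t)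
      rw [clamp_eq_self (hφb t)] at h
      rw [hf0, abs_sub_comm (φ t) (g k t)]
      exact h
    exact h1.trans ((eLpNorm_mono_measure _ Measure.restrict_le_self).trans (hgn k))
  have htenaux : Tendsto (fun k : ℕ => ((k : ℝ≥0∞) + 1)⁻¹) atTop (𝓝 0) := by
    have := ENNReal.tendsto_inv_nat_nhds_zero.comp (tendsto_add_atTop_nat 1)
    convert this using 2 with k
    simp [Function.comp]
  have hten : Tendsto (fun k => eLpNorm (fun t => ζ k t - φ t) 1 μ) atTop (𝓝 0) :=
    tendsto_of_tendsto_of_tendsto_of_le_of_le tendsto_const_nhds htenaux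
      (fun k => zero_le) key
  have him : TendstoInMeasure μ (fun k => ζ k) atTop φ := by
    refine tendstoInMeasure_of_tendsto_eLpNorm (p := 1) one_ne_zero
      (fun k => (hζc k).aestronglyMeasurable) hφm.aestronglyMeasurable ?_
    exact hten
  obtain ⟨ns, hns, hae⟩ := him.exists_seq_tendsto_ae
  have hdom : Tendsto (fun i => ∫ t, (ζ (ns i) t * j t - u t * (Real.exp (ζ (ns i) t) - 1)) ∂μ)
      atTop (𝓝 (∫ t, (φ t * j t - u t * (Real.exp (φ t) - 1)) ∂μ)) := by
    refine tendsto_integral_of_dominated_convergence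
      (fun t => B * |j t| + (Real.exp B + 1) * |u t|) ?_ ?_ ?_ ?_
    · intro i
      apply AEStronglyMeasurable.sub
      · exact ((hζc (ns i)).measurable.aemeasurable.mul hj.1.aemeasurable).aestronglyMeasurable
      · exact (hu.1.aemeasurable.mul
          ((Real.measurable_exp.comp (hζc (ns i)).measurable).aemeasurable.sub
            aemeasurable_const)).aestronglyMeasurable
    · exact (hj.abs.const_mul B).add (hu.abs.const_mul _)
    · intro i
      exact Eventually.of_forall fun t => F_bound _ _ _ _ (hζb (ns i) t)
    · filter_upwards [hae] with t ht
      have hc : Continuous (fun z : ℝ => z * j t - u t * (Real.exp z - 1)) :=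
        (continuous_id.mul continuous_const).sub
          (continuous_const.mul (Real.continuous_exp.sub continuous_const))
      exact (hc.tendsto (φ t)).comp ht
  refine le_of_tendsto (EReal.tendsto_coe.mpr hdom) (Eventually.of_forall fun i => ?_)
  exact le_iSup_of_le ⟨ζ (ns i), (hζc (ns i)).continuousOn⟩ (le_refl _)



lemma xlog_le (x y : ℝ) (hx : 0 < x) (hy : 0 < y) : x * Real.log (y / x) ≤ y - x := by
  have h := Real.log_le_sub_one_of_pos (div_pos hy hx)
  have h2 := mul_le_mul_of_nonneg_left h hx.le
  rw [mul_sub, mul_one, mul_div_cancel₀ _ hx.ne'] at h2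
  linarith

/-- the truncated logarithmic test function -/
noncomputable def phiN (n : ℕ) (a b : ℝ) : ℝ :=
  max (-(n:ℝ)) (min (n:ℝ) (Real.log ((a + 1/((n:ℝ)+1)) / (b + 1/((n:ℝ)+1)))))

lemma g_lower (n : ℕ) (a b : ℝ) (ha : 0 ≤ a) (hb : 0 ≤ b) :
    -(b + a + 2) ≤ phiN n a b * a - b * (Real.exp (phiN n a b) - 1) := by
  set δ : ℝ := 1/((n:ℝ)+1) with hδdef
  have hδ : 0 < δ := by positivity
  have hδ1 : δ ≤ 1 := by
    rw [hδdef, div_le_one (by positivity)]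
    linarith [(Nat.cast_nonneg n : (0:ℝ) ≤ n)]
  set ψ : ℝ := Real.log ((a + δ) / (b + δ)) with hψdef
  set z : ℝ := phiN n a b with hzdef
  have hzψ : z = max (-(n:ℝ)) (min (n:ℝ) ψ) := rfl
  have h1 : b * (Real.exp z - 1) ≤ a + 1 := by
    rcases le_or_gt z ψ with h | h
    · have hmono : b * Real.exp z ≤ b * Real.exp ψ :=
        mul_le_mul_of_nonneg_left (Real.exp_le_exp.mpr h) hb
      have hexpψ : Real.exp ψ = (a + δ) / (b + δ) :=
        Real.exp_log (div_pos (by linarith) (by linarith))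
      have h2 : b * ((a + δ) / (b + δ)) ≤ a + δ := by
        rw [mul_comm, div_mul_eq_mul_div, div_le_iff₀ (by linarith : (0:ℝ) < b + δ)]
        nlinarith
      nlinarith
    · have hz0 : z ≤ 0 := by
        rcases max_cases (-(n:ℝ)) (min (n:ℝ) ψ) with ⟨he, _⟩ | ⟨he, _⟩
        · rw [hzψ, he]; simp
        · exfalso
          rw [hzψ, he] at h
          exact absurd ((min_le_right _ _).trans_lt h) (lt_irrefl _)
      have hee := Real.exp_le_exp.mpr hz0
      rw [Real.exp_zero] at hee
      nlinarith
  have h2 : -(b + 1) ≤ z * a := by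
    rcases le_or_gt 0 z with h | h
    · nlinarith
    · have hψz : ψ ≤ z := by
        rw [hzψ]
        rcases le_or_gt ψ (n:ℝ) with h' | h'
        · rw [min_eq_right h']; exact le_max_right _ _
        · exfalso
          have hn0 : (0:ℝ) ≤ n := Nat.cast_nonneg n
          have hmin : (0:ℝ) ≤ min (n:ℝ) ψ := le_min hn0 (by linarith)
          rw [hzψ] at h
          nlinarith [le_max_right (-(n:ℝ)) (min (n:ℝ) ψ)]
      have key : -(b + δ) ≤ (a + δ) * ψ := by
        have hx := xlog_le (a + δ) (b + δ) (by linarith) (by linarith)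
        have hlog : Real.log ((b+δ)/(a+δ)) = - ψ := by
          rw [hψdef, ← Real.log_inv]
          congr 1
          rw [inv_div]
        rw [hlog] at hx
        nlinarith
      have hψ0 : ψ < 0 := hψz.trans_lt h
      have hψa : ψ * (a + δ) ≤ ψ * a := by nlinarith
      nlinarith [mul_le_mul_of_nonneg_right hψz ha]
  nlinarith

lemma clamp_tendsto {ψ : ℕ → ℝ} {L : ℝ} (h : Tendsto ψ atTop (𝓝 L)) :
    Tendsto (fun n : ℕ => max (-(n:ℝ)) (min (n:ℝ) (ψ n))) atTop (𝓝 L) := by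
  refine Tendsto.congr' ?_ h
  have h1 : ∀ᶠ n : ℕ in atTop, ψ n ∈ Set.Ioo (L - 1) (L + 1) :=
    h (Ioo_mem_nhds (by linarith) (by linarith))
  have h2 : ∀ᶠ n : ℕ in atTop, |L| + 1 ≤ (n:ℝ) :=
    tendsto_natCast_atTop_atTop.eventually_ge_atTop (|L| + 1)
  filter_upwards [h1, h2] with n hn1 hn2
  have hmin : min (n:ℝ) (ψ n) = ψ n := by
    apply min_eq_right
    have := hn1.2
    have := le_abs_self L
    linarith
  rw [hmin]
  symm
  apply max_eq_right
  have := hn1.1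
  have := neg_abs_le L
  linarith

lemma clamp_tendsto_atTop {ψ : ℕ → ℝ} (h : Tendsto ψ atTop atTop) :
    Tendsto (fun n : ℕ => max (-(n:ℝ)) (min (n:ℝ) (ψ n))) atTop atTop := by
  rw [tendsto_atTop]
  intro M
  filter_upwards [h.eventually_ge_atTop M, tendsto_natCast_atTop_atTop.eventually_ge_atTop M]
    with n h1 h2
  exact le_max_of_le_right (le_min h2 h1)

lemma clamp_tendsto_atBot {ψ : ℕ → ℝ} (h : Tendsto ψ atTop atBot) :
    Tendsto (fun n : ℕ => max (-(n:ℝ)) (min (n:ℝ) (ψ n))) atTop atBot := by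
  rw [tendsto_atBot]
  intro M
  filter_upwards [h.eventually_le_atBot M, tendsto_natCast_atTop_atTop.eventually_ge_atTop (-M)]
    with n h1 h2
  exact max_le (by linarith) ((min_le_right _ _).trans h1)

lemma g_tendsto (a b : ℝ) (ha : 0 ≤ a) (hb : 0 ≤ b) (c : ℝ) (hc : 0 ≤ c) :
    Tendsto (fun n : ℕ => ENNReal.ofReal (phiN n a b * a - b * (Real.exp (phiN n a b) - 1) + c))
      atTop (𝓝 (sCostE a b + ENNReal.ofReal c)) := by
  have hδ : Tendsto (fun n : ℕ => 1/((n:ℝ)+1)) atTop (𝓝 0) :=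
    tendsto_one_div_add_atTop_nhds_zero_nat
  have hδpos : ∀ n : ℕ, 0 < 1/((n:ℝ)+1) := fun n => by positivity
  rcases eq_or_lt_of_le hb with rfl | hb0
  · rcases eq_or_lt_of_le ha with rfl | ha0
    · -- a = 0, b = 0
      have hφ : ∀ n : ℕ, phiN n 0 0 = 0 := by
        intro n
        unfold phiN
        rw [zero_add, div_self (hδpos n).ne', Real.log_one,
          min_eq_right (Nat.cast_nonneg n : (0:ℝ) ≤ n),
          max_eq_right (by simp [(Nat.cast_nonneg n : (0:ℝ) ≤ n)])]
      have hS : sCostE 0 0 = 0 := by simp [sCostE]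
      rw [hS, zero_add]
      apply tendsto_const_nhds.congr
      intro n
      rw [hφ n]
      norm_num
    · -- b = 0, a > 0
      have harg : Tendsto (fun n : ℕ => (a + 1/((n:ℝ)+1)) / ((0:ℝ) + 1/((n:ℝ)+1))) atTop atTop := by
        have heq : ∀ n : ℕ, (a + 1/((n:ℝ)+1)) / ((0:ℝ) + 1/((n:ℝ)+1)) = a * ((n:ℝ)+1) + 1 := by
          intro n
          rw [zero_add]
          field_simp
        rw [show (fun n : ℕ => (a + 1/((n:ℝ)+1)) / ((0:ℝ) + 1/((n:ℝ)+1)))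
            = fun n : ℕ => a * ((n:ℝ)+1) + 1 from funext heq]
        apply tendsto_atTop_add_const_right
        exact Tendsto.const_mul_atTop ha0
          ((tendsto_natCast_atTop_atTop (R := ℝ)).atTop_add tendsto_const_nhds)
      have hφ : Tendsto (fun n : ℕ => phiN n a 0) atTop atTop :=
        clamp_tendsto_atTop (Real.tendsto_log_atTop.comp harg)
      have hval : Tendsto (fun n : ℕ => phiN n a 0 * a - 0 * (Real.exp (phiN n a 0) - 1) + c)
          atTop atTop := by
        simp only [zero_mul, sub_zero]
        exact tendsto_atTop_add_const_right _ c (hφ.atTop_mul_const ha0)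
      have hS : sCostE a 0 = ⊤ := by simp [sCostE, ha0.ne']
      rw [hS, top_add]
      exact ENNReal.tendsto_ofReal_atTop.comp hval
  · rcases eq_or_lt_of_le ha with rfl | ha0
    · -- b > 0, a = 0
      have harg : Tendsto (fun n : ℕ => ((0:ℝ) + 1/((n:ℝ)+1)) / (b + 1/((n:ℝ)+1))) atTop
          (𝓝[≠] 0) := by
        apply tendsto_nhdsWithin_of_tendsto_nhds_of_eventually_within
        · have h := Tendsto.div ((tendsto_const_nhds (x := (0:ℝ)) (f := atTop (α := ℕ))).add hδ)
            ((tendsto_const_nhds (x := b) (f := atTop (α := ℕ))).add hδ) (by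
              rw [add_zero]; exact hb0.ne')
          simpa [Pi.div_def] using h
        · refine Eventually.of_forall fun n => ?_
          have h1 := hδpos n
          have h2 : 0 < ((0:ℝ) + 1/((n:ℝ)+1)) / (b + 1/((n:ℝ)+1)) :=
            div_pos (by linarith) (by linarith)
          exact h2.ne'
      have hφ : Tendsto (fun n : ℕ => phiN n 0 b) atTop atBot :=
        clamp_tendsto_atBot (Real.tendsto_log_nhdsNE_zero.comp harg)
      have hexp : Tendsto (fun n : ℕ => Real.exp (phiN n 0 b)) atTop (𝓝 0) :=
        Real.tendsto_exp_atBot.comp hφ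
      have hval : Tendsto (fun n : ℕ => phiN n 0 b * 0 - b * (Real.exp (phiN n 0 b) - 1) + c)
          atTop (𝓝 (b + c)) := by
        have h := (((hexp.sub (tendsto_const_nhds (x := (1:ℝ)))).const_mul b).neg).add
          (tendsto_const_nhds (x := c) (f := atTop (α := ℕ)))
        have heq : -(b * ((0:ℝ) - 1)) + c = b + c := by ring
        rw [heq] at h
        refine h.congr fun n => ?_
        ring
      have hS : sCostE 0 b = ENNReal.ofReal b := by simp [sCostE, hb0.ne']
      rw [hS, ← ENNReal.ofReal_add hb hc]
      exact ENNReal.tendsto_ofReal hval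
    · -- b > 0, a > 0
      have harg : Tendsto (fun n : ℕ => (a + 1/((n:ℝ)+1)) / (b + 1/((n:ℝ)+1))) atTop
          (𝓝 (a / b)) := by
        have h := Tendsto.div ((tendsto_const_nhds (x := a) (f := atTop (α := ℕ))).add hδ)
          ((tendsto_const_nhds (x := b) (f := atTop (α := ℕ))).add hδ) (by
            rw [add_zero]; exact hb0.ne')
        simpa [Pi.div_def] using h
      have hab : (0:ℝ) < a / b := div_pos ha0 hb0
      have hψ : Tendsto (fun n : ℕ => Real.log ((a + 1/((n:ℝ)+1)) / (b + 1/((n:ℝ)+1)))) atTop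
          (𝓝 (Real.log (a/b))) :=
        ((Real.continuousAt_log hab.ne').tendsto).comp harg
      have hφ : Tendsto (fun n : ℕ => phiN n a b) atTop (𝓝 (Real.log (a/b))) :=
        clamp_tendsto hψ
      have hval : Tendsto (fun n : ℕ => phiN n a b * a - b * (Real.exp (phiN n a b) - 1) + c)
          atTop (𝓝 (a * Real.log (a/b) - a + b + c)) := by
        have hexp : Tendsto (fun n : ℕ => Real.exp (phiN n a b)) atTop (𝓝 (a/b)) := by
          have := (Real.continuous_exp.tendsto (Real.log (a/b))).comp hφ
          rwa [Real.exp_log hab] at this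
        have h := ((hφ.mul (tendsto_const_nhds (x := a))).sub
          ((tendsto_const_nhds (x := b)).mul (hexp.sub (tendsto_const_nhds (x := (1:ℝ)))))).add
          (tendsto_const_nhds (x := c) (f := atTop (α := ℕ)))
        have heq : Real.log (a/b) * a - b * (a/b - 1) + c = a * Real.log (a/b) - a + b + c := by
          field_simp
          ring
        rwa [heq] at h
      have hS : sCostE a b = ENNReal.ofReal (a * Real.log (a/b) - a + b) := by
        simp [sCostE, hb0.ne']
      have hnn : 0 ≤ a * Real.log (a/b) - a + b := sexpr_nonneg a b ha hb0
      rw [hS, ← ENNReal.ofReal_add hnn hc]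
      exact ENNReal.tendsto_ofReal hval


lemma main_meas (T : ℝ) (u j : ℝ → ℝ) (hmu : Measurable u) (hmj : Measurable j)
    (hu : IntegrableOn u (Icc 0 T)) (hj : IntegrableOn j (Icc 0 T))
    (hu0 : ∀ t, 0 ≤ u t) (hj0 : ∀ t, 0 ≤ j t) :
    (⨆ ζ : {f : ℝ → ℝ // ContinuousOn f (Icc 0 T)},
        (((∫ t in Icc (0:ℝ) T, (ζ.1 t * j t - u t * (Real.exp (ζ.1 t) - 1)) : ℝ)) : EReal))
      = ((∫⁻ t in Icc (0:ℝ) T, sCostE (j t) (u t)) : ℝ≥0∞) := by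
  haveI : IsFiniteMeasure (volume.restrict (Icc (0:ℝ) T)) :=
    ⟨by rw [Measure.restrict_apply_univ]; exact isCompact_Icc.measure_lt_top⟩
  have hA : (⨆ ζ : {f : ℝ → ℝ // ContinuousOn f (Icc 0 T)},
        (((∫ t in Icc (0:ℝ) T, (ζ.1 t * j t - u t * (Real.exp (ζ.1 t) - 1)) : ℝ)) : EReal))
      ≤ ((∫⁻ t in Icc (0:ℝ) T, sCostE (j t) (u t)) : ℝ≥0∞) :=
    iSup_le fun ζ => stepA T u j hu hj (fun t _ => hu0 t) (fun t _ => hj0 t) ζ.1 ζ.2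
  by_cases htop : (⨆ ζ : {f : ℝ → ℝ // ContinuousOn f (Icc 0 T)},
        (((∫ t in Icc (0:ℝ) T, (ζ.1 t * j t - u t * (Real.exp (ζ.1 t) - 1)) : ℝ)) : EReal)) = ⊤
  · rw [htop] at hA ⊢
    exact (top_le_iff.mp hA).symm
  · have h0 : (0:EReal) ≤ (⨆ ζ : {f : ℝ → ℝ // ContinuousOn f (Icc 0 T)},
        (((∫ t in Icc (0:ℝ) T, (ζ.1 t * j t - u t * (Real.exp (ζ.1 t) - 1)) : ℝ)) : EReal)) := by
      refine le_iSup_of_le ⟨(fun _ => 0), continuousOn_const⟩ ?_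
      have : (fun t => (0:ℝ) * j t - u t * (Real.exp 0 - 1)) = fun _ => (0:ℝ) := by
        funext t; simp
      rw [this, integral_zero]
      simp
    have hbot : (⨆ ζ : {f : ℝ → ℝ // ContinuousOn f (Icc 0 T)},
        (((∫ t in Icc (0:ℝ) T, (ζ.1 t * j t - u t * (Real.exp (ζ.1 t) - 1)) : ℝ)) : EReal)) ≠ ⊥ :=
      fun h => by rw [h] at h0; exact absurd h0 (by simp)
    obtain ⟨M, hM⟩ : ∃ M : ℝ, (⨆ ζ : {f : ℝ → ℝ // ContinuousOn f (Icc 0 T)},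
        (((∫ t in Icc (0:ℝ) T, (ζ.1 t * j t - u t * (Real.exp (ζ.1 t) - 1)) : ℝ)) : EReal))
        = (M : EReal) :=
      ⟨_, (EReal.coe_toReal htop hbot).symm⟩
    have hM0 : 0 ≤ M := by
      rw [hM] at h0
      exact_mod_cast h0
    set φ : ℕ → ℝ → ℝ := fun n t => phiN n (j t) (u t) with hφdef
    have hφm : ∀ n, Measurable (φ n) := by
      intro n
      apply Measurable.max measurable_const
      apply Measurable.min measurable_const
      exact (Real.measurable_log.comp ((hmj.add_const _).div (hmu.add_const _)))
    have hφb : ∀ n t, |φ n t| ≤ (n:ℝ) := fun n t => clamp_abs_le (Nat.cast_nonneg n)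
    set g : ℕ → ℝ → ℝ := fun n t => φ n t * j t - u t * (Real.exp (φ n t) - 1) with hgdef
    have hgi : ∀ n, Integrable (g n) (volume.restrict (Icc (0:ℝ) T)) := fun n =>
      integrable_F hu hj (hφm n).aemeasurable (Eventually.of_forall (hφb n))
    have hgM : ∀ n, ∫ t in Icc (0:ℝ) T, g n t ≤ M := by
      intro n
      have h := stepLusin T u j hu hj (φ n) (hφm n) (Nat.cast_nonneg n) (hφb n)
      rw [hM] at h
      exact_mod_cast h
    set c : ℝ → ℝ := fun t => u t + j t + 2 with hcdef
    have hci : Integrable c (volume.restrict (Icc (0:ℝ) T)) := (hu.add hj).add (integrable_const 2)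
    have hcnn : ∀ t, 0 ≤ c t := fun t => by
      have := hu0 t; have := hj0 t
      simp only [hcdef]; linarith
    set C := ∫ t in Icc (0:ℝ) T, c t with hCdef
    have hC0 : 0 ≤ C := integral_nonneg hcnn
    have hglow : ∀ n t, -(c t) ≤ g n t := fun n t => g_lower n (j t) (u t) (hj0 t) (hu0 t)
    have hkey : ∀ n, ∫⁻ t in Icc (0:ℝ) T, ENNReal.ofReal (g n t + c t)
        = ENNReal.ofReal ((∫ t in Icc (0:ℝ) T, g n t) + C) := by
      intro n
      rw [← integral_add (hgi n) hci]
      exact (ofReal_integral_eq_lintegral_ofReal ((hgi n).add hci)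
        (Eventually.of_forall fun t => by
          simp only [Pi.add_apply, Pi.zero_apply]
          linarith [hglow n t])).symm
    have hmeas_h : ∀ n, AEMeasurable (fun t => ENNReal.ofReal (g n t + c t))
        (volume.restrict (Icc (0:ℝ) T)) := by
      intro n
      apply ENNReal.measurable_ofReal.comp_aemeasurable
      exact (((hφm n).mul hmj).sub
        (hmu.mul ((Real.measurable_exp.comp (hφm n)).sub measurable_const))).add
        ((hmu.add hmj).add_const _) |>.aemeasurable
    have hpt : ∀ t, Tendsto (fun n => ENNReal.ofReal (g n t + c t)) atTop
        (𝓝 (sCostE (j t) (u t) + ENNReal.ofReal (c t))) := fun t =>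
      g_tendsto (j t) (u t) (hj0 t) (hu0 t) (c t) (hcnn t)
    have h1 : ∫⁻ t in Icc (0:ℝ) T, (sCostE (j t) (u t) + ENNReal.ofReal (c t)) ≤
        Filter.atTop.liminf (fun n => ∫⁻ t in Icc (0:ℝ) T, ENNReal.ofReal (g n t + c t)) := by
      refine le_trans (le_of_eq (lintegral_congr fun t => ?_)) (lintegral_liminf_le' hmeas_h)
      exact ((hpt t).liminf_eq).symm
    have h2 : Filter.atTop.liminf (fun n => ∫⁻ t in Icc (0:ℝ) T, ENNReal.ofReal (g n t + c t))
        ≤ ENNReal.ofReal (M + C) := by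
      refine liminf_le_of_frequently_le' (Frequently.of_forall fun n => ?_)
      rw [hkey n]
      exact ENNReal.ofReal_le_ofReal (by linarith [hgM n])
    have hcm : Measurable (fun t => ENNReal.ofReal (c t)) :=
      ENNReal.measurable_ofReal.comp ((hmu.add hmj).add_const 2)
    have h3a : ∫⁻ t in Icc (0:ℝ) T, (sCostE (j t) (u t) + ENNReal.ofReal (c t))
        = (∫⁻ t in Icc (0:ℝ) T, sCostE (j t) (u t)) + ∫⁻ t in Icc (0:ℝ) T,
          ENNReal.ofReal (c t) := lintegral_add_right _ hcm
    have h3b : ∫⁻ t in Icc (0:ℝ) T, ENNReal.ofReal (c t) = ENNReal.ofReal C :=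
      (ofReal_integral_eq_lintegral_ofReal hci (Eventually.of_forall hcnn)).symm
    have h3 : ∫⁻ t in Icc (0:ℝ) T, (sCostE (j t) (u t) + ENNReal.ofReal (c t))
        = (∫⁻ t in Icc (0:ℝ) T, sCostE (j t) (u t)) + ENNReal.ofReal C := by
      rw [h3a, h3b]
    have hfin : (∫⁻ t in Icc (0:ℝ) T, sCostE (j t) (u t)) ≤ ENNReal.ofReal M := by
      have h4 := (h3 ▸ h1).trans h2
      rw [ENNReal.ofReal_add hM0 hC0] at h4
      exact (ENNReal.add_le_add_iff_right ENNReal.ofReal_ne_top).mp h4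
    refine le_antisymm hA ?_
    rw [hM]
    calc ((∫⁻ t in Icc (0:ℝ) T, sCostE (j t) (u t) : ℝ≥0∞) : EReal)
        ≤ ((ENNReal.ofReal M : ℝ≥0∞) : EReal) := EReal.coe_ennreal_le_coe_ennreal_iff.mpr hfin
      _ = ((max M 0 : ℝ) : EReal) := EReal.coe_ennreal_ofReal
      _ = (M : EReal) := by rw [max_eq_left hM0]


/-- Dual formulation of the entropic cost for `L¹` densities: the supremum (in `[0,∞]`,
here realised inside `EReal`) over continuous `ζ` of `∫₀ᵀ (ζ j − u (e^ζ − 1)) dt` equals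
`∫₀ᵀ s(j(t)∣u(t)) dt`; in particular the supremum is infinite unless `j(t) = 0` for
almost every `t` with `u(t) = 0`. -/
theorem entropic_dual_L1 (T : ℝ) (hT : 0 < T) (u j : ℝ → ℝ)
    (hu : IntegrableOn u (Icc 0 T)) (hj : IntegrableOn j (Icc 0 T))
    (hu0 : ∀ t ∈ Icc (0:ℝ) T, 0 ≤ u t) (hj0 : ∀ t ∈ Icc (0:ℝ) T, 0 ≤ j t) :
    (⨆ ζ : {f : ℝ → ℝ // ContinuousOn f (Icc 0 T)},
        (((∫ t in Icc (0:ℝ) T, (ζ.1 t * j t - u t * (Real.exp (ζ.1 t) - 1)) : ℝ)) : EReal))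
      = ((∫⁻ t in Icc (0:ℝ) T, sCostE (j t) (u t)) : ℝ≥0∞) ∧
    (¬ (∀ᵐ t ∂(volume.restrict (Icc (0:ℝ) T)), u t = 0 → j t = 0) →
      (⨆ ζ : {f : ℝ → ℝ // ContinuousOn f (Icc 0 T)},
        (((∫ t in Icc (0:ℝ) T, (ζ.1 t * j t - u t * (Real.exp (ζ.1 t) - 1)) : ℝ)) : EReal)) = ⊤) := by
  obtain ⟨u₀, hu₀m, hu₀e⟩ := hu.1.aemeasurable
  obtain ⟨j₀, hj₀m, hj₀e⟩ := hj.1.aemeasurable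
  set u' : ℝ → ℝ := fun t => max (u₀ t) 0 with hu'def
  set j' : ℝ → ℝ := fun t => max (j₀ t) 0 with hj'def
  have hmu' : Measurable u' := hu₀m.max measurable_const
  have hmj' : Measurable j' := hj₀m.max measurable_const
  have heq_u : u =ᵐ[volume.restrict (Icc (0:ℝ) T)] u' := by
    filter_upwards [hu₀e, ae_restrict_mem measurableSet_Icc] with t h1 h2
    rw [hu'def]
    simp only
    rw [← h1, max_eq_left (hu0 t h2)]
  have heq_j : j =ᵐ[volume.restrict (Icc (0:ℝ) T)] j' := by
    filter_upwards [hj₀e, ae_restrict_mem measurableSet_Icc] with t h1 h2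
    rw [hj'def]
    simp only
    rw [← h1, max_eq_left (hj0 t h2)]
  have hu' : IntegrableOn u' (Icc 0 T) := hu.congr heq_u
  have hj' : IntegrableOn j' (Icc 0 T) := hj.congr heq_j
  have hu'0 : ∀ t, 0 ≤ u' t := fun t => le_max_right _ _
  have hj'0 : ∀ t, 0 ≤ j' t := fun t => le_max_right _ _
  have hsup_eq : (⨆ ζ : {f : ℝ → ℝ // ContinuousOn f (Icc 0 T)},
        (((∫ t in Icc (0:ℝ) T, (ζ.1 t * j t - u t * (Real.exp (ζ.1 t) - 1)) : ℝ)) : EReal))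
      = (⨆ ζ : {f : ℝ → ℝ // ContinuousOn f (Icc 0 T)},
        (((∫ t in Icc (0:ℝ) T, (ζ.1 t * j' t - u' t * (Real.exp (ζ.1 t) - 1)) : ℝ)) : EReal)) := by
    refine iSup_congr fun ζ => ?_
    congr 1
    refine integral_congr_ae ?_
    filter_upwards [heq_u, heq_j] with t h1 h2
    rw [h1, h2]
  have hlin_eq : (∫⁻ t in Icc (0:ℝ) T, sCostE (j t) (u t))
      = ∫⁻ t in Icc (0:ℝ) T, sCostE (j' t) (u' t) := by
    refine lintegral_congr_ae ?_
    filter_upwards [heq_u, heq_j] with t h1 h2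
    rw [h1, h2]
  have hpart1 : (⨆ ζ : {f : ℝ → ℝ // ContinuousOn f (Icc 0 T)},
        (((∫ t in Icc (0:ℝ) T, (ζ.1 t * j t - u t * (Real.exp (ζ.1 t) - 1)) : ℝ)) : EReal))
      = ((∫⁻ t in Icc (0:ℝ) T, sCostE (j t) (u t)) : ℝ≥0∞) := by
    rw [hsup_eq, hlin_eq]
    exact main_meas T u' j' hmu' hmj' hu' hj' hu'0 hj'0
  refine ⟨hpart1, fun hne => ?_⟩
  have hne' : ¬ (∀ᵐ t ∂(volume.restrict (Icc (0:ℝ) T)), u' t = 0 → j' t = 0) := by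
    intro hcl
    apply hne
    filter_upwards [hcl, heq_u, heq_j] with t h1 h2 h3
    rw [h2, h3]
    exact h1
  rw [ae_iff] at hne'
  set A : Set ℝ := {t | ¬ (u' t = 0 → j' t = 0)} with hAdef
  have hAm : MeasurableSet A := by
    have : A = u' ⁻¹' {0} ∩ (j' ⁻¹' {0})ᶜ := by
      ext t
      simp [hAdef, _root_.not_imp]
    rw [this]
    exact (hmu' (measurableSet_singleton 0)).inter ((hmj' (measurableSet_singleton 0)).compl)
  have htopA : ∫⁻ t in Icc (0:ℝ) T, sCostE (j' t) (u' t) = ⊤ := by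
    refine top_le_iff.mp ?_
    calc (⊤ : ℝ≥0∞) = ⊤ * (volume.restrict (Icc (0:ℝ) T)) A :=
          (ENNReal.top_mul hne').symm
      _ = ∫⁻ _ in A, ⊤ ∂(volume.restrict (Icc (0:ℝ) T)) := (setLIntegral_const _ _).symm
      _ = ∫⁻ t in A, sCostE (j' t) (u' t) ∂(volume.restrict (Icc (0:ℝ) T)) := by
          refine setLIntegral_congr_fun hAm (fun t ht => ?_)
          have ht' : u' t = 0 ∧ ¬ j' t = 0 := _root_.not_imp.mp ht
          simp [sCostE, ht'.1, ht'.2]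
      _ ≤ ∫⁻ t in Icc (0:ℝ) T, sCostE (j' t) (u' t) := setLIntegral_le_lintegral _ _
  rw [hpart1, hlin_eq, htopA]
  rfl
end

section
/- Let T > 0 and let u and j be finite nonnegative Borel measures on [0,T]. Then sup_{ζ ∈ C([0,T])} ( ∫_{[0,T]} ζ(t) j(dt) − ∫_{[0,T]} (e^{ζ(t)} − 1) u(dt) ) equals ∫_{[0,T]} s( (dj/du)(t) ∣ 1 ) u(dt) if j is absolutely continuous with respect to u (dj/du denoting the Radon–Nikodym derivative), and equals +∞ otherwise. -/
open MeasureTheory Set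
open scoped ENNReal

open Filter
open scoped Topology


lemma sOne_zero : sOne 0 = 1 := by simp [sOne]

lemma continuous_sOne : Continuous sOne := by
  have := Real.continuous_mul_log
  unfold sOne
  fun_prop

lemma sOne_nonneg {p : ℝ} (hp : 0 ≤ p) : 0 ≤ sOne p := by
  rcases eq_or_lt_of_le hp with h | h
  · simp [← h, sOne]
  · have h1 : Real.log p⁻¹ ≤ p⁻¹ - 1 := Real.log_le_sub_one_of_pos (by positivity)
    rw [Real.log_inv] at h1
    have h2 : p * (1 - p⁻¹) ≤ p * Real.log p := by
      apply mul_le_mul_of_nonneg_left _ hp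
      linarith
    have h3 : p * (1 - p⁻¹) = p - 1 := by field_simp
    unfold sOne; nlinarith

lemma young_ineq {p x : ℝ} (hp : 0 ≤ p) : x * p - (Real.exp x - 1) ≤ sOne p := by
  rcases eq_or_lt_of_le hp with h | h
  · rw [← h]; simp [sOne]; positivity
  · have h1 : (x - Real.log p) + 1 ≤ Real.exp (x - Real.log p) := Real.add_one_le_exp _
    have h2 : Real.exp (x - Real.log p) * p = Real.exp x := by
      rw [Real.exp_sub, Real.exp_log h]; field_simp
    have h3 : ((x - Real.log p) + 1) * p ≤ Real.exp (x - Real.log p) * p :=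
      mul_le_mul_of_nonneg_right h1 hp
    unfold sOne; nlinarith

lemma exp_sub_exp_le {a b B : ℝ} (ha : a ≤ B) (hb : b ≤ B) :
    |Real.exp a - Real.exp b| ≤ Real.exp B * |a - b| := by
  wlog h : b ≤ a generalizing a b
  · rw [abs_sub_comm, abs_sub_comm a b]; exact this hb ha (le_of_not_ge h)
  rw [abs_of_nonneg (sub_nonneg.2 (Real.exp_le_exp.2 h)), abs_of_nonneg (sub_nonneg.2 h)]
  have h1 : (b - a) + 1 ≤ Real.exp (b - a) := Real.add_one_le_exp _
  have h2 : Real.exp a ≤ Real.exp B := Real.exp_le_exp.2 ha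
  have h3 : Real.exp (b - a) * Real.exp a = Real.exp b := by rw [← Real.exp_add]; ring_nf
  have h4 : ((b - a) + 1) * Real.exp a ≤ Real.exp (b - a) * Real.exp a :=
    mul_le_mul_of_nonneg_right h1 (Real.exp_pos a).le
  nlinarith [Real.exp_pos a, mul_le_mul_of_nonneg_left h2 (sub_nonneg.2 h)]

/-- clamp to `[c⁻¹, c]` -/
noncomputable def clampc (c p : ℝ) : ℝ := max (min p c) c⁻¹

lemma clampc_pos {c p : ℝ} (hc : 1 ≤ c) : 0 < clampc c p :=
  lt_of_lt_of_le (by positivity) (le_max_right _ _)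

lemma clampc_le {c p : ℝ} (hc : 1 ≤ c) : clampc c p ≤ c :=
  max_le (min_le_right _ _) ((inv_le_one_of_one_le₀ hc).trans hc)

lemma sOne_clampc_le {c p : ℝ} (hc : 1 ≤ c) (hp : 0 ≤ p) :
    sOne (clampc c p) ≤ Real.log (clampc c p) * p - (clampc c p - 1) := by
  have hq0 : 0 < clampc c p := clampc_pos hc
  have key : clampc c p * Real.log (clampc c p) ≤ p * Real.log (clampc c p) := by
    rcases lt_trichotomy p (clampc c p) with h | h | h
    · have hqc : clampc c p = c⁻¹ := by
        rcases max_choice (min p c) c⁻¹ with h1 | h1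
        · exfalso
          have h2 := min_le_left p c
          rw [clampc, h1] at h
          linarith
        · rw [clampc, h1]
      have hlog : Real.log (clampc c p) ≤ 0 := by
        rw [hqc, Real.log_inv]; simpa using Real.log_nonneg hc
      nlinarith
    · rw [← h]
    · have hqc : clampc c p = c := by
        have hle : min p c ≤ clampc c p := le_max_left _ _
        rcases min_choice p c with h2 | h2
        · exfalso; rw [h2] at hle; linarith
        · rw [clampc, h2, max_eq_left ((inv_le_one_of_one_le₀ hc).trans hc)]
      have hlog : 0 ≤ Real.log (clampc c p) := by
        rw [hqc]; exact Real.log_nonneg hc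
      nlinarith
  unfold sOne; nlinarith

lemma tendsto_clampc {p : ℝ} (hp : 0 ≤ p) :
    Tendsto (fun n : ℕ => clampc ((n : ℝ) + 1) p) atTop (𝓝 p) := by
  have hmin : ∀ᶠ n : ℕ in atTop, min p ((n : ℝ) + 1) = p := by
    filter_upwards [eventually_ge_atTop ⌈p⌉₊] with n hn
    have h2 : (⌈p⌉₊ : ℝ) ≤ n := Nat.cast_le.2 hn
    exact min_eq_left ((Nat.le_ceil p).trans (by linarith))
  have hsq : Tendsto (fun n : ℕ => p + ((n : ℝ) + 1)⁻¹) atTop (𝓝 p) := by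
    have : Tendsto (fun n : ℕ => ((n : ℝ) + 1)⁻¹) atTop (𝓝 0) := by
      apply tendsto_inv_atTop_zero.comp
      exact tendsto_atTop_add_const_right _ _ tendsto_natCast_atTop_atTop
    simpa using tendsto_const_nhds.add this
  apply tendsto_of_tendsto_of_tendsto_of_le_of_le' tendsto_const_nhds hsq
  · filter_upwards [hmin] with n hn
    rw [clampc, hn]; exact le_max_left _ _
  · filter_upwards [hmin] with n hn
    rw [clampc, hn]
    have h3 : (0:ℝ) ≤ ((n:ℝ)+1)⁻¹ := by positivity
    exact max_le (by linarith) (by linarith)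

section helpers
variable {α : Type*} [MeasurableSpace α] [TopologicalSpace α] [OpensMeasurableSpace α]
  {μ : Measure α} [IsFiniteMeasure μ]

lemma integrable_of_bounded {f : α → ℝ} (hf : AEStronglyMeasurable f μ) {C : ℝ}
    (h : ∀ x, |f x| ≤ C) : Integrable f μ :=
  Integrable.mono' (integrable_const C) hf (Filter.Eventually.of_forall h)

lemma Continuous.integrable_fin [CompactSpace α] {f : α → ℝ} (hf : Continuous f) :
    Integrable f μ := by
  obtain ⟨C, hC⟩ := isCompact_univ.exists_bound_of_continuousOn hf.continuousOn
  exact integrable_of_bounded hf.aestronglyMeasurable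
    (fun x => by simpa [Real.norm_eq_abs] using hC x (mem_univ x))

end helpers

lemma upper_bound {α : Type*} [MeasurableSpace α] [TopologicalSpace α] [OpensMeasurableSpace α]
    [CompactSpace α] (u j : Measure α) [IsFiniteMeasure u] [IsFiniteMeasure j]
    (hac : j ≪ u) (ζ : C(α, ℝ)) :
    ((∫ t, ζ t ∂j - ∫ t, (Real.exp (ζ t) - 1) ∂u : ℝ) : EReal)
      ≤ ((∫⁻ t, ENNReal.ofReal (sOne ((j.rnDeriv u t).toReal)) ∂u : ℝ≥0∞) : EReal) := by
  set p : α → ℝ := fun t => (j.rnDeriv u t).toReal with hp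
  have hpnn : ∀ t, 0 ≤ p t := fun t => ENNReal.toReal_nonneg
  have hpint : Integrable p u := Measure.integrable_toReal_rnDeriv
  obtain ⟨C, hC⟩ := isCompact_univ.exists_bound_of_continuousOn ζ.continuous.continuousOn
  have heint : Integrable (fun t => Real.exp (ζ t) - 1) u :=
    ((Real.continuous_exp.comp ζ.continuous).sub continuous_const).integrable_fin
  have hpζint : Integrable (fun t => ζ t * p t) u :=
    hpint.bdd_mul ζ.continuous.aestronglyMeasurable (c := C) (Filter.Eventually.of_forall fun x => hC x (mem_univ x))
  have h1 : ∫ t, ζ t ∂j = ∫ t, ζ t * p t ∂u := by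
    rw [← MeasureTheory.integral_rnDeriv_smul hac]
    simp_rw [smul_eq_mul, mul_comm]; rfl
  set g : α → ℝ := fun t => ζ t * p t - (Real.exp (ζ t) - 1) with hg
  have hgint : Integrable g u := hpζint.sub heint
  have h2 : ∫ t, ζ t ∂j - ∫ t, (Real.exp (ζ t) - 1) ∂u = ∫ t, g t ∂u := by
    rw [h1, ← integral_sub hpζint heint]
  have hptwise : ∀ t, g t ≤ sOne (p t) := fun t => young_ineq (hpnn t)
  set I := ∫⁻ t, ENNReal.ofReal (sOne (p t)) ∂u with hI
  rcases eq_or_ne I ⊤ with hIt | hIt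
  · rw [hIt]; simp
  · have hle : ∫ t, g t ∂u ≤ I.toReal := by
      calc ∫ t, g t ∂u ≤ ∫ t, max (g t) 0 ∂u :=
            integral_mono hgint hgint.pos_part (fun t => le_max_left _ _)
        _ = (∫⁻ t, ENNReal.ofReal (max (g t) 0) ∂u).toReal :=
            integral_eq_lintegral_of_nonneg_ae (Filter.Eventually.of_forall fun t => le_max_right _ _)
              (hgint.pos_part.aestronglyMeasurable)
        _ ≤ I.toReal := by
            apply ENNReal.toReal_mono hIt
            exact lintegral_mono fun t =>
              ENNReal.ofReal_le_ofReal (max_le (hptwise t) (sOne_nonneg (hpnn t)))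
    have hcoe : ((I.toReal : ℝ) : EReal) = (I : EReal) := by
      rw [← EReal.toReal_coe_ennreal]
      exact EReal.coe_toReal (by simp [hIt]) (by simp)
    rw [h2, ← hcoe]
    exact_mod_cast hle

lemma measurable_clampc {c : ℝ} : Measurable (clampc c) := by
  have : clampc c = fun p => max (min p c) c⁻¹ := rfl
  rw [this]
  exact (measurable_id.min measurable_const).max measurable_const

lemma abs_log_clampc_le {c p : ℝ} (hc : 1 ≤ c) : |Real.log (clampc c p)| ≤ Real.log c := by
  have h0 : (0:ℝ) < c := by linarith
  have hq0 : 0 < clampc c p := clampc_pos hc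
  rw [abs_le]
  constructor
  · rw [← Real.log_inv]
    exact (Real.log_le_log_iff (by positivity) hq0).2 (le_max_right _ _)
  · exact (Real.log_le_log_iff hq0 h0).2 (clampc_le hc)

lemma sOne_le_bound {c x : ℝ} (hc : 1 ≤ c) (hx0 : 0 < x) (hxc : x ≤ c) :
    sOne x ≤ c * Real.log c + 1 := by
  have hlogc : 0 ≤ Real.log c := Real.log_nonneg hc
  have h1 : x * Real.log x ≤ c * Real.log c := by
    rcases le_total x 1 with h | h
    · have : Real.log x ≤ 0 := Real.log_nonpos hx0.le h
      nlinarith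
    · have h2 : Real.log x ≤ Real.log c := (Real.log_le_log_iff hx0 (by linarith)).2 hxc
      have h3 : 0 ≤ Real.log x := Real.log_nonneg h
      nlinarith
  unfold sOne; nlinarith

/-- Approximation of a bounded measurable `φ` by a continuous function, preserving
the value of the dual functional up to `ε`. -/
lemma approx_lemma (T : ℝ) (u j : Measure (Set.Icc (0:ℝ) T)) [IsFiniteMeasure u]
    [IsFiniteMeasure j] {φ : Set.Icc (0:ℝ) T → ℝ} (hφ : Measurable φ) {B : ℝ} (hB : 0 ≤ B)
    (hbd : ∀ t, |φ t| ≤ B) {ε : ℝ} (hε : 0 < ε) :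
    ∃ ζ : C(Set.Icc (0:ℝ) T, ℝ),
      (∫ t, φ t ∂j) - (∫ t, (Real.exp (φ t) - 1) ∂u) - ε
        ≤ (∫ t, ζ t ∂j) - ∫ t, (Real.exp (ζ t) - 1) ∂u := by
  set μ := u + j with hμ
  have hφintμ : Integrable φ μ := integrable_of_bounded hφ.aestronglyMeasurable hbd
  have hδ : 0 < ε / (1 + Real.exp B) := by positivity
  obtain ⟨g, hg, hgint⟩ := hφintμ.exists_boundedContinuous_integral_sub_le hδ
  set ζfun : Set.Icc (0:ℝ) T → ℝ := fun x => max (min (g x) B) (-B) with hζfun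
  have hζcont : Continuous ζfun := (g.continuous.min continuous_const).max continuous_const
  refine ⟨⟨ζfun, hζcont⟩, ?_⟩
  simp only [ContinuousMap.coe_mk]
  have hclose : ∀ t, |ζfun t - φ t| ≤ |g t - φ t| := by
    intro t
    have h1 : max (min (φ t) B) (-B) = φ t := by
      rw [min_eq_left (abs_le.1 (hbd t)).2, max_eq_left (abs_le.1 (hbd t)).1]
    have h2 : ζfun t - φ t = max (min (g t) B) (-B) - max (min (φ t) B) (-B) := by
      rw [h1]
    calc |ζfun t - φ t| = |max (min (g t) B) (-B) - max (min (φ t) B) (-B)| := by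
          rw [h2]
      _ ≤ |min (g t) B - min (φ t) B| := abs_max_sub_max_le_abs _ _ _
      _ ≤ max |g t - φ t| |B - B| := abs_min_sub_min_le_max _ _ _ _
      _ = |g t - φ t| := by simp
  have hζbd : ∀ t, |ζfun t| ≤ B := fun t => abs_le.2
    ⟨le_max_right _ _, max_le (min_le_right _ _) (by linarith)⟩
  have hζm : Measurable ζfun := hζcont.measurable
  -- integrability of everything
  have hgφ_int : ∀ (ν : Measure (Set.Icc (0:ℝ) T)) [IsFiniteMeasure ν],
      Integrable (fun t => |g t - φ t|) ν := by
    intro ν _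
    obtain ⟨C, hC⟩ := isCompact_univ.exists_bound_of_continuousOn g.continuous.continuousOn
    refine integrable_of_bounded ((g.continuous.measurable.sub hφ).abs).aestronglyMeasurable
      (C := C + B) (fun t => ?_)
    have := hC t (mem_univ t)
    rw [Real.norm_eq_abs] at this
    rw [abs_abs]
    calc |g t - φ t| ≤ |g t| + |φ t| := by
          simpa [Real.norm_eq_abs] using norm_sub_le (g t) (φ t)
      _ ≤ C + B := add_le_add this (hbd t)
  have hφj : Integrable φ j := integrable_of_bounded hφ.aestronglyMeasurable hbd
  have hζj : Integrable ζfun j := integrable_of_bounded hζm.aestronglyMeasurable hζbd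
  have heφ : Integrable (fun t => Real.exp (φ t) - 1) u := by
    refine integrable_of_bounded ((Real.measurable_exp.comp hφ).sub measurable_const).aestronglyMeasurable
      (C := Real.exp B + 1) (fun t => ?_)
    have h1 : Real.exp (φ t) ≤ Real.exp B := Real.exp_le_exp.2 (abs_le.1 (hbd t)).2
    have h2 : 0 < Real.exp (φ t) := Real.exp_pos _
    rw [abs_le]; constructor <;> nlinarith [Real.exp_pos B]
  have heζ : Integrable (fun t => Real.exp (ζfun t) - 1) u :=
    ((Real.continuous_exp.comp hζcont).sub continuous_const).integrable_fin
  -- the L¹ distance controls both error terms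
  have hμbound : (∫ t, |g t - φ t| ∂μ) ≤ ε / (1 + Real.exp B) := by
    have h3 : (∫ t, |g t - φ t| ∂μ) = ∫ t, ‖φ t - g t‖ ∂μ := by
      congr 1; ext t; rw [Real.norm_eq_abs, abs_sub_comm]
    rw [h3]; exact hg
  have hsplit : (∫ t, |g t - φ t| ∂μ)
      = (∫ t, |g t - φ t| ∂u) + ∫ t, |g t - φ t| ∂j :=
    integral_add_measure (hgφ_int u) (hgφ_int j)
  have hnn_u : 0 ≤ ∫ t, |g t - φ t| ∂u := integral_nonneg fun t => abs_nonneg _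
  have hnn_j : 0 ≤ ∫ t, |g t - φ t| ∂j := integral_nonneg fun t => abs_nonneg _
  have hju : (∫ t, |g t - φ t| ∂j) ≤ ε / (1 + Real.exp B) := by
    rw [hsplit] at hμbound; linarith
  have huu : (∫ t, |g t - φ t| ∂u) ≤ ε / (1 + Real.exp B) := by
    rw [hsplit] at hμbound; linarith
  have est1 : (∫ t, φ t ∂j) - (∫ t, ζfun t ∂j) ≤ ε / (1 + Real.exp B) := by
    have h1 : (∫ t, φ t ∂j) - (∫ t, ζfun t ∂j) = ∫ t, (φ t - ζfun t) ∂j :=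
      (integral_sub hφj hζj).symm
    rw [h1]
    refine (integral_mono (hφj.sub hζj) (hgφ_int j) (fun t => ?_)).trans hju
    calc φ t - ζfun t ≤ |φ t - ζfun t| := le_abs_self _
      _ = |ζfun t - φ t| := abs_sub_comm _ _
      _ ≤ |g t - φ t| := hclose t
  have est2 : (∫ t, (Real.exp (ζfun t) - 1) ∂u) - (∫ t, (Real.exp (φ t) - 1) ∂u)
      ≤ Real.exp B * (ε / (1 + Real.exp B)) := by
    have h1 : (∫ t, (Real.exp (ζfun t) - 1) ∂u) - (∫ t, (Real.exp (φ t) - 1) ∂u)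
        = ∫ t, (Real.exp (ζfun t) - Real.exp (φ t)) ∂u := by
      rw [← integral_sub heζ heφ]; congr 1; ext t; ring
    rw [h1]
    have h2 : ∀ t, Real.exp (ζfun t) - Real.exp (φ t) ≤ Real.exp B * |g t - φ t| := by
      intro t
      calc Real.exp (ζfun t) - Real.exp (φ t) ≤ |Real.exp (ζfun t) - Real.exp (φ t)| :=
            le_abs_self _
        _ ≤ Real.exp B * |ζfun t - φ t| :=
            exp_sub_exp_le (abs_le.1 (hζbd t)).2 (abs_le.1 (hbd t)).2
        _ ≤ Real.exp B * |g t - φ t| :=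
            mul_le_mul_of_nonneg_left (hclose t) (Real.exp_pos B).le
    calc (∫ t, (Real.exp (ζfun t) - Real.exp (φ t)) ∂u)
        ≤ ∫ t, Real.exp B * |g t - φ t| ∂u :=
          integral_mono ((heζ.sub heφ).congr (Filter.Eventually.of_forall fun t => by
            simp only [Pi.sub_apply]; ring)) ((hgφ_int u).const_mul _) h2
      _ = Real.exp B * ∫ t, |g t - φ t| ∂u :=
          integral_const_mul _ _
      _ ≤ Real.exp B * (ε / (1 + Real.exp B)) :=
          mul_le_mul_of_nonneg_left huu (Real.exp_pos B).le
  have hsum : ε / (1 + Real.exp B) + Real.exp B * (ε / (1 + Real.exp B)) = ε := by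
    field_simp
  linarith

/-- Lower bound: for fixed clamping level `c`, the truncated entropy is dominated by
the dual functional evaluated at `φ = log (clampc c p)`. -/
lemma lower_n (T : ℝ) (u j : Measure (Set.Icc (0:ℝ) T)) [IsFiniteMeasure u]
    [IsFiniteMeasure j] (hac : j ≪ u) {c : ℝ} (hc : 1 ≤ c) :
    (∫⁻ t, ENNReal.ofReal (sOne (clampc c ((j.rnDeriv u t).toReal))) ∂u) ≠ ⊤ ∧
    (∫⁻ t, ENNReal.ofReal (sOne (clampc c ((j.rnDeriv u t).toReal))) ∂u).toReal
      ≤ (∫ t, Real.log (clampc c ((j.rnDeriv u t).toReal)) ∂j)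
        - ∫ t, (Real.exp (Real.log (clampc c ((j.rnDeriv u t).toReal))) - 1) ∂u := by
  set p : Set.Icc (0:ℝ) T → ℝ := fun t => (j.rnDeriv u t).toReal with hp
  have hpm : Measurable p := (Measure.measurable_rnDeriv j u).ennreal_toReal
  have hpnn : ∀ t, 0 ≤ p t := fun t => ENNReal.toReal_nonneg
  have hpint : Integrable p u := Measure.integrable_toReal_rnDeriv
  set q : Set.Icc (0:ℝ) T → ℝ := fun t => clampc c (p t) with hq
  have hqm : Measurable q := measurable_clampc.comp hpm
  have hq0 : ∀ t, 0 < q t := fun t => clampc_pos hc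
  have hqc : ∀ t, q t ≤ c := fun t => clampc_le hc
  set φ : Set.Icc (0:ℝ) T → ℝ := fun t => Real.log (q t) with hφ
  have hφm : Measurable φ := Real.measurable_log.comp hqm
  have hφbd : ∀ t, |φ t| ≤ Real.log c := fun t => abs_log_clampc_le hc
  have hsm : Measurable fun t => sOne (q t) := continuous_sOne.measurable.comp hqm
  have hsnn : ∀ t, 0 ≤ sOne (q t) := fun t => sOne_nonneg (hq0 t).le
  have hsbd : ∀ t, sOne (q t) ≤ c * Real.log c + 1 :=
    fun t => sOne_le_bound hc (hq0 t) (hqc t)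
  -- finiteness
  have hfin : (∫⁻ t, ENNReal.ofReal (sOne (q t)) ∂u) ≠ ⊤ := by
    have h1 : (∫⁻ t, ENNReal.ofReal (sOne (q t)) ∂u)
        ≤ ∫⁻ _, ENNReal.ofReal (c * Real.log c + 1) ∂u :=
      lintegral_mono fun t => ENNReal.ofReal_le_ofReal (hsbd t)
    rw [lintegral_const] at h1
    exact (h1.trans_lt (ENNReal.mul_lt_top ENNReal.ofReal_lt_top (measure_lt_top u _))).ne
  refine ⟨hfin, ?_⟩
  -- convert lintegral to integral
  have hInt : (∫ t, sOne (q t) ∂u) = (∫⁻ t, ENNReal.ofReal (sOne (q t)) ∂u).toReal :=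
    integral_eq_lintegral_of_nonneg_ae (Filter.Eventually.of_forall hsnn)
      hsm.aestronglyMeasurable
  rw [← hInt]
  -- rewrite the two dual integrals
  have hφj : ∫ t, φ t ∂j = ∫ t, φ t * p t ∂u := by
    rw [← MeasureTheory.integral_rnDeriv_smul hac]
    simp_rw [smul_eq_mul, mul_comm]; rfl
  have hexp : ∫ t, (Real.exp (φ t) - 1) ∂u = ∫ t, (q t - 1) ∂u := by
    congr 1; ext t; rw [hφ, Real.exp_log (hq0 t)]
  -- integrabilities
  have hsint : Integrable (fun t => sOne (q t)) u :=
    integrable_of_bounded hsm.aestronglyMeasurable (C := c * Real.log c + 1)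
      (fun t => abs_le.2 ⟨by
        have := mul_nonneg (by linarith : (0:ℝ) ≤ c) (Real.log_nonneg hc)
        linarith [hsnn t], hsbd t⟩)
  have hφpint : Integrable (fun t => φ t * p t) u :=
    hpint.bdd_mul hφm.aestronglyMeasurable
      (c := Real.log c) (Filter.Eventually.of_forall fun t => by rw [Real.norm_eq_abs]; exact hφbd t)
  have hq1int : Integrable (fun t => q t - 1) u :=
    integrable_of_bounded (hqm.sub measurable_const).aestronglyMeasurable (C := c + 1)
      (fun t => abs_le.2 ⟨by linarith [hq0 t], by linarith [hqc t]⟩)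
  -- pointwise comparison and conclusion
  have hpoint : ∀ t, sOne (q t) ≤ φ t * p t - (q t - 1) := by
    intro t
    have := sOne_clampc_le hc (hpnn t) (c := c) (p := p t)
    calc sOne (q t) ≤ Real.log (clampc c (p t)) * p t - (clampc c (p t) - 1) := this
      _ = φ t * p t - (q t - 1) := rfl
  calc (∫ t, sOne (q t) ∂u) ≤ ∫ t, (φ t * p t - (q t - 1)) ∂u :=
        integral_mono hsint (hφpint.sub hq1int) hpoint
    _ = (∫ t, φ t * p t ∂u) - ∫ t, (q t - 1) ∂u := integral_sub hφpint hq1int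
    _ = (∫ t, φ t ∂j) - ∫ t, (Real.exp (φ t) - 1) ∂u := by rw [hφj, hexp]

/-- Dual formulation of the entropic cost for finite nonnegative Borel measures `u, j`
on `[0,T]`: the supremum over continuous `ζ : [0,T] → ℝ` of
`∫ ζ dj − ∫ (e^ζ − 1) du` equals `∫ s((dj/du)(t)∣1) u(dt)` if `j ≪ u`, and is `+∞`
otherwise. -/
theorem entropic_dual_measures (T : ℝ) (hT : 0 < T)
    (u j : Measure (Set.Icc (0:ℝ) T)) [IsFiniteMeasure u] [IsFiniteMeasure j] :
    (j ≪ u →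
      (⨆ ζ : C(Set.Icc (0:ℝ) T, ℝ),
          ((((∫ t, ζ t ∂j) - ∫ t, (Real.exp (ζ t) - 1) ∂u : ℝ)) : EReal))
        = ((∫⁻ t, ENNReal.ofReal (sOne ((j.rnDeriv u t).toReal)) ∂u) : ℝ≥0∞)) ∧
    (¬ j ≪ u →
      (⨆ ζ : C(Set.Icc (0:ℝ) T, ℝ),
          ((((∫ t, ζ t ∂j) - ∫ t, (Real.exp (ζ t) - 1) ∂u : ℝ)) : EReal)) = ⊤) := by
  constructor
  · -- absolutely continuous case
    intro hac
    set F : C(Set.Icc (0:ℝ) T, ℝ) → EReal := fun ζ =>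
      (((∫ t, ζ t ∂j) - ∫ t, (Real.exp (ζ t) - 1) ∂u : ℝ) : EReal) with hF
    set S : EReal := ⨆ ζ, F ζ with hS
    set I : ℝ≥0∞ := ∫⁻ t, ENNReal.ofReal (sOne ((j.rnDeriv u t).toReal)) ∂u with hI
    have hub : S ≤ (I : EReal) := iSup_le fun ζ => upper_bound u j hac ζ
    refine le_antisymm hub ?_
    have hS0 : (0 : EReal) ≤ S := by
      have h0 : F 0 = ((0 : ℝ) : EReal) := by
        simp [hF]
      have := le_iSup F 0
      rw [h0] at this
      simpa using this
    rcases eq_or_ne S ⊤ with hStop | hStop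
    · rw [hStop]; exact le_top
    have hSbot : S ≠ ⊥ := by
      intro h
      rw [h] at hS0
      exact absurd hS0 (by simp)
    set sR : ℝ := S.toReal with hsR
    have hSeq : S = (sR : EReal) := (EReal.coe_toReal hStop hSbot).symm
    have hsR0 : 0 ≤ sR := by
      rw [hSeq] at hS0
      exact_mod_cast hS0
    set p : Set.Icc (0:ℝ) T → ℝ := fun t => (j.rnDeriv u t).toReal with hp
    have hpm : Measurable p := (Measure.measurable_rnDeriv j u).ennreal_toReal
    -- uniform bound on the truncated entropies
    have hn : ∀ n : ℕ,
        (∫⁻ t, ENNReal.ofReal (sOne (clampc ((n:ℝ)+1) (p t))) ∂u) ≤ ENNReal.ofReal sR := by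
      intro n
      have hc : (1:ℝ) ≤ (n:ℝ) + 1 := by
        have : (0:ℝ) ≤ (n:ℝ) := Nat.cast_nonneg n
        linarith
      obtain ⟨hfin, hle⟩ := lower_n T u j hac hc
      set φ : Set.Icc (0:ℝ) T → ℝ := fun t => Real.log (clampc ((n:ℝ)+1) (p t)) with hφ
      have hφm : Measurable φ := Real.measurable_log.comp (measurable_clampc.comp hpm)
      have hφbd : ∀ t, |φ t| ≤ Real.log ((n:ℝ)+1) := fun t => abs_log_clampc_le hc
      have hPφ : (∫ t, φ t ∂j) - ∫ t, (Real.exp (φ t) - 1) ∂u ≤ sR := by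
        by_contra hcon
        push_neg at hcon
        set ε : ℝ := ((∫ t, φ t ∂j) - ∫ t, (Real.exp (φ t) - 1) ∂u - sR) / 2 with hε
        have hεpos : 0 < ε := by rw [hε]; linarith
        obtain ⟨ζ, hζ⟩ := approx_lemma T u j hφm (Real.log_nonneg hc) hφbd hεpos
        have h2 : F ζ ≤ S := le_iSup F ζ
        rw [hSeq, hF] at h2
        have h2' : (((∫ t, ζ t ∂j) - ∫ t, (Real.exp (ζ t) - 1) ∂u : ℝ) : EReal)
            ≤ ((sR : ℝ) : EReal) := h2
        have h3 : (∫ t, ζ t ∂j) - ∫ t, (Real.exp (ζ t) - 1) ∂u ≤ sR := by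
          exact_mod_cast h2'
        rw [hε] at hζ
        linarith
      calc (∫⁻ t, ENNReal.ofReal (sOne (clampc ((n:ℝ)+1) (p t))) ∂u)
          = ENNReal.ofReal (∫⁻ t, ENNReal.ofReal (sOne (clampc ((n:ℝ)+1) (p t))) ∂u).toReal :=
            (ENNReal.ofReal_toReal hfin).symm
        _ ≤ ENNReal.ofReal sR := ENNReal.ofReal_le_ofReal (hle.trans hPφ)
    -- Fatou
    have hfm : ∀ n : ℕ,
        Measurable fun t => ENNReal.ofReal (sOne (clampc ((n:ℝ)+1) (p t))) := fun n =>
      ENNReal.measurable_ofReal.comp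
        (continuous_sOne.measurable.comp (measurable_clampc.comp hpm))
    have hptw : ∀ t, Filter.Tendsto (fun n : ℕ => ENNReal.ofReal (sOne (clampc ((n:ℝ)+1) (p t))))
        Filter.atTop (nhds (ENNReal.ofReal (sOne (p t)))) := by
      intro t
      exact (ENNReal.continuous_ofReal.tendsto _).comp
        ((continuous_sOne.tendsto _).comp (tendsto_clampc ENNReal.toReal_nonneg))
    have hfatou : I ≤ Filter.liminf
        (fun n : ℕ => ∫⁻ t, ENNReal.ofReal (sOne (clampc ((n:ℝ)+1) (p t))) ∂u) Filter.atTop := by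
      have h1 : I = ∫⁻ t, Filter.liminf
          (fun n : ℕ => ENNReal.ofReal (sOne (clampc ((n:ℝ)+1) (p t)))) Filter.atTop ∂u :=
        lintegral_congr fun t => ((hptw t).liminf_eq).symm
      rw [h1]
      exact lintegral_liminf_le hfm
    have hIle : I ≤ ENNReal.ofReal sR := by
      refine hfatou.trans ?_
      have := Filter.liminf_le_liminf (f := Filter.atTop)
        (Filter.Eventually.of_forall hn)
      rwa [Filter.liminf_const] at this
    rw [hSeq]
    calc (I : EReal) ≤ ((ENNReal.ofReal sR : ℝ≥0∞) : EReal) :=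
          EReal.coe_ennreal_le_coe_ennreal_iff.2 hIle
      _ = ((sR : ℝ) : EReal) := by rw [EReal.coe_ennreal_ofReal, max_eq_left hsR0]
  · -- singular part present : supremum is +∞
    intro hnac
    rw [iSup_eq_top]
    intro b hb
    obtain ⟨r, hbr, -⟩ := EReal.exists_between_coe_real hb
    have h1 : ∃ s, u s = 0 ∧ j s ≠ 0 := by
      by_contra h
      push_neg at h
      exact hnac (Measure.AbsolutelyContinuous.mk fun s _ h0 => h s h0)
    obtain ⟨s, hus, hjs⟩ := h1
    set A := toMeasurable u s with hA'
    have hA : MeasurableSet A := measurableSet_toMeasurable u s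
    have huA : u A = 0 := by rw [hA', measure_toMeasurable]; exact hus
    have hjA : 0 < j A :=
      lt_of_lt_of_le (pos_iff_ne_zero.2 hjs) (measure_mono (subset_toMeasurable u s))
    obtain ⟨K, hKA, hKcomp, hKlt⟩ :=
      hA.exists_isCompact_lt_add (measure_ne_top j A) (ε := j A) hjA.ne'
    have hjK : 0 < j K := by
      by_contra h
      push_neg at h
      have h0 : j K = 0 := le_antisymm h (by positivity)
      rw [h0, zero_add] at hKlt
      exact lt_irrefl _ hKlt
    set κ : ℝ := (j K).toReal with hκ'
    have hκ : 0 < κ := ENNReal.toReal_pos hjK.ne' (measure_ne_top j K)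
    set M : ℝ := max ((r + 2) / κ) 1 with hM
    have hM1 : (1:ℝ) ≤ M := le_max_right _ _
    have hMκ : r + 2 ≤ M * κ := by
      have h2 : (r + 2) / κ ≤ M := le_max_left _ _
      calc r + 2 = ((r + 2) / κ) * κ := by field_simp
        _ ≤ M * κ := mul_le_mul_of_nonneg_right h2 hκ.le
    have huK : u K < ENNReal.ofReal (Real.exp (-M)) := by
      have h3 : u K = 0 := le_antisymm (huA ▸ measure_mono hKA) (by positivity)
      rw [h3]
      exact ENNReal.ofReal_pos.2 (Real.exp_pos _)
    obtain ⟨U, hKU, hUopen, hUlt⟩ := Set.exists_isOpen_lt_of_lt K _ huK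
    have hdisj : Disjoint Uᶜ K := Set.disjoint_left.2 fun x hxc hxK => hxc (hKU hxK)
    obtain ⟨f, hf0, hf1, hf01⟩ := exists_continuous_zero_one_of_isClosed
      (isClosed_compl_iff.2 hUopen) hKcomp.isClosed hdisj
    refine ⟨M • f, ?_⟩
    have hζt : ∀ t, (M • f) t = M * f t := fun t => rfl
    simp only [hζt]
    have hfint_j : Integrable (fun t => f t) j := f.continuous.integrable_fin
    have hind_j : Integrable (K.indicator (fun _ => (1:ℝ))) j :=
      (integrable_const 1).indicator hKcomp.isClosed.measurableSet
    have h2 : κ ≤ ∫ t, f t ∂j := by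
      rw [hκ']; change j.real K ≤ _; rw [← integral_indicator_one hKcomp.isClosed.measurableSet]
      refine integral_mono hind_j hfint_j (fun t => ?_)
      by_cases ht : t ∈ K
      · have : f t = 1 := hf1 ht
        simp [Set.indicator_of_mem ht, this]
      · simp only [Set.indicator_of_notMem ht]
        exact (hf01 t).1
    have hexp_int : Integrable (fun t => Real.exp (M * f t) - 1) u :=
      ((Real.continuous_exp.comp (continuous_const.mul f.continuous)).sub
        continuous_const).integrable_fin
    have h3 : ∫ t, (Real.exp (M * f t) - 1) ∂u ≤ Real.exp M * (u U).toReal := by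
      have hle : ∀ t, Real.exp (M * f t) - 1 ≤ U.indicator (fun _ => Real.exp M) t := by
        intro t
        by_cases ht : t ∈ U
        · rw [Set.indicator_of_mem ht]
          have hf_le : M * f t ≤ M := by
            nlinarith [(hf01 t).1, (hf01 t).2]
          have := Real.exp_le_exp.2 hf_le
          linarith
        · rw [Set.indicator_of_notMem ht]
          have hft : f t = 0 := hf0 ht
          rw [hft, mul_zero, Real.exp_zero]
          linarith
      calc ∫ t, (Real.exp (M * f t) - 1) ∂u
          ≤ ∫ t, U.indicator (fun _ => Real.exp M) t ∂u :=
            integral_mono hexp_int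
              ((integrable_const _).indicator hUopen.measurableSet) hle
        _ = (u U).toReal • Real.exp M := integral_indicator_const _ hUopen.measurableSet
        _ = Real.exp M * (u U).toReal := by rw [smul_eq_mul, mul_comm]
    have h4 : (u U).toReal ≤ Real.exp (-M) :=
      ENNReal.toReal_le_of_le_ofReal (Real.exp_pos _).le hUlt.le
    have h5 : ∫ t, M * f t ∂j = M * ∫ t, f t ∂j := integral_const_mul _ _
    have hexpMM : Real.exp M * Real.exp (-M) = 1 := by
      rw [← Real.exp_add]; simp
    have hfinal : r < (∫ t, M * f t ∂j) - ∫ t, (Real.exp (M * f t) - 1) ∂u := by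
      have hMf : M * κ ≤ ∫ t, M * f t ∂j := by
        rw [h5]
        exact mul_le_mul_of_nonneg_left h2 (by linarith)
      have h6 : Real.exp M * (u U).toReal ≤ 1 := by
        calc Real.exp M * (u U).toReal ≤ Real.exp M * Real.exp (-M) :=
              mul_le_mul_of_nonneg_left h4 (Real.exp_pos M).le
          _ = 1 := hexpMM
      linarith
    calc b < ((r : ℝ) : EReal) := hbr
      _ ≤ _ := EReal.coe_le_coe_iff.2 hfinal.le
end

section
/- Let T > 0, let u ∈ L¹([0,T]) be nonnegative and let j̃ ∈ L¹([0,T]). Then sup_{ζ ∈ C([0,T])} ∫₀ᵀ [ ζ(t)·j̃(t) − (1/2)·u(t)·ζ(t)² ] dt equals (1/2) ∫₀ᵀ j̃(t)²/u(t) dt if j̃(t) = 0 for almost every t with u(t) = 0 and t ↦ j̃(t)²/u(t) is integrable, and equals +∞ otherwise. -/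
open MeasureTheory Set
open Filter
open scoped ENNReal NNReal

noncomputable def clampC (C x : ℝ) : ℝ := max (-C) (min C x)

lemma clampC_continuous (C : ℝ) : Continuous (fun x => clampC C x) := by
  unfold clampC; exact continuous_const.max (continuous_const.min continuous_id)

lemma clampC_abs_le {C : ℝ} (hC : 0 ≤ C) (x : ℝ) : |clampC C x| ≤ C := by
  unfold clampC
  rw [abs_le]
  constructor
  · exact le_max_left _ _
  · exact max_le (by linarith) (min_le_left _ _)

lemma clampC_eq_self {C x : ℝ} (h : |x| ≤ C) : clampC C x = x := by
  rw [abs_le] at h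
  unfold clampC
  rw [min_eq_right h.2, max_eq_right h.1]

lemma clampC_lipschitz {C : ℝ} (hC : 0 ≤ C) (x y : ℝ) :
    |clampC C x - clampC C y| ≤ |x - y| := by
  unfold clampC
  calc |max (-C) (min C x) - max (-C) (min C y)|
      = |max (min C x) (-C) - max (min C y) (-C)| := by rw [max_comm (-C), max_comm (-C)]
    _ ≤ |min C x - min C y| := abs_max_sub_max_le_abs _ _ _
    _ ≤ |x - y| := by
        rcases le_total x y with h | h <;> rcases le_total C x with h1 | h1 <;>
          rcases le_total C y with h2 | h2 <;>
          simp [min_eq_left, min_eq_right, h1, h2, abs_le] <;> constructor <;> linarith [abs_nonneg (x - y), le_abs_self (x-y), neg_abs_le (x-y)]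

lemma clampC_abs_eq {C x : ℝ} (hC : 0 ≤ C) : |clampC C x| = min C |x| := by
  unfold clampC
  rcases le_total 0 x with hx | hx
  · rw [abs_of_nonneg hx]
    have h1 : (0:ℝ) ≤ min C x := le_min hC hx
    rw [max_eq_right (by linarith), abs_of_nonneg h1]
  · rw [abs_of_nonpos hx, min_eq_right (by linarith : x ≤ C)]
    have : max (-C) x ≤ 0 := max_le (by linarith) hx
    rw [abs_of_nonpos this]
    rcases le_total (-C) x with h | h
    · rw [max_eq_right h, min_eq_right (by linarith)]
    · rw [max_eq_left h, min_eq_left (by linarith), neg_neg]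

lemma clampC_sub_abs_le {C x : ℝ} (hC : 0 ≤ C) : |x - clampC C x| ≤ |x| := by
  unfold clampC
  rcases le_total 0 x with hx | hx
  · have h1 : (0:ℝ) ≤ min C x := le_min hC hx
    rw [max_eq_right (by linarith)]
    rcases le_total C x with h | h <;>
      simp [min_eq_left, min_eq_right, h, abs_le] <;> constructor <;> linarith [abs_of_nonneg hx]
  · rw [min_eq_right (by linarith : x ≤ C)]
    rcases le_total (-C) x with h | h <;>
      simp [max_eq_left, max_eq_right, h, abs_le] <;> constructor <;> linarith [abs_of_nonpos hx]

lemma clampC_mul_self_le {C x : ℝ} (hC : 0 ≤ C) : (clampC C x)^2 ≤ clampC C x * x := by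
  unfold clampC
  rcases le_total x (-C) with h | h
  · rw [min_eq_right (by linarith), max_eq_left (by linarith)]
    nlinarith
  · rcases le_total C x with h2 | h2
    · rw [min_eq_left h2, max_eq_right (by linarith)]
      nlinarith
    · rw [min_eq_right h2, max_eq_right h]; ring_nf; exact le_rfl

lemma clampC_measurable {C : ℝ} {f : ℝ → ℝ} (hf : Measurable f) :
    Measurable (fun t => clampC C (f t)) :=
  ((clampC_continuous C).measurable).comp hf

/-- L¹ approximation of a bounded measurable function by a continuous function with the
same bound. -/
lemma approxA (ν : Measure ℝ) [IsFiniteMeasure ν] (f : ℝ → ℝ) (hf : Measurable f)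
    (C : ℝ) (hC : 0 ≤ C) (hfC : ∀ x, |f x| ≤ C) {ε : ℝ} (hε : 0 < ε) :
    ∃ h : ℝ → ℝ, Continuous h ∧ (∀ x, |h x| ≤ C) ∧ ∫ x, |h x - f x| ∂ν ≤ ε := by
  have hfi : Integrable f ν :=
    (integrable_const C).mono' hf.aestronglyMeasurable (ae_of_all _ fun x => by
      simpa using hfC x)
  obtain ⟨g, hg, hgi⟩ := hfi.exists_boundedContinuous_integral_sub_le hε
  refine ⟨fun x => clampC C (g x), (clampC_continuous C).comp g.continuous,
    fun x => clampC_abs_le hC _, ?_⟩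
  have hpt : ∀ x, |clampC C (g x) - f x| ≤ ‖f x - g x‖ := by
    intro x
    calc |clampC C (g x) - f x| = |clampC C (g x) - clampC C (f x)| := by
          rw [clampC_eq_self (hfC x)]
      _ ≤ |g x - f x| := clampC_lipschitz hC _ _
      _ = ‖f x - g x‖ := by rw [Real.norm_eq_abs, abs_sub_comm]
  have hi1 : Integrable (fun x => |clampC C (g x) - f x|) ν := by
    have : Integrable (fun x => clampC C (g x)) ν :=
      (integrable_const C).mono'
        (((clampC_continuous C).comp g.continuous).measurable).aestronglyMeasurable
        (ae_of_all _ fun x => by simpa using clampC_abs_le hC (g x))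
    exact (this.sub hfi).abs
  calc ∫ x, |clampC C (g x) - f x| ∂ν ≤ ∫ x, ‖f x - g x‖ ∂ν :=
        integral_mono hi1 (hfi.sub hgi).norm hpt
    _ ≤ ε := hg

noncomputable def Dval (μ : Measure ℝ) (u' j' f : ℝ → ℝ) : ℝ :=
  ∫ t, (f t * j' t - (1/2) * u' t * f t ^ 2) ∂μ

lemma intFacts {μ : Measure ℝ} {u' j' f : ℝ → ℝ}
    (hu'i : Integrable u' μ) (hj'i : Integrable j' μ)
    (hf : AEStronglyMeasurable f μ) {C : ℝ}
    (hfC : ∀ᵐ t ∂μ, |f t| ≤ C) :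
    Integrable (fun t => f t * j' t) μ ∧ Integrable (fun t => u' t * f t ^ 2) μ ∧
      Integrable (fun t => f t * j' t - (1/2) * u' t * f t ^ 2) μ := by
  have h1 : Integrable (fun t => f t * j' t) μ := by
    refine (hj'i.abs.const_mul C).mono' (hf.mul hj'i.1) ?_
    filter_upwards [hfC] with t ht
    rw [Real.norm_eq_abs, abs_mul]
    have : (0:ℝ) ≤ |j' t| := abs_nonneg _
    nlinarith [abs_nonneg (f t)]
  have h2 : Integrable (fun t => u' t * f t ^ 2) μ := by
    refine (hu'i.abs.const_mul (C^2)).mono' (hu'i.1.mul ((hf.pow 2))) ?_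
    filter_upwards [hfC] with t ht
    rw [Real.norm_eq_abs, abs_mul, abs_pow]
    have h0 : (0:ℝ) ≤ |f t| := abs_nonneg _
    have : |f t|^2 ≤ C^2 := by nlinarith
    nlinarith [abs_nonneg (u' t)]
  refine ⟨h1, h2, ?_⟩
  have := h1.sub (h2.const_mul (1/2))
  refine this.congr ?_
  exact ae_of_all _ fun t => by simp only [Pi.sub_apply]; ring
  
lemma perturb (μ : Measure ℝ) [IsFiniteMeasure μ] (u' j' : ℝ → ℝ)
    (hu'm : Measurable u') (hj'm : Measurable j') (hu'0 : ∀ t, 0 ≤ u' t)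
    (hu'i : Integrable u' μ) (hj'i : Integrable j' μ)
    (f : ℝ → ℝ) (hfm : Measurable f) {C : ℝ} (hC : 0 ≤ C) (hfC : ∀ t, |f t| ≤ C)
    {δ : ℝ} (hδ : 0 < δ) :
    ∃ ζ : ℝ → ℝ, Continuous ζ ∧ (∀ t, |ζ t| ≤ C) ∧ |Dval μ u' j' ζ - Dval μ u' j' f| ≤ δ := by
  set w : ℝ → ℝ := fun t => u' t + |j' t| with hw
  have hwm : Measurable w := hu'm.add hj'm.abs
  have hw0 : ∀ t, 0 ≤ w t := fun t => add_nonneg (hu'0 t) (abs_nonneg _)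
  have hwi : Integrable w μ := hu'i.add hj'i.abs
  set ν : Measure ℝ := μ.withDensity (fun t => ((w t).toNNReal : ℝ≥0∞)) with hν
  haveI : IsFiniteMeasure ν := by
    refine isFiniteMeasure_withDensity ?_
    have : ∫⁻ t, ((w t).toNNReal : ℝ≥0∞) ∂μ = ∫⁻ t, ENNReal.ofReal (w t) ∂μ := by
      simp [ENNReal.ofReal]
    rw [this]
    exact hwi.lintegral_lt_top.ne
  have hCpos : (0:ℝ) < 1 + C := by linarith
  obtain ⟨ζ, hζc, hζC, hζa⟩ := approxA ν f hfm C hC hfC (ε := δ / (1 + C))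
    (div_pos hδ hCpos)
  refine ⟨ζ, hζc, hζC, ?_⟩
  -- integrability facts
  have h1 := intFacts hu'i hj'i hfm.aestronglyMeasurable (ae_of_all μ hfC)
  have h2 := intFacts hu'i hj'i hζc.measurable.aestronglyMeasurable (ae_of_all μ hζC)
  -- conversion of the ν-integral
  have hconv : ∫ x, |ζ x - f x| ∂ν = ∫ x, w x * |ζ x - f x| ∂μ := by
    rw [hν, integral_withDensity_eq_integral_smul (hwm.real_toNNReal)]
    congr 1
    funext x
    rw [NNReal.smul_def, Real.coe_toNNReal _ (hw0 x), smul_eq_mul]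
  have hbig : Integrable (fun t => (1 + C) * (w t * |ζ t - f t|)) μ := by
    refine ((hwi.const_mul (2*C)).const_mul (1+C)).mono'
      ((hwm.mul ((hζc.measurable.sub hfm).abs)).aestronglyMeasurable.const_mul _) ?_
    refine ae_of_all _ fun t => ?_
    have h3 : |ζ t - f t| ≤ 2 * C := by
      have := hζC t; have := hfC t
      have := abs_sub (ζ t) (f t)
      calc |ζ t - f t| ≤ |ζ t| + |f t| := abs_sub _ _
        _ ≤ 2 * C := by linarith [hζC t, hfC t]
    rw [Real.norm_eq_abs, abs_mul, abs_of_nonneg hCpos.le, abs_mul,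
      abs_of_nonneg (hw0 t), abs_abs]
    have h5 := mul_le_mul_of_nonneg_left h3 (hw0 t)
    nlinarith [abs_nonneg (ζ t - f t)]
  have key : |Dval μ u' j' ζ - Dval μ u' j' f| ≤ (1 + C) * ∫ x, |ζ x - f x| ∂ν := by
    rw [hconv, ← integral_const_mul]
    unfold Dval
    rw [← integral_sub h2.2.2 h1.2.2]
    have step1 : |∫ t, ((ζ t * j' t - 1/2 * u' t * ζ t ^ 2) - (f t * j' t - 1/2 * u' t * f t ^ 2)) ∂μ|
        ≤ ∫ t, |(ζ t * j' t - 1/2 * u' t * ζ t ^ 2) - (f t * j' t - 1/2 * u' t * f t ^ 2)| ∂μ := by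
      exact
        norm_integral_le_integral_norm (μ := μ)
          (f := fun t => (ζ t * j' t - 1/2 * u' t * ζ t ^ 2) - (f t * j' t - 1/2 * u' t * f t ^ 2))
    refine step1.trans ?_
    refine integral_mono (h2.2.2.sub h1.2.2).abs hbig fun t => ?_
    have e1 : (ζ t * j' t - 1/2 * u' t * ζ t ^ 2) - (f t * j' t - 1/2 * u' t * f t ^ 2)
        = (ζ t - f t) * j' t - 1/2 * u' t * ((ζ t - f t) * (ζ t + f t)) := by ring
    rw [e1]
    have habs : |(ζ t - f t) * j' t - 1/2 * u' t * ((ζ t - f t) * (ζ t + f t))|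
        ≤ |ζ t - f t| * |j' t| + 1/2 * u' t * (|ζ t - f t| * |ζ t + f t|) := by
      calc |(ζ t - f t) * j' t - 1/2 * u' t * ((ζ t - f t) * (ζ t + f t))|
          ≤ |(ζ t - f t) * j' t| + |1/2 * u' t * ((ζ t - f t) * (ζ t + f t))| := abs_sub _ _
        _ = |ζ t - f t| * |j' t| + 1/2 * u' t * (|ζ t - f t| * |ζ t + f t|) := by
            rw [abs_mul, abs_mul, abs_mul, abs_mul, abs_of_nonneg (hu'0 t)]
            norm_num
    have hb2 : |ζ t + f t| ≤ 2 * C := by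
      calc |ζ t + f t| ≤ |ζ t| + |f t| := abs_add_le _ _
        _ ≤ 2 * C := by linarith [hζC t, hfC t]
    have h7 : 1/2 * u' t * (|ζ t - f t| * |ζ t + f t|)
        ≤ 1/2 * u' t * (|ζ t - f t| * (2*C)) := by
      have h9 := mul_le_mul_of_nonneg_left hb2 (abs_nonneg (ζ t - f t))
      nlinarith [hu'0 t]
    have h8 : |ζ t - f t| * |j' t| + 1/2 * u' t * (|ζ t - f t| * (2*C))
        ≤ (1 + C) * (w t * |ζ t - f t|) := by
      rw [hw]
      nlinarith [mul_nonneg (hu'0 t) (abs_nonneg (ζ t - f t)),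
        mul_nonneg (mul_nonneg hC (abs_nonneg (j' t))) (abs_nonneg (ζ t - f t))]
    linarith
  calc |Dval μ u' j' ζ - Dval μ u' j' f| ≤ (1 + C) * ∫ x, |ζ x - f x| ∂ν := key
    _ ≤ (1 + C) * (δ / (1 + C)) := by gcongr
    _ = δ := by field_simp

lemma chain1 {μ : Measure ℝ} {u' j' : ℝ → ℝ} (hu'0 : ∀ t, 0 ≤ u' t)
    (hu'i : Integrable u' μ) (hj'i : Integrable j' μ)
    (hae : ∀ᵐ t ∂μ, u' t = 0 → j' t = 0)
    (hint : Integrable (fun t => j' t ^ 2 / u' t) μ)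
    (ζ : ℝ → ℝ) (hζ : AEStronglyMeasurable ζ μ) {C : ℝ} (hζC : ∀ᵐ t ∂μ, |ζ t| ≤ C) :
    Dval μ u' j' ζ ≤ (1/2) * ∫ t, j' t ^ 2 / u' t ∂μ := by
  have h := intFacts hu'i hj'i hζ hζC
  unfold Dval
  rw [← integral_const_mul]
  refine integral_mono_ae h.2.2 (hint.const_mul _) ?_
  filter_upwards [hae] with t ht
  by_cases h0 : u' t = 0
  · simp [h0, ht h0]
  · have hpos : 0 < u' t := lt_of_le_of_ne (hu'0 t) (Ne.symm h0)
    have hq : j' t ^ 2 = (j' t ^ 2 / u' t) * u' t := (div_mul_cancel₀ _ h0).symm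
    nlinarith [sq_nonneg (u' t * ζ t - j' t), mul_pos hpos hpos,
      div_nonneg (sq_nonneg (j' t)) (hu'0 t)]

/-- Dual formulation of the quadratic cost: for a nonnegative `u ∈ L¹([0,T])` and
`j̃ ∈ L¹([0,T])`, the supremum (realised in `EReal`) over continuous `ζ` of
`∫₀ᵀ (ζ j̃ − ½ u ζ²) dt` equals `½ ∫₀ᵀ j̃²/u dt` if `j̃ = 0` a.e. where `u = 0` and
`j̃²/u` is integrable, and equals `+∞` otherwise. (Here `j̃(t)²/u(t) := 0` at points
where both vanish, which matches Lean's convention `x / 0 = 0`.) -/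
theorem quadratic_dual_L1 (T : ℝ) (hT : 0 < T) (u jt : ℝ → ℝ)
    (hu : IntegrableOn u (Icc 0 T)) (hjt : IntegrableOn jt (Icc 0 T))
    (hu0 : ∀ t ∈ Icc (0:ℝ) T, 0 ≤ u t) :
    (((∀ᵐ t ∂(volume.restrict (Icc (0:ℝ) T)), u t = 0 → jt t = 0) ∧
        IntegrableOn (fun t => jt t ^ 2 / u t) (Icc 0 T)) →
      (⨆ ζ : {f : ℝ → ℝ // ContinuousOn f (Icc 0 T)},
          (((∫ t in Icc (0:ℝ) T, (ζ.1 t * jt t - (1/2) * u t * ζ.1 t ^ 2) : ℝ)) : EReal))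
        = (((1/2) * ∫ t in Icc (0:ℝ) T, jt t ^ 2 / u t : ℝ) : EReal)) ∧
    (¬ ((∀ᵐ t ∂(volume.restrict (Icc (0:ℝ) T)), u t = 0 → jt t = 0) ∧
        IntegrableOn (fun t => jt t ^ 2 / u t) (Icc 0 T)) →
      (⨆ ζ : {f : ℝ → ℝ // ContinuousOn f (Icc 0 T)},
          (((∫ t in Icc (0:ℝ) T, (ζ.1 t * jt t - (1/2) * u t * ζ.1 t ^ 2) : ℝ)) : EReal))
        = ⊤) := by
  classical
  set μ : Measure ℝ := volume.restrict (Icc (0:ℝ) T) with hμdef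
  haveI : IsFiniteMeasure μ := by
    constructor
    rw [hμdef, Measure.restrict_apply MeasurableSet.univ, Set.univ_inter]
    simp [Real.volume_Icc]
  -- measurable representatives
  have hum := hu.1
  have hjm := hjt.1
  set u' : ℝ → ℝ := fun t => max (hum.mk u t) 0 with hu'def
  set j' : ℝ → ℝ := hjm.mk jt with hj'def
  have hu'm : Measurable u' := (hum.stronglyMeasurable_mk.measurable.max measurable_const)
  have hj'm : Measurable j' := hjm.stronglyMeasurable_mk.measurable
  have hu'0 : ∀ t, 0 ≤ u' t := fun t => le_max_right _ _
  have hu'eq : u' =ᵐ[μ] u := by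
    filter_upwards [hum.ae_eq_mk, ae_restrict_mem measurableSet_Icc] with t h1 h2
    rw [hu'def]
    simp only
    rw [← h1]
    exact max_eq_left (hu0 t h2)
  have hj'eq : j' =ᵐ[μ] jt := hjm.ae_eq_mk.symm
  have hu'i : Integrable u' μ := hu.congr hu'eq.symm
  have hj'i : Integrable j' μ := hjt.congr hj'eq.symm
  set g : ℝ → ℝ := fun t => j' t / u' t with hgdef
  have hgm : Measurable g := hj'm.div hu'm
  set gn : ℕ → ℝ → ℝ := fun n t => clampC n (g t) with hgndef
  have hgnm : ∀ n, Measurable (gn n) := fun n => clampC_measurable hgm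
  have hgnC : ∀ n t, |gn n t| ≤ (n : ℝ) := fun n t => clampC_abs_le (Nat.cast_nonneg n) _
  have hug : ∀ t, u' t * g t ^ 2 = j' t ^ 2 / u' t := by
    intro t
    by_cases h : u' t = 0
    · simp [hgdef, h]
    · rw [hgdef]; field_simp
  -- translation of the statement integrals
  have hIeq : ∀ ζ : ℝ → ℝ,
      (∫ t in Icc (0:ℝ) T, (ζ t * jt t - (1/2) * u t * ζ t ^ 2)) = Dval μ u' j' ζ := by
    intro ζ
    refine integral_congr_ae ?_
    filter_upwards [hu'eq, hj'eq] with t h1 h2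
    rw [← h1, ← h2]
  have hCeq : (∫ t in Icc (0:ℝ) T, jt t ^ 2 / u t) = ∫ t, j' t ^ 2 / u' t ∂μ := by
    refine integral_congr_ae ?_
    filter_upwards [hu'eq, hj'eq] with t h1 h2
    rw [← h1, ← h2]
  -- pointwise: u' * gn² ≤ gn * j'
  have hkey1 : ∀ n t, u' t * gn n t ^ 2 ≤ gn n t * j' t := by
    intro n t
    by_cases h0 : u' t = 0
    · have hg0 : g t = 0 := by rw [hgdef]; simp [h0]
      have : gn n t = 0 := by
        rw [hgndef]; simp only [hg0]
        exact clampC_eq_self (by simp [Nat.cast_nonneg])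
      simp [this, h0]
    · have hj : g t * u' t = j' t := by rw [hgdef]; exact div_mul_cancel₀ _ h0
      rw [← hj]
      have h1 := clampC_mul_self_le (C := (n:ℝ)) (x := g t) (Nat.cast_nonneg n)
      have h2 := mul_le_mul_of_nonneg_left h1 (hu'0 t)
      rw [hgndef]
      nlinarith
  -- integrability of the pieces for gn
  have hfacts : ∀ n : ℕ, Integrable (fun t => gn n t * j' t) μ ∧
      Integrable (fun t => u' t * gn n t ^ 2) μ ∧
      Integrable (fun t => gn n t * j' t - (1/2) * u' t * gn n t ^ 2) μ :=
    fun n => intFacts hu'i hj'i (hgnm n).aestronglyMeasurable (ae_of_all _ (hgnC n))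
  have hsplit : ∀ n : ℕ, Dval μ u' j' (gn n)
      = (∫ t, gn n t * j' t ∂μ) - (1/2) * ∫ t, u' t * gn n t ^ 2 ∂μ := by
    intro n
    unfold Dval
    have e : (fun t => gn n t * j' t - 1/2 * u' t * gn n t ^ 2)
        = fun t => gn n t * j' t - 1/2 * (u' t * gn n t ^ 2) := by
      funext t; ring
    rw [e, integral_sub (hfacts n).1 (((hfacts n).2.1).const_mul (1/2)), integral_const_mul]
  constructor
  · -- first branch
    rintro ⟨hae₀, hint₀⟩
    have hae : ∀ᵐ t ∂μ, u' t = 0 → j' t = 0 := by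
      filter_upwards [hae₀, hu'eq, hj'eq] with t h h1 h2
      rw [h1, h2]; exact h
    have hint : Integrable (fun t => j' t ^ 2 / u' t) μ := by
      refine (hint₀ : Integrable _ μ).congr ?_
      filter_upwards [hu'eq, hj'eq] with t h1 h2
      rw [h1, h2]
    set C₀ : ℝ := (1/2) * ∫ t, j' t ^ 2 / u' t ∂μ with hC₀def
    have hub : ∀ ζ : {f : ℝ → ℝ // ContinuousOn f (Icc (0:ℝ) T)},
        Dval μ u' j' ζ.1 ≤ C₀ := by
      intro ζ
      obtain ⟨K, hK⟩ := isCompact_Icc.exists_bound_of_continuousOn ζ.2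
      have haes : AEStronglyMeasurable ζ.1 μ := ζ.2.aestronglyMeasurable measurableSet_Icc
      have hbd : ∀ᵐ t ∂μ, |ζ.1 t| ≤ K := by
        filter_upwards [ae_restrict_mem measurableSet_Icc] with t ht
        simpa [Real.norm_eq_abs] using hK t ht
      exact chain1 hu'0 hu'i hj'i hae hint ζ.1 haes hbd
    -- lower bound: approximation
    have hQint : ∀ n : ℕ, Integrable (fun t => u' t * (g t - gn n t) ^ 2) μ := by
      intro n
      refine hint.mono' ((hu'm.mul ((hgm.sub (hgnm n)).pow_const 2)).aestronglyMeasurable) ?_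
      refine ae_of_all _ fun t => ?_
      have h1 : (g t - gn n t) ^ 2 ≤ g t ^ 2 := by
        have habs : |g t - gn n t| ≤ |g t| := by
          rw [hgndef]; exact clampC_sub_abs_le (Nat.cast_nonneg n)
        calc (g t - gn n t) ^ 2 = |g t - gn n t| ^ 2 := (sq_abs _).symm
          _ ≤ |g t| ^ 2 := pow_le_pow_left₀ (abs_nonneg _) habs 2
          _ = g t ^ 2 := sq_abs _
      show ‖u' t * (g t - gn n t) ^ 2‖ ≤ j' t ^ 2 / u' t
      rw [Real.norm_eq_abs, abs_of_nonneg (mul_nonneg (hu'0 t) (sq_nonneg _)), ← hug t]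
      nlinarith [hu'0 t]
    have hQtend : Tendsto (fun n : ℕ => ∫ t, u' t * (g t - gn n t) ^ 2 ∂μ)
        atTop (nhds 0) := by
      have h0 : (0:ℝ) = ∫ t, (0:ℝ) ∂μ := by simp
      rw [h0]
      refine tendsto_integral_of_dominated_convergence (fun t => j' t ^ 2 / u' t)
        (fun n => ((hu'm.mul ((hgm.sub (hgnm n)).pow_const 2)).aestronglyMeasurable)) hint ?_ ?_
      · intro n
        refine ae_of_all _ fun t => ?_
        have h1 : (g t - gn n t) ^ 2 ≤ g t ^ 2 := by
          have habs : |g t - gn n t| ≤ |g t| := by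
            rw [hgndef]; exact clampC_sub_abs_le (Nat.cast_nonneg n)
          calc (g t - gn n t) ^ 2 = |g t - gn n t| ^ 2 := (sq_abs _).symm
            _ ≤ |g t| ^ 2 := pow_le_pow_left₀ (abs_nonneg _) habs 2
            _ = g t ^ 2 := sq_abs _
        show ‖u' t * (g t - gn n t) ^ 2‖ ≤ j' t ^ 2 / u' t
        rw [Real.norm_eq_abs, abs_of_nonneg (mul_nonneg (hu'0 t) (sq_nonneg _)), ← hug t]
        nlinarith [hu'0 t]
      · refine ae_of_all _ fun t => ?_
        have hev : ∀ᶠ n : ℕ in atTop, u' t * (g t - gn n t) ^ 2 = 0 := by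
          filter_upwards [eventually_ge_atTop ⌈|g t|⌉₊] with n hn
          have : |g t| ≤ (n:ℝ) := le_trans (Nat.le_ceil _) (by exact_mod_cast hn)
          rw [hgndef]
          simp [clampC_eq_self this]
        exact Tendsto.congr' (Filter.EventuallyEq.symm hev) tendsto_const_nhds
    have hlb : ∀ ε : ℝ, 0 < ε → ∃ ζ : {f : ℝ → ℝ // ContinuousOn f (Icc (0:ℝ) T)},
        C₀ - ε ≤ Dval μ u' j' ζ.1 := by
      intro ε hε
      obtain ⟨n, hn⟩ := (hQtend.eventually_lt_const hε).exists
      have hiden : (fun t => gn n t * j' t - (1/2) * u' t * gn n t ^ 2) =ᵐ[μ]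
          (fun t => (1/2) * (j' t ^ 2 / u' t) - (1/2) * (u' t * (g t - gn n t) ^ 2)) := by
        filter_upwards [hae] with t ht
        by_cases h0 : u' t = 0
        · have hj0 := ht h0
          have hg0 : g t = 0 := by rw [hgdef]; simp [h0]
          have hgn0 : gn n t = 0 := by
            rw [hgndef]; simp only [hg0]
            exact clampC_eq_self (by simp [Nat.cast_nonneg])
          simp [h0, hj0, hg0, hgn0]
        · have hj : j' t = g t * u' t := by rw [hgdef]; rw [div_mul_cancel₀ _ h0]
          rw [hj]
          have h0' : u' t ≠ 0 := h0
          field_simp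
          ring
      have hDgn : Dval μ u' j' (gn n)
          = C₀ - (1/2) * ∫ t, u' t * (g t - gn n t) ^ 2 ∂μ := by
        unfold Dval
        rw [integral_congr_ae hiden, integral_sub (hint.const_mul _) ((hQint n).const_mul _),
          integral_const_mul, integral_const_mul]
      obtain ⟨ζ, hζc, hζC, hζd⟩ := perturb μ u' j' hu'm hj'm hu'0 hu'i hj'i (gn n)
        (hgnm n) (Nat.cast_nonneg n) (hgnC n) (half_pos hε)
      refine ⟨⟨ζ, hζc.continuousOn⟩, ?_⟩
      have h2 := abs_le.1 hζd
      have hQnn : 0 ≤ ∫ t, u' t * (g t - gn n t) ^ 2 ∂μ :=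
        integral_nonneg fun t => mul_nonneg (hu'0 t) (sq_nonneg _)
      simp only
      linarith [hDgn, hn]
    -- conclusion in EReal
    have hgoal : ((1/2) * ∫ t in Icc (0:ℝ) T, jt t ^ 2 / u t : ℝ) = C₀ := by
      rw [hCeq]
    rw [hgoal]
    refine le_antisymm (iSup_le fun ζ => ?_) ?_
    · exact EReal.coe_le_coe_iff.2 (by rw [hIeq ζ.1]; exact hub ζ)
    · by_contra hlt
      have hlt' : (⨆ ζ : {f : ℝ → ℝ // ContinuousOn f (Icc (0:ℝ) T)},
          (((∫ t in Icc (0:ℝ) T, (ζ.1 t * jt t - (1/2) * u t * ζ.1 t ^ 2) : ℝ)) : EReal))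
          < (C₀ : EReal) := not_le.1 hlt
      set S := ⨆ ζ : {f : ℝ → ℝ // ContinuousOn f (Icc (0:ℝ) T)},
          (((∫ t in Icc (0:ℝ) T, (ζ.1 t * jt t - (1/2) * u t * ζ.1 t ^ 2) : ℝ)) : EReal)
        with hSdef
      have h0le : (((0:ℝ)) : EReal) ≤ S := by
        have h1 := le_iSup (fun ζ : {f : ℝ → ℝ // ContinuousOn f (Icc (0:ℝ) T)} =>
          (((∫ t in Icc (0:ℝ) T, (ζ.1 t * jt t - (1/2) * u t * ζ.1 t ^ 2) : ℝ)) : EReal))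
          ⟨fun _ => 0, continuousOn_const⟩
        rw [← hSdef] at h1
        refine le_trans (le_of_eq ?_) h1
        norm_cast
        simp
      have hnb : S ≠ ⊥ := (lt_of_lt_of_le (EReal.bot_lt_coe 0) h0le).ne'
      have hnt : S ≠ ⊤ := (hlt'.trans (EReal.coe_lt_top _)).ne
      set m : ℝ := S.toReal with hmdef
      have hSm : (m : EReal) = S := EReal.coe_toReal hnt hnb
      have hmC : m < C₀ := by
        rw [← hSm] at hlt'
        exact_mod_cast hlt'
      obtain ⟨ζ, hζ⟩ := hlb ((C₀ - m)/2) (by linarith)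
      have hle : Dval μ u' j' ζ.1 ≤ m := by
        have h1 := le_iSup (fun ζ : {f : ℝ → ℝ // ContinuousOn f (Icc (0:ℝ) T)} =>
          (((∫ t in Icc (0:ℝ) T, (ζ.1 t * jt t - (1/2) * u t * ζ.1 t ^ 2) : ℝ)) : EReal)) ζ
        rw [← hSdef, ← hSm] at h1
        rw [← hIeq ζ.1]
        exact_mod_cast h1
      linarith
  · -- second branch
    intro hcond
    by_contra hne
    apply hcond
    set S := ⨆ ζ : {f : ℝ → ℝ // ContinuousOn f (Icc (0:ℝ) T)},
        (((∫ t in Icc (0:ℝ) T, (ζ.1 t * jt t - (1/2) * u t * ζ.1 t ^ 2) : ℝ)) : EReal)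
      with hSdef
    have h0le : (((0:ℝ)) : EReal) ≤ S := by
      have h1 := le_iSup (fun ζ : {f : ℝ → ℝ // ContinuousOn f (Icc (0:ℝ) T)} =>
        (((∫ t in Icc (0:ℝ) T, (ζ.1 t * jt t - (1/2) * u t * ζ.1 t ^ 2) : ℝ)) : EReal))
        ⟨fun _ => 0, continuousOn_const⟩
      rw [← hSdef] at h1
      refine le_trans (le_of_eq ?_) h1
      norm_cast
      simp
    have hnb : S ≠ ⊥ := (lt_of_lt_of_le (EReal.bot_lt_coe 0) h0le).ne'
    set m : ℝ := S.toReal with hmdef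
    have hSm : (m : EReal) = S := EReal.coe_toReal hne hnb
    have hle : ∀ ζ : {f : ℝ → ℝ // ContinuousOn f (Icc (0:ℝ) T)},
        Dval μ u' j' ζ.1 ≤ m := by
      intro ζ
      have h1 := le_iSup (fun ζ : {f : ℝ → ℝ // ContinuousOn f (Icc (0:ℝ) T)} =>
        (((∫ t in Icc (0:ℝ) T, (ζ.1 t * jt t - (1/2) * u t * ζ.1 t ^ 2) : ℝ)) : EReal)) ζ
      rw [← hSdef, ← hSm] at h1
      rw [← hIeq ζ.1]
      exact_mod_cast h1
    have hDle : ∀ f : ℝ → ℝ, Measurable f → ∀ C : ℝ, 0 ≤ C → (∀ t, |f t| ≤ C) →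
        Dval μ u' j' f ≤ m := by
      intro f hfm C hC hfC
      refine le_of_forall_pos_le_add fun δ hδ => ?_
      obtain ⟨ζ, hζc, hζC, hζd⟩ := perturb μ u' j' hu'm hj'm hu'0 hu'i hj'i f hfm hC hfC hδ
      have h2 := abs_le.1 hζd
      have h3 := hle ⟨ζ, hζc.continuousOn⟩
      simp only at h3
      linarith
    -- condition (i): j' = 0 a.e. on {u' = 0}
    set sgn : ℝ → ℝ := fun x => if 0 < x then 1 else if x < 0 then -1 else 0 with hsgndef
    have hsgnm : Measurable sgn := by
      refine Measurable.ite (measurableSet_lt measurable_const measurable_id) measurable_const ?_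
      exact Measurable.ite (measurableSet_lt measurable_id measurable_const)
        measurable_const measurable_const
    have hsgnmul : ∀ x : ℝ, sgn x * x = |x| := by
      intro x
      rcases lt_trichotomy 0 x with h | h | h
      · simp [hsgndef, h, abs_of_pos h]
      · simp [hsgndef, ← h]
      · simp [hsgndef, not_lt.2 h.le, h, abs_of_neg h]
    have hsgnabs : ∀ x : ℝ, |sgn x| ≤ 1 := by
      intro x
      rcases lt_trichotomy 0 x with h | h | h
      · simp [hsgndef, h]
      · simp [hsgndef, ← h]
      · simp [hsgndef, not_lt.2 h.le, h]
    set I : ℝ → ℝ := fun t => if u' t = 0 then |j' t| else 0 with hIdef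
    have hImeas : Measurable I :=
      Measurable.ite (measurableSet_eq_fun hu'm measurable_const) hj'm.abs measurable_const
    have hIint : Integrable I μ := by
      refine hj'i.abs.mono' hImeas.aestronglyMeasurable (ae_of_all _ fun t => ?_)
      rw [hIdef, Real.norm_eq_abs]
      by_cases h : u' t = 0 <;> simp [h, abs_abs, abs_nonneg]
    have hInn : 0 ≤ᵐ[μ] I := ae_of_all _ fun t => by
      rw [hIdef]; by_cases h : u' t = 0 <;> simp [h, abs_nonneg]
    have hII : ∫ t, I t ∂μ = 0 := by
      by_contra hne0
      have hIInn : 0 ≤ ∫ t, I t ∂μ := integral_nonneg fun t => by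
        rw [hIdef]; by_cases h : u' t = 0 <;> simp [h, abs_nonneg]
      have hIIpos : 0 < ∫ t, I t ∂μ := lt_of_le_of_ne hIInn (Ne.symm hne0)
      set c : ℝ := (|m| + 1) / ∫ t, I t ∂μ with hcdef
      have hcpos : 0 < c := div_pos (by positivity) hIIpos
      set fc : ℝ → ℝ := fun t => if u' t = 0 then c * sgn (j' t) else 0 with hfcdef
      have hfcm : Measurable fc :=
        Measurable.ite (measurableSet_eq_fun hu'm measurable_const)
          ((hsgnm.comp hj'm).const_mul c) measurable_const
      have hfcC : ∀ t, |fc t| ≤ c := by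
        intro t
        rw [hfcdef]
        by_cases h : u' t = 0
        · simp only [if_pos h]
          rw [abs_mul, abs_of_pos hcpos]
          nlinarith [hsgnabs (j' t), abs_nonneg (sgn (j' t))]
        · simp [h, hcpos.le]
      have hDfc : Dval μ u' j' fc = c * ∫ t, I t ∂μ := by
        unfold Dval
        rw [← integral_const_mul]
        refine integral_congr_ae (ae_of_all _ fun t => ?_)
        by_cases h : u' t = 0
        · simp only [hfcdef, hIdef, if_pos h]
          rw [h]
          linear_combination c * hsgnmul (j' t)
        · simp [hfcdef, hIdef, h]
      have := hDle fc hfcm c hcpos.le hfcC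
      rw [hDfc, hcdef, div_mul_cancel₀ _ hne0] at this
      linarith [le_abs_self m]
    have haeI : I =ᵐ[μ] 0 := (integral_eq_zero_iff_of_nonneg_ae hInn hIint).1 hII
    have hcondA : ∀ᵐ t ∂(volume.restrict (Icc (0:ℝ) T)), u t = 0 → jt t = 0 := by
      filter_upwards [haeI, hu'eq, hj'eq] with t ht h1 h2 h0
      rw [← h2]
      rw [hIdef] at ht
      simp only [Pi.zero_apply] at ht
      have hu'0t : u' t = 0 := by rw [h1, h0]
      rw [if_pos hu'0t] at ht
      exact abs_eq_zero.1 ht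
    -- condition (ii): j'²/u' integrable
    have hBle : ∀ n : ℕ, ∫ t, u' t * gn n t ^ 2 ∂μ ≤ 2 * m := by
      intro n
      have hD := hDle (gn n) (hgnm n) n (Nat.cast_nonneg n) (hgnC n)
      rw [hsplit n] at hD
      have hAB : ∫ t, u' t * gn n t ^ 2 ∂μ ≤ ∫ t, gn n t * j' t ∂μ :=
        integral_mono (hfacts n).2.1 (hfacts n).1 (hkey1 n)
      linarith
    have hmono : ∀ t, Monotone (fun n : ℕ => ENNReal.ofReal (u' t * gn n t ^ 2)) := by
      intro t a b hab
      refine ENNReal.ofReal_le_ofReal ?_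
      have h1 : |clampC (a:ℝ) (g t)| ≤ |clampC (b:ℝ) (g t)| := by
        rw [clampC_abs_eq (Nat.cast_nonneg a), clampC_abs_eq (Nat.cast_nonneg b)]
        exact min_le_min (Nat.cast_le.2 hab) le_rfl
      rw [hgndef]
      simp only
      rw [← sq_abs (clampC (a:ℝ) (g t)), ← sq_abs (clampC (b:ℝ) (g t))]
      exact mul_le_mul_of_nonneg_left (pow_le_pow_left₀ (abs_nonneg _) h1 2) (hu'0 t)
    have hptsup : ∀ t, (⨆ n : ℕ, ENNReal.ofReal (u' t * gn n t ^ 2))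
        = ENNReal.ofReal (u' t * g t ^ 2) := by
      intro t
      refine tendsto_nhds_unique (tendsto_atTop_iSup (hmono t)) ?_
      have hev : ∀ᶠ n : ℕ in atTop,
          ENNReal.ofReal (u' t * gn n t ^ 2) = ENNReal.ofReal (u' t * g t ^ 2) := by
        filter_upwards [eventually_ge_atTop ⌈|g t|⌉₊] with n hn
        have : |g t| ≤ (n:ℝ) := le_trans (Nat.le_ceil _) (by exact_mod_cast hn)
        rw [hgndef]
        simp [clampC_eq_self this]
      exact Tendsto.congr' (Filter.EventuallyEq.symm hev) tendsto_const_nhds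
    have hfin : ∫⁻ t, ENNReal.ofReal (u' t * g t ^ 2) ∂μ ≤ ENNReal.ofReal (2 * m) := by
      have hlin : ∫⁻ t, ENNReal.ofReal (u' t * g t ^ 2) ∂μ
          = ⨆ n : ℕ, ∫⁻ t, ENNReal.ofReal (u' t * gn n t ^ 2) ∂μ := by
        rw [← lintegral_iSup' (fun n =>
          (show AEMeasurable (fun t => ENNReal.ofReal (u' t * gn n t ^ 2)) μ from
            ((hu'm.mul ((hgnm n).pow_const 2)).ennreal_ofReal).aemeasurable))
          (ae_of_all _ hmono)]
        exact lintegral_congr fun t => (hptsup t).symm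
      rw [hlin]
      refine iSup_le fun n => ?_
      rw [← ofReal_integral_eq_lintegral_ofReal (hfacts n).2.1
        (ae_of_all _ fun t => mul_nonneg (hu'0 t) (sq_nonneg _))]
      exact ENNReal.ofReal_le_ofReal (hBle n)
    have hint2 : Integrable (fun t => u' t * g t ^ 2) μ := by
      refine ⟨(hu'm.mul (hgm.pow_const 2)).aestronglyMeasurable, ?_⟩
      rw [hasFiniteIntegral_iff_ofReal
        (ae_of_all _ fun t => mul_nonneg (hu'0 t) (sq_nonneg _))]
      exact lt_of_le_of_lt hfin ENNReal.ofReal_lt_top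
    have hcondB : IntegrableOn (fun t => jt t ^ 2 / u t) (Icc (0:ℝ) T) := by
      have h1 : Integrable (fun t => j' t ^ 2 / u' t) μ :=
        hint2.congr (ae_of_all _ fun t => hug t)
      refine h1.congr ?_
      filter_upwards [hu'eq, hj'eq] with t h1' h2'
      rw [← h1', ← h2']
    exact ⟨hcondA, hcondB⟩
end
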